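/- arXiv:2203.10801 — 6 statements merged into one kernel-verified Lean document; each statement's English description precedes it below -/
import Mathlib

section
/- Let n ≥ 4 be even and let V = (Fin n → F₄), where F₄ = GaloisField 2 2 is the field with four elements, equipped with the Hermitian form B(x,y) = Σ_i x_i y_i². Then: (a) there exists an injective group homomorphism ψ from the symmetric group S_{n+2} to the group of linear automorphisms of V such that for every transposition τ ∈ S_{n+2}, ψ(τ) is a unitary transvection t_v for some nonzero singular vector v ∈ V; and (b) there is no injective group homomorphism from S_{n+3} to the linear automorphisms of V sending every transposition to a unitary transvection. (Equivalently, φ(U_n(2)) = n+2 for even n ≥ 4.) -/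
/-- The field with four elements. -/
abbrev F4 : Type := GaloisField 2 2

/-- The standard Hermitian form on `F₄ⁿ`: `B x y = ∑ i, x i * (y i)²`
(conjugation in `F₄` is `a ↦ a²`). -/
noncomputable def hermForm (n : ℕ) (x y : Fin n → F4) : F4 :=
  ∑ i : Fin n, x i * (y i) ^ 2

noncomputable instance : Fintype F4 := Fintype.ofFinite F4
noncomputable instance : DecidableEq F4 := Classical.decEq _

lemma F4card : Fintype.card F4 = 4 := by
  have := GaloisField.card 2 2 (by norm_num)
  rw [Nat.card_eq_fintype_card] at this; simpa using this

lemma F4pow4 (a : F4) : a ^ 4 = a := by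
  have := FiniteField.pow_card a; rwa [F4card] at this

lemma F4cube (a : F4) (h : a ≠ 0) : a ^ 3 = 1 := by
  have := FiniteField.pow_card_sub_one_eq_one a h; rwa [F4card] at this

lemma F4add_self (a : F4) : a + a = 0 := CharTwo.add_self_eq_zero a

lemma F4two : (2 : F4) = 0 := by
  have := CharP.cast_eq_zero F4 2; exact_mod_cast this

lemma F4add_sq (a b : F4) : (a + b) ^ 2 = a ^ 2 + b ^ 2 := CharTwo.add_sq a b

lemma F4natcast_even {k : ℕ} (hk : Even k) : (k : F4) = 0 :=
  (CharP.cast_eq_zero_iff F4 2 k).mpr hk.two_dvd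

lemma F4nsmul_even {k : ℕ} (hk : Even k) (a : F4) : k • a = 0 := by
  rw [nsmul_eq_mul, F4natcast_even hk, zero_mul]

lemma omega_ex : ∃ w : F4, w ^ 2 + w = 1 ∧ w ≠ 0 := by
  have hcompl : ({0, 1}ᶜ : Finset F4).Nonempty := by
    rw [← Finset.card_pos, Finset.card_compl]
    have h1 : ({0, 1} : Finset F4).card ≤ 2 := (Finset.card_insert_le _ _).trans (by simp)
    have h2 : Fintype.card F4 = 4 := F4card
    omega
  obtain ⟨w, hw⟩ := hcompl
  simp only [Finset.mem_compl, Finset.mem_insert, Finset.mem_singleton, not_or] at hw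
  obtain ⟨hw0, hw1⟩ := hw
  have h3 : w ^ 3 = 1 := F4cube w hw0
  have hfac : (w + 1) * (w ^ 2 + w + 1) = 0 := by
    have : (w + 1) * (w ^ 2 + w + 1) = w ^ 3 + 1 + (w ^ 2 + w ^ 2) + (w + w) := by ring
    rw [this, h3, F4add_self, F4add_self, F4add_self]
    have := F4two
    linear_combination w * this
  have hne : w + 1 ≠ 0 := by
    intro h
    apply hw1
    have := F4add_self 1
    linear_combination h - this
  have h0 : w ^ 2 + w + 1 = 0 := by
    rcases mul_eq_zero.mp hfac with h | h
    · exact absurd h hne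
    · exact h
  exact ⟨w, by linear_combination h0 - F4two, hw0⟩

section herm
variable {n : ℕ}

lemma herm_add_left (x y z : Fin n → F4) :
    hermForm n (x + y) z = hermForm n x z + hermForm n y z := by
  simp [hermForm, add_mul, Finset.sum_add_distrib]

lemma herm_smul_left (c : F4) (x z : Fin n → F4) :
    hermForm n (c • x) z = c * hermForm n x z := by
  simp [hermForm, Finset.mul_sum, mul_assoc]

lemma herm_add_right (x y z : Fin n → F4) :
    hermForm n x (y + z) = hermForm n x y + hermForm n x z := by
  simp only [hermForm, Pi.add_apply]
  rw [← Finset.sum_add_distrib]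
  refine Finset.sum_congr rfl fun i _ => ?_
  rw [F4add_sq]; ring

lemma herm_smul_right (c : F4) (x y : Fin n → F4) :
    hermForm n x (c • y) = c ^ 2 * hermForm n x y := by
  simp only [hermForm, Pi.smul_apply, smul_eq_mul, mul_pow, Finset.mul_sum]
  refine Finset.sum_congr rfl fun i _ => ?_; ring

lemma herm_conj (x y : Fin n → F4) : hermForm n y x = hermForm n x y ^ 2 := by
  simp only [hermForm]
  rw [CharTwo.sum_sq]
  refine Finset.sum_congr rfl fun i _ => ?_
  have h4 : y i ^ 4 = y i := F4pow4 (y i)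
  have : (x i * y i ^ 2) ^ 2 = x i ^ 2 * y i ^ 4 := by ring
  rw [this, h4]; ring

lemma herm_sum_left {ι : Type*} (s : Finset ι) (f : ι → Fin n → F4) (y : Fin n → F4) :
    hermForm n (∑ j ∈ s, f j) y = ∑ j ∈ s, hermForm n (f j) y := by
  simp only [hermForm, Finset.sum_apply, Finset.sum_mul]
  rw [Finset.sum_comm]

lemma herm_nondeg {v : Fin n → F4} (hv : v ≠ 0) : ∃ x, hermForm n x v ≠ 0 := by
  obtain ⟨i, hi⟩ : ∃ i, v i ≠ 0 := by
    by_contra h; push_neg at h; exact hv (funext fun i => h i)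
  refine ⟨Pi.single i 1, ?_⟩
  have : hermForm n (Pi.single i 1) v = v i ^ 2 := by
    simp only [hermForm]
    rw [Finset.sum_eq_single i]
    · simp
    · intro b _ hb; simp [Pi.single_apply, hb]
    · intro h; simp at h
  rw [this]
  exact pow_ne_zero 2 hi

end herm

section PartA
variable (n : ℕ)

def emb (i : Fin n) : Fin (n + 2) := ⟨i, by omega⟩
def Mi : Fin (n + 2) := ⟨n, by omega⟩
def Li : Fin (n + 2) := ⟨n + 1, by omega⟩

variable {n}

lemma emb_inj {i j : Fin n} (h : emb n i = emb n j) : i = j := by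
  simp only [emb, Fin.mk.injEq] at h; exact Fin.ext h

lemma emb_ne_Mi (i : Fin n) : emb n i ≠ Mi n := by
  simp only [emb, Mi, ne_eq, Fin.mk.injEq]; omega

lemma emb_ne_Li (i : Fin n) : emb n i ≠ Li n := by
  simp only [emb, Li, ne_eq, Fin.mk.injEq]; omega

lemma Mi_ne_Li : Mi n ≠ Li n := by
  simp only [Mi, Li, ne_eq, Fin.mk.injEq]; omega

lemma fin_tricho (j : Fin (n + 2)) : (∃ i, j = emb n i) ∨ j = Mi n ∨ j = Li n := by
  rcases lt_trichotomy (j : ℕ) n with h | h | h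
  · exact Or.inl ⟨⟨j, h⟩, by simp [emb]⟩
  · exact Or.inr (Or.inl (by simp [Mi, Fin.ext_iff, h]))
  · refine Or.inr (Or.inr ?_)
    have := j.isLt; simp only [Li, Fin.ext_iff]; omega

variable (n)

/-- Extension of a vector to `Fin (n+2)`. -/
noncomputable def ExtF (x : Fin n → F4) : Fin (n + 2) → F4 := fun j =>
  if h : (j : ℕ) < n then x ⟨j, h⟩ else if (j : ℕ) = n then ∑ i, x i else 0

variable {n}

lemma ExtF_em (x : Fin n → F4) (i : Fin n) : ExtF n x (emb n i) = x i := by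
  simp [ExtF, emb]

lemma ExtF_Mi (x : Fin n → F4) : ExtF n x (Mi n) = ∑ i, x i := by
  simp [ExtF, Mi]

lemma ExtF_Li (x : Fin n → F4) : ExtF n x (Li n) = 0 := by
  simp [ExtF, Li]

lemma ExtF_add (x y : Fin n → F4) : ExtF n (x + y) = ExtF n x + ExtF n y := by
  funext j
  simp only [ExtF, Pi.add_apply]
  split
  · rfl
  · split
    · exact Finset.sum_add_distrib
    · simp

lemma ExtF_smul (c : F4) (x : Fin n → F4) : ExtF n (c • x) = c • ExtF n x := by
  funext j
  simp only [ExtF, Pi.smul_apply, smul_eq_mul]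
  split
  · rfl
  · split
    · rw [Finset.mul_sum]
    · simp

/-- Splitting a sum over `Fin (n+2)`. -/
lemma sum_split (f : Fin (n + 2) → F4) :
    ∑ j, f j = (∑ i, f (emb n i)) + f (Mi n) + f (Li n) := by
  rw [Fin.sum_univ_castSucc (f := f), Fin.sum_univ_castSucc (f := fun j : Fin (n+1) => f j.castSucc)]
  rfl

lemma sum_ExtF (x : Fin n → F4) : ∑ j, ExtF n x j = 0 := by
  rw [sum_split]
  simp only [ExtF_em, ExtF_Mi, ExtF_Li, add_zero]
  exact F4add_self _

variable (n)

/-- The model action of `S_{n+2}` on `F₄ⁿ`. -/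
noncomputable def psi0 (σ : Equiv.Perm (Fin (n + 2))) (x : Fin n → F4) : Fin n → F4 :=
  fun i => ExtF n x (σ⁻¹ (emb n i)) + ExtF n x (σ⁻¹ (Li n))

variable {n}

lemma psi0_add (σ : Equiv.Perm (Fin (n + 2))) (x y : Fin n → F4) :
    psi0 n σ (x + y) = psi0 n σ x + psi0 n σ y := by
  funext i; simp only [psi0, ExtF_add, Pi.add_apply]; ring

lemma psi0_smul (σ : Equiv.Perm (Fin (n + 2))) (c : F4) (x : Fin n → F4) :
    psi0 n σ (c • x) = c • psi0 n σ x := by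
  funext i; simp only [psi0, ExtF_smul, Pi.smul_apply, smul_eq_mul]; ring

lemma ext_psi0 (hev : Even n) (τ : Equiv.Perm (Fin (n + 2))) (x : Fin n → F4)
    (j : Fin (n + 2)) :
    ExtF n (psi0 n τ x) j = ExtF n x (τ⁻¹ j) + ExtF n x (τ⁻¹ (Li n)) := by
  rcases fin_tricho j with ⟨i, rfl⟩ | rfl | rfl
  · rw [ExtF_em]; rfl
  · rw [ExtF_Mi]
    have hsum : ∑ i, psi0 n τ x i
        = (∑ i, ExtF n x (τ⁻¹ (emb n i))) + n • ExtF n x (τ⁻¹ (Li n)) := by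
      simp only [psi0, Finset.sum_add_distrib]
      congr 1
      simp [Finset.sum_const]
    rw [hsum, F4nsmul_even hev, add_zero]
    have htot : ∑ j : Fin (n + 2), ExtF n x (τ⁻¹ j) = 0 := by
      rw [Equiv.sum_comp (τ⁻¹ : Equiv.Perm (Fin (n+2))) (ExtF n x)]
      exact sum_ExtF x
    rw [sum_split (fun j => ExtF n x (τ⁻¹ j))] at htot
    -- htot : (∑ i, E (τ⁻¹ emb i)) + E (τ⁻¹ Mi) + E (τ⁻¹ Li) = 0
    have := F4add_self (ExtF n x (τ⁻¹ (Mi n)) + ExtF n x (τ⁻¹ (Li n)))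
    linear_combination htot - this
  · rw [ExtF_Li]
    exact (F4add_self _).symm

lemma psi0_mul (hev : Even n) (σ τ : Equiv.Perm (Fin (n + 2))) (x : Fin n → F4) :
    psi0 n σ (psi0 n τ x) = psi0 n (σ * τ) x := by
  funext i
  simp only [psi0, ext_psi0 hev τ x]
  have h1 : (σ * τ)⁻¹ (emb n i) = τ⁻¹ (σ⁻¹ (emb n i)) := by simp [mul_inv_rev]
  have h2 : (σ * τ)⁻¹ (Li n) = τ⁻¹ (σ⁻¹ (Li n)) := by simp [mul_inv_rev]
  rw [h1, h2]
  have := F4add_self (ExtF n x (τ⁻¹ (Li n)))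
  linear_combination this

lemma psi0_one (x : Fin n → F4) : psi0 n 1 x = x := by
  funext i
  simp [psi0, ExtF_em, ExtF_Li]

end PartA

noncomputable def omF : F4 := Classical.choose omega_ex

lemma omF_spec : omF ^ 2 + omF = 1 := (Classical.choose_spec omega_ex).1

section TTs
variable (n : ℕ)

/-- The change-of-basis involution. -/
noncomputable def TT (x : Fin n → F4) : Fin n → F4 := fun i => x i + omF * ∑ j, x j

variable {n}

lemma sum_TT (hev : Even n) (x : Fin n → F4) : ∑ i, TT n x i = ∑ i, x i := by
  simp only [TT, Finset.sum_add_distrib, Finset.sum_const, Finset.card_univ, Fintype.card_fin]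
  rw [F4nsmul_even hev, add_zero]

lemma TT_invol (hev : Even n) (x : Fin n → F4) : TT n (TT n x) = x := by
  funext i
  show TT n x i + omF * ∑ j, TT n x j = x i
  rw [sum_TT hev]
  simp only [TT]
  linear_combination F4add_self (omF * ∑ j, x j)

lemma TT_add (x y : Fin n → F4) : TT n (x + y) = TT n x + TT n y := by
  funext i; simp only [TT, Pi.add_apply, Finset.sum_add_distrib]; ring

lemma TT_smul (c : F4) (x : Fin n → F4) : TT n (c • x) = c • TT n x := by
  funext i; simp only [TT, Pi.smul_apply, smul_eq_mul, ← Finset.mul_sum]; ring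

/-- The key form-comparison: the Hermitian form of extensions equals the standard form
of the `TT`-images. -/
lemma herm_ExtF_eq (hev : Even n) (x y : Fin n → F4) :
    hermForm (n + 2) (ExtF n x) (ExtF n y) = hermForm n (TT n x) (TT n y) := by
  have hL : hermForm (n + 2) (ExtF n x) (ExtF n y)
      = hermForm n x y + (∑ i, x i) * (∑ i, y i) ^ 2 := by
    unfold hermForm
    rw [sum_split (fun j => ExtF n x j * ExtF n y j ^ 2)]
    simp only [ExtF_em, ExtF_Mi, ExtF_Li]
    ring
  have hR : hermForm n (TT n x) (TT n y)
      = hermForm n x y + (omF ^ 2 + omF) * ((∑ i, x i) * (∑ i, y i) ^ 2)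
        + n • (omF ^ 3 * ((∑ i, x i) * (∑ i, y i) ^ 2)) := by
    unfold hermForm TT
    simp only [F4add_sq, mul_pow]
    have : ∀ i : Fin n,
        (x i + omF * ∑ j, x j) * ((y i) ^ 2 + omF ^ 2 * (∑ j, y j) ^ 2)
        = x i * y i ^ 2 + omF ^ 2 * (∑ j, y j) ^ 2 * x i
          + omF * (∑ j, x j) * y i ^ 2 + omF ^ 3 * ((∑ j, x j) * (∑ j, y j) ^ 2) := by
      intro i; ring
    rw [Finset.sum_congr rfl (fun i _ => this i)]
    simp only [Finset.sum_add_distrib, ← Finset.mul_sum, Finset.sum_const, Finset.card_univ,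
      Fintype.card_fin]
    rw [← CharTwo.sum_sq]
    ring
  rw [hL, hR, F4nsmul_even hev, omF_spec, add_zero, one_mul]

end TTs

section Swaps
variable {n : ℕ}

/-- Indicator sum of two indices. -/
noncomputable def Yv (a b j : Fin (n + 2)) : F4 :=
  (if j = a then 1 else 0) + (if j = b then 1 else 0)

/-- The transvection vector (in model coordinates) for the swap of `a` and `b`. -/
noncomputable def uvec (a b : Fin (n + 2)) : Fin n → F4 :=
  fun i => Yv a b (emb n i) + Yv a b (Li n)

lemma sum_Yv {a b : Fin (n + 2)} (hab : a ≠ b) : ∑ j, Yv a b j = 0 := by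
  unfold Yv
  rw [Finset.sum_add_distrib]
  simp only [Finset.sum_ite_eq', Finset.mem_univ, if_true]
  exact F4add_self 1

lemma ExtF_uvec (hev : Even n) {a b : Fin (n + 2)} (hab : a ≠ b) (j : Fin (n + 2)) :
    ExtF n (uvec a b) j = Yv a b j + Yv a b (Li n) := by
  rcases fin_tricho j with ⟨i, rfl⟩ | rfl | rfl
  · rw [ExtF_em]; rfl
  · rw [ExtF_Mi]
    have hsum : ∑ i, uvec a b i = (∑ i, Yv a b (emb n i)) + n • Yv a b (Li n) := by
      unfold uvec
      rw [Finset.sum_add_distrib]; simp [Finset.sum_const]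
    rw [hsum, F4nsmul_even hev, add_zero]
    have htot := sum_Yv hab
    rw [sum_split (Yv a b)] at htot
    have := F4add_self (Yv a b (Mi n) + Yv a b (Li n))
    linear_combination htot - this
  · rw [ExtF_Li]
    exact (F4add_self _).symm

lemma herm_ExtF_Yv {a b : Fin (n + 2)} (hab : a ≠ b) (z : Fin (n + 2) → F4) :
    hermForm (n + 2) z (fun j => Yv a b j + Yv a b (Li n))
      = z a + z b + Yv a b (Li n) ^ 2 * ∑ j, z j := by
  unfold hermForm
  have hexp : ∀ j : Fin (n + 2),
      z j * (Yv a b j + Yv a b (Li n)) ^ 2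
      = z j * (if j = a then 1 else 0) + z j * (if j = b then 1 else 0)
        + Yv a b (Li n) ^ 2 * z j := by
    intro j
    have hp : (if j = a then (1:F4) else 0) ^ 2 = (if j = a then 1 else 0) := by
      split <;> norm_num
    have hq : (if j = b then (1:F4) else 0) ^ 2 = (if j = b then 1 else 0) := by
      split <;> norm_num
    generalize Yv a b (Li n) = r
    unfold Yv
    rw [F4add_sq, F4add_sq, hp, hq]
    ring
  rw [Finset.sum_congr rfl (fun j _ => hexp j)]
  simp only [Finset.sum_add_distrib, mul_ite, mul_one, mul_zero, Finset.sum_ite_eq',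
    Finset.mem_univ, if_true, ← Finset.mul_sum]

lemma herm_ExtF_uvec (hev : Even n) {a b : Fin (n + 2)} (hab : a ≠ b) (x : Fin n → F4) :
    hermForm (n + 2) (ExtF n x) (ExtF n (uvec a b)) = ExtF n x a + ExtF n x b := by
  have h1 : ExtF n (uvec a b) = fun j => Yv a b j + Yv a b (Li n) :=
    funext (ExtF_uvec hev hab)
  rw [h1, herm_ExtF_Yv hab, sum_ExtF, mul_zero, add_zero]

/-- `ExtF` of a swap-moved index. -/
lemma ExtF_swap_apply {a b : Fin (n + 2)} (hab : a ≠ b) (x : Fin n → F4) (j : Fin (n + 2)) :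
    ExtF n x (Equiv.swap a b j)
      = ExtF n x j + (ExtF n x a + ExtF n x b) * Yv a b j := by
  unfold Yv
  by_cases h1 : j = a
  · subst h1
    rw [Equiv.swap_apply_left, if_pos rfl, if_neg hab]
    linear_combination -F4add_self (ExtF n x j)
  · by_cases h2 : j = b
    · subst h2
      rw [Equiv.swap_apply_right, if_neg (Ne.symm hab : ¬ j = a), if_pos rfl]
      linear_combination -F4add_self (ExtF n x j)
    · rw [Equiv.swap_apply_of_ne_of_ne h1 h2, if_neg h1, if_neg h2]
      ring

/-- The model action of a swap is a transvection. -/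
lemma psi0_swap (hev : Even n) {a b : Fin (n + 2)} (hab : a ≠ b) (x : Fin n → F4) :
    psi0 n (Equiv.swap a b) x
      = x + hermForm (n + 2) (ExtF n x) (ExtF n (uvec a b)) • uvec a b := by
  funext i
  have hswapinv : (Equiv.swap a b)⁻¹ = Equiv.swap a b := Equiv.swap_inv a b
  simp only [psi0, hswapinv, Pi.add_apply, Pi.smul_apply, smul_eq_mul]
  rw [ExtF_swap_apply hab, ExtF_swap_apply hab, herm_ExtF_uvec hev hab]
  rw [ExtF_em, ExtF_Li]
  unfold uvec
  ring

end Swaps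

section Packaging
variable {n : ℕ}

noncomputable def PhiFun (n : ℕ) (σ : Equiv.Perm (Fin (n + 2))) (x : Fin n → F4) :
    Fin n → F4 :=
  TT n (psi0 n σ (TT n x))

lemma Phi_mul (hev : Even n) (σ τ : Equiv.Perm (Fin (n + 2))) (x : Fin n → F4) :
    PhiFun n σ (PhiFun n τ x) = PhiFun n (σ * τ) x := by
  unfold PhiFun
  rw [TT_invol hev, psi0_mul hev]

lemma Phi_one (hev : Even n) (x : Fin n → F4) : PhiFun n 1 x = x := by
  unfold PhiFun
  rw [psi0_one, TT_invol hev]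

/-- `PhiFun` as a linear map. -/
noncomputable def PhiLM (n : ℕ) (σ : Equiv.Perm (Fin (n + 2))) :
    (Fin n → F4) →ₗ[F4] (Fin n → F4) where
  toFun := PhiFun n σ
  map_add' x y := by
    show TT n (psi0 n σ (TT n (x + y))) = TT n (psi0 n σ (TT n x)) + TT n (psi0 n σ (TT n y))
    rw [TT_add, psi0_add, TT_add]
  map_smul' c x := by
    show TT n (psi0 n σ (TT n (c • x))) = (RingHom.id F4) c • TT n (psi0 n σ (TT n x))
    rw [TT_smul, psi0_smul, TT_smul]; rfl

/-- The embedding of `S_{n+2}` into the linear automorphisms of `F₄ⁿ`. -/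
noncomputable def PsiHom (n : ℕ) (hev : Even n) :
    Equiv.Perm (Fin (n + 2)) →* ((Fin n → F4) ≃ₗ[F4] (Fin n → F4)) where
  toFun σ := LinearEquiv.ofLinear (PhiLM n σ) (PhiLM n σ⁻¹)
    (LinearMap.ext fun x => by
      show PhiFun n σ (PhiFun n σ⁻¹ x) = x
      rw [Phi_mul hev, mul_inv_cancel, Phi_one hev])
    (LinearMap.ext fun x => by
      show PhiFun n σ⁻¹ (PhiFun n σ x) = x
      rw [Phi_mul hev, inv_mul_cancel, Phi_one hev])
  map_one' := by
    apply LinearEquiv.ext; intro x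
    exact Phi_one hev x
  map_mul' σ τ := by
    apply LinearEquiv.ext; intro x
    exact (Phi_mul hev σ τ x).symm

lemma PsiHom_apply (hev : Even n) (σ : Equiv.Perm (Fin (n + 2))) (x : Fin n → F4) :
    PsiHom n hev σ x = PhiFun n σ x := rfl

/-- The transvection vector for a swap. -/
noncomputable def vvec (n : ℕ) (a b : Fin (n + 2)) : Fin n → F4 := TT n (uvec a b)

lemma Phi_swap (hev : Even n) {a b : Fin (n + 2)} (hab : a ≠ b) (x : Fin n → F4) :
    PhiFun n (Equiv.swap a b) x
      = x + hermForm n x (vvec n a b) • vvec n a b := by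
  unfold PhiFun vvec
  rw [psi0_swap hev hab, TT_add, TT_smul, herm_ExtF_eq hev, TT_invol hev]

lemma vvec_singular (hev : Even n) {a b : Fin (n + 2)} (hab : a ≠ b) :
    hermForm n (vvec n a b) (vvec n a b) = 0 := by
  unfold vvec
  rw [← herm_ExtF_eq hev, herm_ExtF_uvec hev hab (uvec a b),
    ExtF_uvec hev hab a, ExtF_uvec hev hab b]
  unfold Yv
  rw [if_pos rfl, if_neg hab, if_neg (Ne.symm hab : ¬ b = a), if_pos rfl]
  generalize ((if Li n = a then (1:F4) else 0) + if Li n = b then 1 else 0) = r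
  linear_combination F4add_self (1 + r)

end Packaging

section Faithful
variable {n : ℕ}

lemma ExtF_single (k : Fin n) (j : Fin (n + 2)) :
    ExtF n (Pi.single k 1) j
      = (if j = emb n k then 1 else 0) + (if j = Mi n then 1 else 0) := by
  rcases fin_tricho j with ⟨i, rfl⟩ | rfl | rfl
  · rw [ExtF_em, Pi.single_apply, if_neg (emb_ne_Mi i)]
    have : (emb n i = emb n k) ↔ i = k := ⟨emb_inj, fun h => h ▸ rfl⟩
    by_cases h : i = k
    · rw [if_pos h, if_pos (this.mpr h), add_zero]
    · rw [if_neg h, if_neg (fun hh => h (this.mp hh)), add_zero]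
  · rw [ExtF_Mi, if_neg (Ne.symm (emb_ne_Mi k) : ¬ Mi n = emb n k), if_pos rfl, zero_add]
    simp
  · rw [ExtF_Li, if_neg (Ne.symm (emb_ne_Li k) : ¬ Li n = emb n k),
      if_neg (Ne.symm Mi_ne_Li : ¬ Li n = Mi n), add_zero]

lemma exists_two_ne (hn : 3 ≤ n) (k : Fin n) :
    ∃ i₁ i₂ : Fin n, i₁ ≠ i₂ ∧ i₁ ≠ k ∧ i₂ ≠ k := by
  by_cases h0 : (k : ℕ) = 0
  · exact ⟨⟨1, by omega⟩, ⟨2, by omega⟩, by simp [Fin.ext_iff, h0],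
      by simp [Fin.ext_iff, h0], by simp [Fin.ext_iff, h0]⟩
  · by_cases h1 : (k : ℕ) = 1
    · exact ⟨⟨0, by omega⟩, ⟨2, by omega⟩, by simp [Fin.ext_iff, h1],
        by simp [Fin.ext_iff, h1], by simp [Fin.ext_iff, h1]⟩
    · exact ⟨⟨0, by omega⟩, ⟨1, by omega⟩, by simp [Fin.ext_iff],
        by simp [Fin.ext_iff]; omega, by simp [Fin.ext_iff]; omega⟩

lemma psi0_faithful (hn : 3 ≤ n) (σ : Equiv.Perm (Fin (n + 2)))
    (H : ∀ x, psi0 n σ x = x) : σ = 1 := by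
  have hone : (1 : F4) + 1 = 0 := F4add_self 1
  set g : Equiv.Perm (Fin (n + 2)) := σ⁻¹ with hg
  have H' : ∀ (k : Fin n) (i : Fin n),
      ExtF n (Pi.single k 1) (g (emb n i)) + ExtF n (Pi.single k 1) (g (Li n))
        = (if i = k then (1 : F4) else 0) := by
    intro k i
    have := congrFun (H (Pi.single k 1)) i
    simp only [psi0] at this
    rw [this, Pi.single_apply]
  have ginj : Function.Injective g := Equiv.injective g
  rcases fin_tricho (g (Li n)) with ⟨k, hk⟩ | hMi | hLi
  · -- g (Li) = emb k : contradiction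
    exfalso
    have hstep : ∀ i : Fin n, i ≠ k → g (emb n i) = Mi n := by
      intro i hik
      have h1 := H' k i
      rw [hk] at h1
      rw [ExtF_single, ExtF_single, if_pos rfl,
        if_neg (emb_ne_Mi k), if_neg hik] at h1
      have hne1 : g (emb n i) ≠ emb n k := fun hh => emb_ne_Li i (ginj (hh.trans hk.symm))
      rw [if_neg hne1, zero_add, add_zero] at h1
      -- h1 : (if g (emb i) = Mi then 1 else 0) + 1 = 0
      by_cases hq : g (emb n i) = Mi n
      · exact hq
      · rw [if_neg hq, zero_add] at h1
        exact absurd h1 one_ne_zero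
    obtain ⟨i₁, i₂, h12, h1k, h2k⟩ := exists_two_ne hn k
    exact h12 (emb_inj (ginj ((hstep i₁ h1k).trans (hstep i₂ h2k).symm)))
  · -- g (Li) = Mi : contradiction
    exfalso
    have hstep : ∀ i : Fin n, i ≠ ⟨0, by omega⟩ → g (emb n i) = emb n ⟨0, by omega⟩ := by
      intro i hik
      have h1 := H' ⟨0, by omega⟩ i
      rw [hMi] at h1
      rw [ExtF_single, ExtF_single,
        if_neg (Ne.symm (emb_ne_Mi ⟨0, by omega⟩) : ¬ Mi n = emb n ⟨0, by omega⟩),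
        if_pos rfl, if_neg hik, zero_add] at h1
      have hne1 : g (emb n i) ≠ Mi n := by
        intro hh
        exact emb_ne_Li i (ginj (hh.trans hMi.symm))
      rw [if_neg hne1, add_zero] at h1
      by_cases hq : g (emb n i) = emb n ⟨0, by omega⟩
      · exact hq
      · rw [if_neg hq, zero_add] at h1
        exact absurd h1 one_ne_zero
    obtain ⟨i₁, i₂, h12, h1k, h2k⟩ := exists_two_ne hn ⟨0, by omega⟩
    exact h12 (emb_inj (ginj ((hstep i₁ h1k).trans (hstep i₂ h2k).symm)))
  · -- g (Li) = Li : show σ = 1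
    have hfix : ∀ i : Fin n, g (emb n i) = emb n i := by
      intro i
      have hQ : g (emb n i) ≠ Mi n := by
        intro hq
        obtain ⟨k, -, -, hk1, -⟩ := exists_two_ne hn i
        have h1 := H' k i
        rw [hLi] at h1
        rw [ExtF_single, ExtF_single, hq,
          if_neg (Ne.symm (emb_ne_Mi k) : ¬ Mi n = emb n k), if_pos rfl,
          if_neg (Ne.symm (emb_ne_Li k) : ¬ Li n = emb n k),
          if_neg (Ne.symm Mi_ne_Li : ¬ Li n = Mi n), if_neg (fun h => hk1 h.symm)] at h1
        simp only [zero_add, add_zero] at h1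
        exact absurd h1 one_ne_zero
      have h1 := H' i i
      rw [hLi] at h1
      rw [ExtF_single, ExtF_single,
        if_neg (Ne.symm (emb_ne_Li i) : ¬ Li n = emb n i),
        if_neg (Ne.symm Mi_ne_Li : ¬ Li n = Mi n), if_pos rfl, if_neg hQ] at h1
      simp only [add_zero] at h1
      by_cases hp : g (emb n i) = emb n i
      · exact hp
      · rw [if_neg hp] at h1
        exact absurd h1.symm one_ne_zero
    have hMifix : g (Mi n) = Mi n := by
      rcases fin_tricho (g (Mi n)) with ⟨i, hi⟩ | h | h
      · exact absurd (ginj (hi.trans (hfix i).symm)).symm (emb_ne_Mi i)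
      · exact h
      · exact absurd (ginj (h.trans hLi.symm)) Mi_ne_Li
    have : g = 1 := by
      apply Equiv.ext
      intro j
      rcases fin_tricho j with ⟨i, rfl⟩ | rfl | rfl
      · simp [hfix i]
      · simp [hMifix]
      · simp [hLi]
    have : σ⁻¹ = 1 := this
    exact inv_eq_one.mp this

end Faithful

lemma partA (n : ℕ) (hn : 4 ≤ n) (hev : Even n) :
    ∃ ψ : Equiv.Perm (Fin (n + 2)) →* ((Fin n → F4) ≃ₗ[F4] (Fin n → F4)),
      Function.Injective ψ ∧
      ∀ τ : Equiv.Perm (Fin (n + 2)), τ.IsSwap →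
        ∃ v : Fin n → F4, v ≠ 0 ∧ hermForm n v v = 0 ∧
          ∀ w, (ψ τ) w = w + hermForm n w v • v := by
  have hinj : Function.Injective (PsiHom n hev) := by
    rw [injective_iff_map_eq_one]
    intro σ hσ
    apply psi0_faithful (show 3 ≤ n by omega)
    intro y
    have hx : ∀ x, PhiFun n σ x = x := by
      intro x
      have := LinearEquiv.congr_fun hσ x
      simpa [PsiHom_apply] using this
    have h1 : TT n (psi0 n σ (TT n (TT n y))) = TT n y := hx (TT n y)
    rw [TT_invol hev] at h1
    have h2 := congrArg (TT n) h1
    rw [TT_invol hev, TT_invol hev] at h2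
    exact h2
  refine ⟨PsiHom n hev, hinj, ?_⟩
  rintro τ ⟨a, b, hab, rfl⟩
  refine ⟨vvec n a b, ?_, vvec_singular hev hab, fun w => Phi_swap hev hab w⟩
  intro hv
  have h1 : PsiHom n hev (Equiv.swap a b) = 1 := by
    apply LinearEquiv.ext; intro w
    show PhiFun n (Equiv.swap a b) w = w
    rw [Phi_swap hev hab, hv]
    simp [hermForm]
  exact hab (Equiv.swap_eq_one_iff.mp (hinj (h1.trans (map_one (PsiHom n hev)).symm)))

section PartB
variable {n : ℕ}

lemma herm_zero_left (y : Fin n → F4) : hermForm n 0 y = 0 := by simp [hermForm]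

lemma herm_zero_right (x : Fin n → F4) : hermForm n x 0 = 0 := by simp [hermForm]

/-- Disjoint swaps commute. -/
lemma swap_disjoint_comm {α : Type*} [DecidableEq α] {a b c d : α}
    (hac : a ≠ c) (had : a ≠ d) (hbc : b ≠ c) (hbd : b ≠ d) :
    Equiv.swap a b * Equiv.swap c d = Equiv.swap c d * Equiv.swap a b := by
  apply Equiv.ext
  intro x
  simp only [Equiv.Perm.mul_apply, Equiv.swap_apply_def]
  split_ifs <;> simp_all

/-- Commuting transvections have orthogonal directions. -/
lemma comm_orth {v w : Fin n → F4} (hv : hermForm n v v = 0) (hw : hermForm n w w = 0)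
    (hw0 : w ≠ 0)
    (h : ∀ x, (x + hermForm n x w • w) + hermForm n (x + hermForm n x w • w) v • v
      = (x + hermForm n x v • v) + hermForm n (x + hermForm n x v • v) w • w) :
    hermForm n w v = 0 := by
  have key : ∀ x, (hermForm n x w * hermForm n w v) • v
      = (hermForm n x v * hermForm n v w) • w := by
    intro x
    have hx := h x
    simp only [herm_add_left, herm_smul_left, hv, hw, mul_zero, add_zero] at hx
    funext i0
    have hxi := congrFun hx i0
    simp only [Pi.add_apply, Pi.smul_apply, smul_eq_mul] at hxi ⊢
    linear_combination hxi
  by_contra hwv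
  obtain ⟨x0, hx0⟩ := herm_nondeg hw0
  have hα : hermForm n x0 w * hermForm n w v ≠ 0 := mul_ne_zero hx0 hwv
  have hveq : v = ((hermForm n x0 w * hermForm n w v)⁻¹
      * (hermForm n x0 v * hermForm n v w)) • w := by
    calc v = (hermForm n x0 w * hermForm n w v)⁻¹
        • ((hermForm n x0 w * hermForm n w v) • v) := by
          rw [smul_smul, inv_mul_cancel₀ hα, one_smul]
    _ = _ := by rw [key x0, smul_smul]
  apply hwv
  rw [hveq, herm_smul_right, hw, mul_zero]

/-- The triple product of transvections is the transvection in the moved vector. -/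
lemma tv_triple (vi vj x : Fin n → F4) (hvi : hermForm n vi vi = 0)
    (h3 : hermForm n vi vj ^ 3 = 1) :
    ((x + hermForm n x vi • vi)
      + hermForm n (x + hermForm n x vi • vi) vj • vj)
      + hermForm n (((x + hermForm n x vi • vi))
          + hermForm n (x + hermForm n x vi • vi) vj • vj) vi • vi
    = x + hermForm n x (vj + hermForm n vj vi • vi) • (vj + hermForm n vj vi • vi) := by
  have hconj : hermForm n vj vi = hermForm n vi vj ^ 2 := herm_conj vi vj
  funext i0
  simp only [herm_add_left, herm_add_right, herm_smul_left, herm_smul_right, hvi, hconj,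
    mul_zero, add_zero, zero_add, Pi.add_apply, Pi.smul_apply, smul_eq_mul]
  linear_combination (hermForm n x vi * vi i0) * F4two
    - (hermForm n x vi * vi i0 * hermForm n vi vj ^ 3) * h3
    - (hermForm n x vi * vj i0 * hermForm n vi vj) * h3

/-- If two transvections agree pointwise, the directions are proportional. -/
lemma tv_eq_prop {w w' : Fin n → F4} (hw'0 : w' ≠ 0)
    (h : ∀ x, x + hermForm n x w • w = x + hermForm n x w' • w') :
    ∃ d : F4, w' = d • w := by
  obtain ⟨x1, hx1⟩ := herm_nondeg hw'0
  have h1 : hermForm n x1 w • w = hermForm n x1 w' • w' := by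
    have := h x1
    exact add_left_cancel this
  refine ⟨(hermForm n x1 w')⁻¹ * hermForm n x1 w, ?_⟩
  calc w' = (hermForm n x1 w')⁻¹ • (hermForm n x1 w' • w') := by
        rw [smul_smul, inv_mul_cancel₀ hx1, one_smul]
  _ = (hermForm n x1 w')⁻¹ • (hermForm n x1 w • w) := by rw [h1]
  _ = _ := by rw [smul_smul]

end PartB

lemma partB (n : ℕ) (hn : 4 ≤ n) (hev : Even n) :
    ¬ (∃ ψ : Equiv.Perm (Fin (n + 3)) →* ((Fin n → F4) ≃ₗ[F4] (Fin n → F4)),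
      Function.Injective ψ ∧
      ∀ τ : Equiv.Perm (Fin (n + 3)), τ.IsSwap →
        ∃ v : Fin n → F4, v ≠ 0 ∧ hermForm n v v = 0 ∧
          ∀ w, (ψ τ) w = w + hermForm n w v • v) := by
  rintro ⟨ψ, hinj, hsw⟩
  set L : Fin (n + 3) := Fin.last (n + 2) with hL
  have embne : ∀ i : Fin (n + 2), Fin.castSucc i ≠ L := fun i => (Fin.castSucc_lt_last i).ne
  have embinj : Function.Injective (Fin.castSucc : Fin (n + 2) → Fin (n + 3)) :=
    Fin.castSucc_injective _
  have hdata : ∀ i : Fin (n + 2), ∃ v : Fin n → F4, v ≠ 0 ∧ hermForm n v v = 0 ∧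
      ∀ w, ψ (Equiv.swap (Fin.castSucc i) L) w = w + hermForm n w v • v :=
    fun i => hsw _ ⟨_, _, embne i, rfl⟩
  choose v hv0 hvs hvt using hdata
  set c : Fin (n + 2) → Fin (n + 2) → F4 := fun i j => hermForm n (v i) (v j) with hcdef
  have happ : ∀ (σ τ : Equiv.Perm (Fin (n + 3))) (x : Fin n → F4),
      ψ (σ * τ) x = ψ σ (ψ τ x) := by
    intro σ τ x; rw [map_mul]; rfl
  -- pairwise non-orthogonality
  have hcne : ∀ i j, i ≠ j → c i j ≠ 0 := by
    intro i j hij hc0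
    have hc0' : c j i = 0 := by
      show hermForm n (v j) (v i) = 0
      rw [herm_conj (v i) (v j)]
      show (c i j) ^ 2 = 0
      rw [hc0]; ring
    have hcomm : ψ (Equiv.swap (Fin.castSucc i) L * Equiv.swap (Fin.castSucc j) L)
        = ψ (Equiv.swap (Fin.castSucc j) L * Equiv.swap (Fin.castSucc i) L) := by
      apply LinearEquiv.ext; intro x
      rw [happ, happ, hvt, hvt, hvt, hvt]
      funext i0
      simp only [herm_add_left, herm_smul_left, Pi.add_apply, Pi.smul_apply, smul_eq_mul]
      show _ + (hermForm n x (v i) + hermForm n x (v j) * c j i) * v i i0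
        = _ + (hermForm n x (v j) + hermForm n x (v i) * c i j) * v j i0
      rw [hc0, hc0']
      ring
    have heq := hinj hcomm
    have hpt := Equiv.ext_iff.mp heq (Fin.castSucc j)
    rw [Equiv.Perm.mul_apply, Equiv.Perm.mul_apply, Equiv.swap_apply_left,
      Equiv.swap_apply_right,
      Equiv.swap_apply_of_ne_of_ne (fun h => hij (embinj h).symm) (embne j),
      Equiv.swap_apply_left] at hpt
    exact embne i hpt
  -- the three-term relation
  have horth : ∀ i j k : Fin (n + 2), i ≠ j → i ≠ k → j ≠ k →
      c j k = c j i * c i k := by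
    intro i j k hij hik hjk
    obtain ⟨w, hw0, hws, hwt⟩ := hsw (Equiv.swap (Fin.castSucc i) (Fin.castSucc j))
      ⟨_, _, fun h => hij (embinj h), rfl⟩
    have hgrp : Equiv.swap (Fin.castSucc i) L * Equiv.swap (Fin.castSucc j) L
        * Equiv.swap (Fin.castSucc i) L
        = Equiv.swap (Fin.castSucc i) (Fin.castSucc j) := by
      have h0 := Equiv.swap_mul_swap_mul_swap (x := Fin.castSucc j) (y := L)
        (z := Fin.castSucc i) (embne j) (fun h => hij (embinj h).symm)
      rw [Equiv.swap_comm L (Fin.castSucc i)] at h0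
      exact h0
    have h3 : c i j ^ 3 = 1 := F4cube _ (hcne i j hij)
    have hptw : ∀ x, x + hermForm n x w • w
        = x + hermForm n x (v j + c j i • v i) • (v j + c j i • v i) := by
      intro x
      have h1 : ψ (Equiv.swap (Fin.castSucc i) (Fin.castSucc j)) x
          = x + hermForm n x w • w := hwt x
      have h2 : ψ (Equiv.swap (Fin.castSucc i) (Fin.castSucc j)) x
          = ψ (Equiv.swap (Fin.castSucc i) L) (ψ (Equiv.swap (Fin.castSucc j) L)
              (ψ (Equiv.swap (Fin.castSucc i) L) x)) := by
        rw [← hgrp, happ, happ]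
      rw [hvt, hvt, hvt] at h2
      rw [← h1, h2]
      exact tv_triple (v i) (v j) x (hvs i) h3
    have hw'0 : (v j + c j i • v i) ≠ 0 := by
      intro h0
      have : hermForm n (v i) (v j + c j i • v i) = c i j := by
        rw [herm_add_right, herm_smul_right]
        show c i j + (c j i) ^ 2 * c i i = c i j
        rw [show c i i = 0 from hvs i, mul_zero, add_zero]
      rw [h0, herm_zero_right] at this
      exact hcne i j hij this.symm
    obtain ⟨d, hd⟩ := tv_eq_prop hw'0 hptw
    -- commuting with the swap (k, L)
    have hcommk : Equiv.swap (Fin.castSucc i) (Fin.castSucc j)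
        * Equiv.swap (Fin.castSucc k) L
        = Equiv.swap (Fin.castSucc k) L
        * Equiv.swap (Fin.castSucc i) (Fin.castSucc j) :=
      swap_disjoint_comm (fun h => hik (embinj h)) (embne i)
        (fun h => hjk (embinj h)) (embne j)
    have hcm : ∀ x, (x + hermForm n x w • w)
          + hermForm n (x + hermForm n x w • w) (v k) • v k
        = (x + hermForm n x (v k) • v k)
          + hermForm n (x + hermForm n x (v k) • v k) w • w := by
      intro x
      have e1 := happ (Equiv.swap (Fin.castSucc k) L)
        (Equiv.swap (Fin.castSucc i) (Fin.castSucc j)) x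
      have e2 := happ (Equiv.swap (Fin.castSucc i) (Fin.castSucc j))
        (Equiv.swap (Fin.castSucc k) L) x
      rw [← hcommk] at e1
      rw [e2] at e1
      -- e1 : ψ s (ψ τk x) = ψ τk (ψ s x)
      rw [hvt, hwt, hwt, hvt] at e1
      exact e1.symm
    have horthwk : hermForm n w (v k) = 0 := comm_orth (hvs k) hws hw0 hcm
    have hw'k : hermForm n (v j + c j i • v i) (v k) = 0 := by
      rw [hd, herm_smul_left, horthwk, mul_zero]
    rw [herm_add_left, herm_smul_left] at hw'k
    -- hw'k : c j k + c j i * c i k = 0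
    linear_combination hw'k - (c j i * c i k) * F4two
  -- the normalized family has Gram matrix J + I of size n+2
  set μ : Fin (n + 2) → F4 := fun j => if j = 0 then 1 else c 0 j with hμ
  set ww : Fin (n + 2) → Fin n → F4 := fun j => μ j • v j with hww
  have hgram : ∀ j k, hermForm n (ww j) (ww k) = if j = k then 0 else 1 := by
    intro j k
    show hermForm n (μ j • v j) (μ k • v k) = _
    rw [herm_smul_left, herm_smul_right]
    by_cases hjk : j = k
    · subst hjk
      rw [if_pos rfl, show hermForm n (v j) (v j) = 0 from hvs j]
      ring
    · rw [if_neg hjk]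
      by_cases hj0 : j = 0
      · subst hj0
        have hk0 : k ≠ 0 := fun h => hjk h.symm
        have h3 : c 0 k ^ 3 = 1 := F4cube _ (hcne 0 k (fun h => hk0 h.symm))
        show μ 0 * (μ k ^ 2 * c 0 k) = 1
        simp [hμ, hk0]
        linear_combination h3
      · by_cases hk0 : k = 0
        · subst hk0
          have h3 : c 0 j ^ 3 = 1 := F4cube _ (hcne 0 j (fun h => hj0 h.symm))
          have hconj : c j 0 = c 0 j ^ 2 := herm_conj (v 0) (v j)
          show μ j * (μ 0 ^ 2 * c j 0) = 1
          simp [hμ, hj0]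
          rw [hconj]
          linear_combination h3
        · have h3j : c 0 j ^ 3 = 1 := F4cube _ (hcne 0 j (fun h => hj0 h.symm))
          have h3k : c 0 k ^ 3 = 1 := F4cube _ (hcne 0 k (fun h => hk0 h.symm))
          have hconj : c j 0 = c 0 j ^ 2 := herm_conj (v 0) (v j)
          have hrel : c j k = c j 0 * c 0 k :=
            horth 0 j k (fun h => hj0 h.symm) (fun h => hk0 h.symm) hjk
          show μ j * (μ k ^ 2 * c j k) = 1
          simp only [hμ]
          rw [if_neg hj0, if_neg hk0, hrel, hconj]
          linear_combination (c 0 k ^ 3) * h3j + h3k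
  -- linear dependence
  have hdep : ¬ LinearIndependent F4 ww := by
    intro h
    have h1 := h.fintype_card_le_finrank
    rw [Module.finrank_pi, Fintype.card_fin, Fintype.card_fin] at h1
    omega
  obtain ⟨g, hg, j0, hj0⟩ := Fintype.not_linearIndependent_iff.mp hdep
  have hgk : ∀ k, g k = ∑ j, g j := by
    intro k
    have h2 : hermForm n (∑ j, g j • ww j) (ww k) = 0 := by
      rw [hg, herm_zero_left]
    rw [herm_sum_left] at h2
    have hsummand : ∀ j, hermForm n (g j • ww j) (ww k)
        = g j - (if j = k then g j else 0) := by
      intro j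
      rw [herm_smul_left, hgram]
      split <;> simp
    rw [Finset.sum_congr rfl (fun j _ => hsummand j), Finset.sum_sub_distrib,
      Finset.sum_ite_eq' Finset.univ k g, if_pos (Finset.mem_univ k)] at h2
    linear_combination -h2
  have hS : ∑ j, g j = 0 := by
    have : ∑ j, g j = ∑ _j : Fin (n + 2), ∑ j, g j :=
      Finset.sum_congr rfl (fun j _ => hgk j)
    rw [Finset.sum_const, Finset.card_univ, Fintype.card_fin] at this
    rw [this, F4nsmul_even (by rcases hev with ⟨t, ht⟩; exact ⟨t + 1, by omega⟩)]
  exact hj0 ((hgk j0).trans hS)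

/-- `φ(U_n(2)) = n + 2` for even `n ≥ 4`: the symmetric group `S (n+2)`
embeds into `U_n(2)` with all transpositions going to unitary transvections (in nonzero
singular vectors), while `S (n+3)` does not. -/
theorem phi_unitary_even (n : ℕ) (hn : 4 ≤ n) (heven : Even n) :
    (∃ ψ : Equiv.Perm (Fin (n + 2)) →* ((Fin n → F4) ≃ₗ[F4] (Fin n → F4)),
      Function.Injective ψ ∧
      ∀ τ : Equiv.Perm (Fin (n + 2)), τ.IsSwap →
        ∃ v : Fin n → F4, v ≠ 0 ∧ hermForm n v v = 0 ∧
          ∀ w, (ψ τ) w = w + hermForm n w v • v) ∧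
    ¬ (∃ ψ : Equiv.Perm (Fin (n + 3)) →* ((Fin n → F4) ≃ₗ[F4] (Fin n → F4)),
      Function.Injective ψ ∧
      ∀ τ : Equiv.Perm (Fin (n + 3)), τ.IsSwap →
        ∃ v : Fin n → F4, v ≠ 0 ∧ hermForm n v v = 0 ∧
          ∀ w, (ψ τ) w = w + hermForm n w v • v) := by
  exact ⟨partA n hn heven, partB n hn heven⟩
end

section
/- Let n ≥ 4 with n ≡ 1 (mod 3), and let V = (Fin n → ZMod 3) with the standard symmetric bilinear form B(x,y) = Σ_i x_i y_i (Gram determinant 1, i.e., type '+'). Then: (a) there exists an injective group homomorphism ψ from the symmetric group S_n to the group of linear automorphisms of V such that for every transposition τ ∈ S_n, ψ(τ) is a reflection t_v for some v ∈ V with B(v,v) = 2; and (b) there is no injective group homomorphism from S_{n+1} to the linear automorphisms of V sending every transposition to such a reflection. (Equivalently, φ(O_n^{+,+}(3)) = n when n ≡ 1 (mod 3).) -/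
/-- The standard symmetric bilinear form on `(ZMod 3)^n`: `B x y = ∑ i, x i * y i`
(Gram determinant `1`, type `+`). -/
def oForm (n : ℕ) (x y : Fin n → ZMod 3) : ZMod 3 :=
  ∑ i : Fin n, x i * y i


lemma oForm_comm (n : ℕ) (x y : Fin n → ZMod 3) : oForm n x y = oForm n y x := by
  simp [oForm, mul_comm]

lemma oForm_sub_left (n : ℕ) (x y z : Fin n → ZMod 3) :
    oForm n (x - y) z = oForm n x z - oForm n y z := by
  simp [oForm, sub_mul, Finset.sum_sub_distrib]

lemma oForm_smul_left (n : ℕ) (c : ZMod 3) (x y : Fin n → ZMod 3) :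
    oForm n (c • x) y = c * oForm n x y := by
  simp [oForm, Finset.mul_sum, mul_assoc]

lemma oForm_smul_right (n : ℕ) (c : ZMod 3) (x y : Fin n → ZMod 3) :
    oForm n x (c • y) = c * oForm n x y := by
  rw [oForm_comm, oForm_smul_left, oForm_comm]



lemma oForm_sub_right (n : ℕ) (x y z : Fin n → ZMod 3) :
    oForm n x (y - z) = oForm n x y - oForm n x z := by
  simp [oForm, mul_sub, Finset.sum_sub_distrib]

lemma oForm_single_right (n : ℕ) (w : Fin n → ZMod 3) (a : Fin n) :
    oForm n w (Pi.single a 1) = w a := by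
  simp [oForm, Pi.single_apply, mul_ite]

lemma LinearEquiv.mul_apply' {R M : Type*} [CommRing R] [AddCommGroup M] [Module R M]
    (f g : M ≃ₗ[R] M) (x : M) : (f * g) x = f (g x) := rfl

def permEquiv (n : ℕ) : Equiv.Perm (Fin n) →* ((Fin n → ZMod 3) ≃ₗ[ZMod 3] (Fin n → ZMod 3)) where
  toFun σ := LinearEquiv.funCongrLeft (ZMod 3) (ZMod 3) σ⁻¹
  map_one' := by ext w i; simp [LinearEquiv.funCongrLeft]
  map_mul' σ τ := by
    ext w i
    simp [LinearEquiv.mul_apply', LinearEquiv.funCongrLeft_apply]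

example (n : ℕ) (σ : Equiv.Perm (Fin n)) (w : Fin n → ZMod 3) (i : Fin n) :
    permEquiv n σ w i = w (σ⁻¹ i) := by
  simp [permEquiv, LinearEquiv.funCongrLeft_apply]

lemma permEquiv_apply (n : ℕ) (σ : Equiv.Perm (Fin n)) (w : Fin n → ZMod 3) (i : Fin n) :
    permEquiv n σ w i = w (σ⁻¹ i) := by
  simp [permEquiv, LinearEquiv.funCongrLeft_apply]

lemma permEquiv_injective (n : ℕ) : Function.Injective (permEquiv n) := by
  rw [injective_iff_map_eq_one]
  intro σ hσ
  ext i
  rw [Equiv.Perm.one_apply]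
  by_contra hne
  have h : permEquiv n σ (Pi.single i 1 : Fin n → ZMod 3) (σ i) = (Pi.single i 1 : Fin n → ZMod 3) (σ i) := by
    rw [hσ]; rfl
  rw [permEquiv_apply, ← Equiv.Perm.mul_apply, inv_mul_cancel, Equiv.Perm.one_apply, Pi.single_eq_same,
    Pi.single_eq_of_ne (fun hh => hne (by rw [hh]))] at h
  exact one_ne_zero h

lemma permEquiv_swap (n : ℕ) (a b : Fin n) (hab : a ≠ b) (w : Fin n → ZMod 3) :
    permEquiv n (Equiv.swap a b) w =
      w - oForm n w (Pi.single a 1 - Pi.single b 1) • (Pi.single a 1 - Pi.single b 1) := by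
  funext i
  rw [permEquiv_apply]
  simp only [Pi.sub_apply, Pi.smul_apply, smul_eq_mul, oForm_sub_right, oForm_single_right,
    Equiv.swap_inv]
  rcases eq_or_ne i a with rfl | ha
  · rw [Equiv.swap_apply_left]
    rw [Pi.single_eq_same, Pi.single_eq_of_ne hab]
    ring
  rcases eq_or_ne i b with rfl | hb
  · rw [Equiv.swap_apply_right]
    rw [Pi.single_eq_same, Pi.single_eq_of_ne (Ne.symm hab)]
    ring
  · rw [Equiv.swap_apply_of_ne_of_ne ha hb]
    rw [Pi.single_eq_of_ne ha, Pi.single_eq_of_ne hb]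
    ring

lemma tridiag_det : ∀ (m : ℕ) (M : Matrix (Fin m) (Fin m) (ZMod 3)),
    (∀ i, M i i = 2) →
    (∀ i j : Fin m, (i : ℕ) + 1 = (j : ℕ) → M i j * M j i = 1) →
    (∀ i j : Fin m, (i : ℕ) + 1 < (j : ℕ) → M i j = 0) →
    (∀ i j : Fin m, (i : ℕ) + 1 < (j : ℕ) → M j i = 0) →
    M.det = ((m : ZMod 3) + 1) := by
  intro m
  induction m using Nat.strong_induction_on with
  | _ m IH =>
  match m with
  | 0 => intro M h1 h2 h3 h4; simp [Matrix.det_fin_zero]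
  | 1 => intro M h1 h2 h3 h4; rw [Matrix.det_fin_one, h1]; decide
  | (k+2) =>
    intro M h1 h2 h3 h4
    rw [Matrix.det_succ_column_zero, Fin.sum_univ_succ, Fin.sum_univ_succ]
    have hz : ∀ i : Fin k, ((-1 : ZMod 3)) ^ ((i.succ.succ : Fin (k+2)) : ℕ) *
        M i.succ.succ 0 * ((M.submatrix (Fin.succAbove i.succ.succ) Fin.succ).det) = 0 := by
      intro i
      rw [h4 0 i.succ.succ (by simp)]
      ring
    rw [Finset.sum_congr rfl (fun i _ => hz i), Finset.sum_const_zero, add_zero]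
    have e0 : M.submatrix (Fin.succAbove (0 : Fin (k+2))) Fin.succ
        = M.submatrix Fin.succ Fin.succ := by
      rw [Fin.succAbove_zero]
    have d1 : (M.submatrix Fin.succ Fin.succ).det = (((k+1 : ℕ) : ZMod 3) + 1) := by
      apply IH (k+1) (by omega)
      · intro i; exact h1 i.succ
      · intro i j h; exact h2 i.succ j.succ (by simp [Fin.val_succ] at h ⊢; omega)
      · intro i j h; exact h3 i.succ j.succ (by simp [Fin.val_succ] at h ⊢; omega)
      · intro i j h; exact h4 i.succ j.succ (by simp [Fin.val_succ] at h ⊢; omega)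
    have d2 : (M.submatrix (Fin.succAbove ((0 : Fin (k+1)).succ)) Fin.succ).det
        = M 0 1 * (((k : ℕ) : ZMod 3) + 1) := by
      set N := M.submatrix (Fin.succAbove ((0 : Fin (k+1)).succ)) Fin.succ with hN
      rw [Matrix.det_succ_row_zero, Fin.sum_univ_succ]
      have hz2 : ∀ j : Fin k, ((-1 : ZMod 3)) ^ ((j.succ : Fin (k+1)) : ℕ) *
          N 0 j.succ * ((N.submatrix Fin.succ (Fin.succAbove j.succ)).det) = 0 := by
        intro j
        have : N 0 j.succ = 0 := by
          show M ((Fin.succ (0 : Fin (k+1))).succAbove 0) j.succ.succ = 0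
          rw [Fin.succ_succAbove_zero]
          exact h3 0 j.succ.succ (by simp)
        rw [this]; ring
      rw [Finset.sum_congr rfl (fun j _ => hz2 j), Finset.sum_const_zero, add_zero]
      have eN00 : N 0 0 = M 0 1 := by
        show M ((Fin.succ (0 : Fin (k+1))).succAbove 0) (Fin.succ 0) = M 0 1
        rw [Fin.succ_succAbove_zero, Fin.succ_zero_eq_one]
      have eQ : N.submatrix Fin.succ (Fin.succAbove (0 : Fin (k+1)))
          = fun i j : Fin k => M i.succ.succ j.succ.succ := by
        funext i j
        show M ((Fin.succ (0 : Fin (k+1))).succAbove i.succ) (Fin.succ ((0:Fin (k+1)).succAbove j)) = _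
        rw [Fin.succ_succAbove_succ, Fin.succAbove_zero]
      have dQ : (N.submatrix Fin.succ (Fin.succAbove (0 : Fin (k+1)))).det
          = (((k : ℕ) : ZMod 3) + 1) := by
        rw [eQ]
        apply IH k (by omega)
        · intro i; exact h1 i.succ.succ
        · intro i j h; exact h2 i.succ.succ j.succ.succ (by simp [Fin.val_succ] at h ⊢; omega)
        · intro i j h; exact h3 i.succ.succ j.succ.succ (by simp [Fin.val_succ] at h ⊢; omega)
        · intro i j h; exact h4 i.succ.succ j.succ.succ (by simp [Fin.val_succ] at h ⊢; omega)
      rw [eN00, dQ]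
      simp
    rw [e0, d1, d2]
    have hM00 : M 0 0 = 2 := h1 0
    have hprod : M 0 1 * M 1 0 = 1 := h2 0 1 (by simp)
    have h10 : M ((0 : Fin (k+1)).succ) 0 = M 1 0 := by
      rw [Fin.succ_zero_eq_one]
    rw [h10]
    simp only [Fin.val_zero, pow_zero, one_mul, Fin.val_succ, pow_succ, pow_zero]
    push_cast
    linear_combination ((k : ZMod 3) + 2) * hM00 - ((k : ZMod 3) + 1) * hprod

lemma swap_comm_disjoint {α : Type*} [DecidableEq α] (a b c d : α)
    (hac : a ≠ c) (had : a ≠ d) (hbc : b ≠ c) (hbd : b ≠ d) :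
    Equiv.swap a b * Equiv.swap c d = Equiv.swap c d * Equiv.swap a b := by
  ext x
  simp only [Equiv.Perm.mul_apply, Equiv.swap_apply_def]
  split_ifs <;> simp_all

lemma swap_cube {α : Type*} [DecidableEq α] (a b c : α)
    (hab : a ≠ b) (hbc : b ≠ c) (hac : a ≠ c) :
    (Equiv.swap a b * Equiv.swap b c) ^ 3 = 1 := by
  have e1 : ∀ x, (Equiv.swap a b * Equiv.swap b c) x = Equiv.swap a b (Equiv.swap b c x) :=
    fun _ => rfl
  have ha : (Equiv.swap a b * Equiv.swap b c) a = b := by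
    rw [e1, Equiv.swap_apply_of_ne_of_ne hab hac, Equiv.swap_apply_left]
  have hb : (Equiv.swap a b * Equiv.swap b c) b = c := by
    rw [e1, Equiv.swap_apply_left, Equiv.swap_apply_of_ne_of_ne (Ne.symm hac) (Ne.symm hbc)]
  have hcc : (Equiv.swap a b * Equiv.swap b c) c = a := by
    rw [e1, Equiv.swap_apply_right, Equiv.swap_apply_right]
  have ho : ∀ x, x ≠ a → x ≠ b → x ≠ c → (Equiv.swap a b * Equiv.swap b c) x = x :=
    fun x h1 h2 h3 => by
      rw [e1, Equiv.swap_apply_of_ne_of_ne h2 h3, Equiv.swap_apply_of_ne_of_ne h1 h2]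
  have e3 : ∀ (g : Equiv.Perm α) (x : α), (g ^ 3) x = g (g (g x)) := fun g x => by
    rw [pow_succ, pow_succ, pow_one]; rfl
  ext x
  rw [e3, Equiv.Perm.one_apply]
  by_cases h1 : x = a
  · subst h1; rw [ha, hb, hcc]
  by_cases h2 : x = b
  · subst h2; rw [hb, hcc, ha]
  by_cases h3 : x = c
  · subst h3; rw [hcc, ha, hb]
  · rw [ho x h1 h2 h3, ho x h1 h2 h3, ho x h1 h2 h3]


lemma oForm_single_single_norm (n : ℕ) (a b : Fin n) (hab : a ≠ b) :
    oForm n (Pi.single a 1 - Pi.single b 1) (Pi.single a 1 - Pi.single b 1) = 2 := by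
  rw [oForm_sub_left, oForm_sub_right, oForm_sub_right, oForm_single_right, oForm_single_right,
    oForm_single_right, oForm_single_right, Pi.single_eq_same, Pi.single_eq_same,
    Pi.single_eq_of_ne hab, Pi.single_eq_of_ne (Ne.symm hab)]
  decide

/-- φ(O_n^{+,+}(3)) = n when n ≡ 1 (mod 3): S_n embeds with transpositions going to reflections t_v with B(v,v) = 2, while S_{n+1} does not. -/
theorem phi_O_plus_plus_3_mod_one (n : ℕ) (hn : 4 ≤ n) (hmod : n % 3 = 1) :
    (∃ ψ : Equiv.Perm (Fin (n)) →* ((Fin n → ZMod 3) ≃ₗ[ZMod 3] (Fin n → ZMod 3)),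
      Function.Injective ψ ∧
      ∀ τ : Equiv.Perm (Fin (n)), τ.IsSwap →
        ∃ v : Fin n → ZMod 3, oForm n v v = 2 ∧
          ∀ w, (ψ τ) w = w - oForm n w v • v) ∧
    ¬ (∃ ψ : Equiv.Perm (Fin (n + 1)) →* ((Fin n → ZMod 3) ≃ₗ[ZMod 3] (Fin n → ZMod 3)),
      Function.Injective ψ ∧
      ∀ τ : Equiv.Perm (Fin (n + 1)), τ.IsSwap →
        ∃ v : Fin n → ZMod 3, oForm n v v = 2 ∧
          ∀ w, (ψ τ) w = w - oForm n w v • v) := by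
  constructor
  · refine ⟨permEquiv n, permEquiv_injective n, ?_⟩
    rintro τ ⟨a, b, hab, rfl⟩
    exact ⟨Pi.single a 1 - Pi.single b 1, oForm_single_single_norm n a b hab,
      fun w => permEquiv_swap n a b hab w⟩
  · rintro ⟨ψ, hinj, hswap⟩
    set σ : Fin n → Equiv.Perm (Fin (n+1)) := fun k => Equiv.swap k.castSucc k.succ with hσ
    have hσdef : ∀ k : Fin n, σ k = Equiv.swap k.castSucc k.succ := fun _ => rfl
    have hswap' : ∀ k : Fin n, (σ k).IsSwap := fun k =>
      ⟨k.castSucc, k.succ, (Fin.castSucc_lt_succ (i := k)).ne, rfl⟩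
    choose v hv2 hvf using fun k : Fin n => hswap (σ k) (hswap' k)
    -- injectivity of σ
    have hσinj : Function.Injective σ := by
      intro i j h
      have h1 : σ i i.castSucc = σ j i.castSucc := by rw [h]
      rw [hσ] at h1
      simp only [Equiv.swap_apply_left] at h1
      by_cases hc : i.castSucc = j.castSucc
      · exact Fin.castSucc_injective n hc
      by_cases hd : i.castSucc = j.succ
      · rw [hd, Equiv.swap_apply_right] at h1
        have := congrArg Fin.val h1
        have := congrArg Fin.val hd
        simp [Fin.val_succ] at *
        omega
      · rw [Equiv.swap_apply_of_ne_of_ne hc hd] at h1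
        have := congrArg Fin.val h1
        simp [Fin.val_succ] at this
    -- c*c = 1 for nonzero c
    have hsq1 : ∀ c : ZMod 3, c ≠ 0 → c * c = 1 := by decide
    -- key: commuting + i ≠ j forces orthogonality
    have key : ∀ i j : Fin n, i ≠ j →
        (∀ x, ψ (σ i) (ψ (σ j) x) = ψ (σ j) (ψ (σ i) x)) → oForm n (v i) (v j) = 0 := by
      intro i j hij hcomm
      by_contra hc
      set c := oForm n (v i) (v j) with hcdef
      have hcomm' := hcomm (v i)
      rw [hvf j (v i), hvf i (v i), hvf i, hvf j] at hcomm'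
      rw [oForm_sub_left, oForm_smul_left, oForm_sub_left, oForm_smul_left] at hcomm'
      rw [hv2 i, oForm_comm n (v j) (v i)] at hcomm'
      rw [← hcdef] at hcomm'
      have hvij : v i = (2 * c) • v j := by
        have h2 : (c * c) • v i = (2 * c) • v j := by
          linear_combination (norm := module) hcomm'
        rw [hsq1 c hc, one_smul] at h2
        exact h2
      have heqmap : ψ (σ i) = ψ (σ j) := by
        apply LinearEquiv.ext
        intro x
        rw [hvf i, hvf j, hvij, oForm_smul_right, smul_smul]
        have h4 : (2 * c) * (2 * c) = 1 := by
          rw [show (2 * c) * (2 * c) = (2 * 2) * (c * c) from by ring, hsq1 c hc, mul_one]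
          decide
        congr 2
        linear_combination oForm n x (v j) * h4
      exact hij (hσinj (hinj heqmap))
    -- far apart indices: oForm v i v j = 0
    have far : ∀ i j : Fin n, (i : ℕ) + 1 < (j : ℕ) → oForm n (v i) (v j) = 0 := by
      intro i j hij
      refine key i j (fun h => by rw [h] at hij; omega) ?_
      intro x
      have hperm : σ i * σ j = σ j * σ i := by
        rw [hσdef, hσdef]
        apply swap_comm_disjoint <;>
          · intro h; have := congrArg Fin.val h; simp [Fin.val_succ] at this; omega
      have := congrArg (fun p => ψ p x) hperm
      simpa only [map_mul, LinearEquiv.mul_apply'] using this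
    -- adjacent indices: oForm v i v j ≠ 0
    have adj : ∀ i j : Fin n, (i : ℕ) + 1 = (j : ℕ) → oForm n (v i) (v j) ≠ 0 := by
      intro i j hij h0
      have h0' : oForm n (v j) (v i) = 0 := by rw [oForm_comm]; exact h0
      -- the two reflections commute
      have hcomm' : ψ (σ i) * ψ (σ j) = ψ (σ j) * ψ (σ i) := by
        apply LinearEquiv.ext
        intro x
        rw [LinearEquiv.mul_apply', LinearEquiv.mul_apply', hvf j x, hvf i x, hvf i, hvf j]
        rw [oForm_sub_left, oForm_smul_left, oForm_sub_left, oForm_smul_left, h0, h0']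
        module
      have hsqi : ψ (σ i) * ψ (σ i) = 1 := by
        rw [← map_mul, hσ]; simp only [Equiv.swap_mul_self, map_one]
      have hsqj : ψ (σ j) * ψ (σ j) = 1 := by
        rw [← map_mul, hσ]; simp only [Equiv.swap_mul_self, map_one]
      -- (σ i * σ j)^3 = 1
      have hbc : i.succ = j.castSucc := by
        apply Fin.ext; simp [Fin.val_succ]; omega
      have hcube : (σ i * σ j) ^ 3 = 1 := by
        rw [hσdef, hσdef, ← hbc]
        apply swap_cube
        · exact (Fin.castSucc_lt_succ (i := i)).ne
        · intro h; have := congrArg Fin.val h; simp [Fin.val_succ] at this; omega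
        · intro h; have := congrArg Fin.val h; simp [Fin.val_succ] at this; omega
      have hg : ψ (σ i) * ψ (σ j) = 1 := by
        have h3 : (ψ (σ i) * ψ (σ j)) ^ 3 = 1 := by
          rw [← map_mul, ← map_pow, hcube, map_one]
        have h2 : (ψ (σ i) * ψ (σ j)) * (ψ (σ i) * ψ (σ j)) = 1 := by
          calc (ψ (σ i) * ψ (σ j)) * (ψ (σ i) * ψ (σ j))
              = ψ (σ i) * ((ψ (σ j) * ψ (σ i)) * ψ (σ j)) := by group
            _ = ψ (σ i) * ((ψ (σ i) * ψ (σ j)) * ψ (σ j)) := by rw [hcomm']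
            _ = (ψ (σ i) * ψ (σ i)) * (ψ (σ j) * ψ (σ j)) := by group
            _ = 1 := by rw [hsqi, hsqj, one_mul]
        calc ψ (σ i) * ψ (σ j) = (ψ (σ i) * ψ (σ j)) ^ 3 := by
              rw [pow_succ, pow_succ, pow_one, h2, one_mul]
            _ = 1 := h3
      have hone : σ i * σ j = 1 := hinj (by rw [map_mul, hg, map_one])
      have hne1 : i.castSucc ≠ j.castSucc := by
        intro h; have := congrArg Fin.val h; simp at this; omega
      have hne2 : i.castSucc ≠ j.succ := by
        intro h; have := congrArg Fin.val h; simp [Fin.val_succ] at this; omega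
      have hfix : σ j i.castSucc = i.castSucc := by
        rw [hσdef]; exact Equiv.swap_apply_of_ne_of_ne hne1 hne2
      have h5 : σ i (σ j i.castSucc) = i.castSucc := by
        rw [← Equiv.Perm.mul_apply, hone, Equiv.Perm.one_apply]
      rw [hfix, hσdef, Equiv.swap_apply_left] at h5
      have := congrArg Fin.val h5
      simp [Fin.val_succ] at this
    -- assemble the Gram matrix
    set M : Matrix (Fin n) (Fin n) (ZMod 3) := Matrix.of fun i j => oForm n (v i) (v j) with hM
    have hdet : M.det = ((n : ZMod 3) + 1) := by
      apply tridiag_det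
      · intro i; exact hv2 i
      · intro i j h
        rw [show M i j = oForm n (v i) (v j) from rfl,
          show M j i = oForm n (v i) (v j) from oForm_comm n (v j) (v i)]
        exact hsq1 _ (adj i j h)
      · intro i j h; exact far i j h
      · intro i j h
        rw [show M j i = oForm n (v i) (v j) from oForm_comm n (v j) (v i)]
        exact far i j h
    set P : Matrix (Fin n) (Fin n) (ZMod 3) := Matrix.of fun i j => v i j with hP
    have hMP : M = P * P.transpose := by
      ext i j
      simp [hM, hP, Matrix.mul_apply, Matrix.transpose_apply, oForm]
    have hcast : (n : ZMod 3) + 1 = 2 := by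
      have h1 : ((n : ℕ) : ZMod 3) = ((n % 3 : ℕ) : ZMod 3) := (ZMod.natCast_mod n 3).symm
      rw [h1, hmod]
      decide
    rw [hMP, Matrix.det_mul, Matrix.det_transpose, hcast] at hdet
    exact (by decide : ∀ x : ZMod 3, x * x ≠ 2) _ hdet
end

section
/- Let n ≥ 3 with n ≢ 1 (mod 3), and let V = (Fin n → ZMod 3) with the standard symmetric bilinear form B(x,y) = Σ_i x_i y_i (Gram determinant 1, i.e., type '+'). Then: (a) there exists an injective group homomorphism ψ from the symmetric group S_{n+1} to the group of linear automorphisms of V such that for every transposition τ ∈ S_{n+1}, ψ(τ) is a reflection t_v for some v ∈ V with B(v,v) = 2; and (b) there is no injective group homomorphism from S_{n+2} to the linear automorphisms of V sending every transposition to such a reflection. (Equivalently, φ(O_n^{+,+}(3)) = n+1 when n ≢ 1 (mod 3).) -/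
namespace PhiAux


open Matrix Equiv Finset

variable {n : ℕ}

lemma oForm_eq_dot (x y : Fin n → ZMod 3) : oForm n x y = x ⬝ᵥ y := rfl

lemma oForm_comm (x y : Fin n → ZMod 3) : oForm n x y = oForm n y x :=
  Finset.sum_congr rfl fun i _ => mul_comm _ _

lemma sq_one {c : ZMod 3} (hc : c ≠ 0) : c * c = 1 := by
  revert hc; revert c; decide

lemma three_eq_zero : (3 : ZMod 3) = 0 := by decide

/-- If `w = c • u` with `c ≠ 0`, the reflections in `w` and `u` coincide. -/
lemma refl_collinear {u w : Fin n → ZMod 3} {c : ZMod 3} (hc : c ≠ 0) (h : w = c • u)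
    (x : Fin n → ZMod 3) : x - oForm n x w • w = x - oForm n x u • u := by
  subst h
  have hc2 : c * c = 1 := sq_one hc
  have : oForm n x (c • u) • (c • u) = oForm n x u • u := by
    rw [oForm_eq_dot, dotProduct_smul, smul_eq_mul, smul_smul, oForm_eq_dot]
    congr 1
    linear_combination (x ⬝ᵥ u) * hc2
  rw [this]

/-- Two commuting reflections are orthogonal, or equal as maps. -/
lemma comm_reflect {u w : Fin n → ZMod 3} (hu : oForm n u u = 2)
    (hcomm : ∀ x : Fin n → ZMod 3,
      ((x - oForm n x w • w) - oForm n (x - oForm n x w • w) u • u)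
        = ((x - oForm n x u • u) - oForm n (x - oForm n x u • u) w • w)) :
    oForm n u w = 0 ∨ ∀ x, x - oForm n x u • u = x - oForm n x w • w := by
  by_cases h : oForm n u w = 0
  · exact Or.inl h
  · right
    set c := oForm n u w with hc
    have hc2 : c * c = 1 := sq_one h
    have h1 := hcomm u
    have hwu : oForm n w u = c := by rw [oForm_comm]
    have hp : ∀ p, u p = (-c) * w p := by
      intro p
      have h2 := congrFun h1 p
      simp only [oForm_eq_dot, sub_dotProduct, smul_dotProduct, Pi.sub_apply, Pi.smul_apply,
        smul_eq_mul] at h2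
      have hu' : u ⬝ᵥ u = 2 := hu
      have huw : u ⬝ᵥ w = c := hc.symm
      have hwu' : w ⬝ᵥ u = c := hwu
      rw [hu', huw, hwu'] at h2
      linear_combination h2 - u p * hc2 + c * w p * three_eq_zero
    have hcol : u = (-c) • w := funext fun p => by rw [Pi.smul_apply, smul_eq_mul]; exact hp p
    have hnc : (-c : ZMod 3) ≠ 0 := neg_ne_zero.2 h
    exact fun x => refl_collinear hnc hcol x

/-- Orthogonal reflections commute. -/
lemma orth_comm {u w : Fin n → ZMod 3} (h : oForm n u w = 0)
    (x : Fin n → ZMod 3) :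
      ((x - oForm n x w • w) - oForm n (x - oForm n x w • w) u • u)
        = ((x - oForm n x u • u) - oForm n (x - oForm n x u • u) w • w) := by
  have hwu : oForm n w u = 0 := by rw [oForm_comm]; exact h
  simp only [oForm_eq_dot] at *
  simp only [sub_dotProduct, smul_dotProduct, smul_eq_mul, h, hwu, mul_zero, sub_zero]
  abel



lemma sum_smul_dot {k : ℕ} (g : Fin k → ZMod 3) (f : Fin k → Fin n → ZMod 3)
    (w : Fin n → ZMod 3) :
    (∑ j, g j • f j) ⬝ᵥ w = ∑ j, g j * (f j ⬝ᵥ w) := by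
  simp only [dotProduct, Finset.sum_apply, Pi.smul_apply, smul_eq_mul, Finset.sum_mul,
    Finset.mul_sum]
  rw [Finset.sum_comm]
  exact Finset.sum_congr rfl fun j _ => Finset.sum_congr rfl fun i _ => by ring

lemma cast_ne_one {n : ℕ} (hmod : n % 3 ≠ 1) : (n : ZMod 3) ≠ 1 := by
  have h3 : n % 3 = 0 ∨ n % 3 = 2 := by omega
  have hc : ((n % 3 : ℕ) : ZMod 3) = (n : ZMod 3) := ZMod.natCast_mod n 3
  rcases h3 with h | h <;> rw [← hc, h] <;> decide

theorem part_b (n : ℕ) (hn : 3 ≤ n) (hmod : n % 3 ≠ 1) :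
    ¬ (∃ ψ : Equiv.Perm (Fin (n + 2)) →* ((Fin n → ZMod 3) ≃ₗ[ZMod 3] (Fin n → ZMod 3)),
      Function.Injective ψ ∧
      ∀ τ : Equiv.Perm (Fin (n + 2)), τ.IsSwap →
        ∃ v : Fin n → ZMod 3, oForm n v v = 2 ∧
          ∀ w, (ψ τ) w = w - oForm n w v • v) := by
  rintro ⟨ψ, hinj, hswap⟩
  have hmul : ∀ (a b : Equiv.Perm (Fin (n+2))) (x : Fin n → ZMod 3),
      ψ (a * b) x = ψ a (ψ b x) := by
    intro a b x; rw [_root_.map_mul]; rfl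
  have hψext : ∀ {σ τ : Equiv.Perm (Fin (n+2))}, (∀ x, ψ σ x = ψ τ x) → σ = τ := by
    intro σ τ h
    exact hinj (DFunLike.ext _ _ h)
  set sw : Fin (n+1) → Equiv.Perm (Fin (n+2)) := fun j => Equiv.swap 0 j.succ with hswdef
  have hsw : ∀ j, (sw j).IsSwap := fun j => ⟨0, j.succ, (Fin.succ_ne_zero j).symm, rfl⟩
  choose v hv2 hvr using fun j => hswap (sw j) (hsw j)
  -- Step A : vectors of non-commuting transpositions are non-orthogonal
  have hA : ∀ i j : Fin (n+1), i ≠ j → oForm n (v i) (v j) ≠ 0 := by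
    intro i j hij h0
    have hcomm : ∀ x, ψ (sw i * sw j) x = ψ (sw j * sw i) x := by
      intro x
      rw [hmul, hmul, hvr j x, hvr i x, hvr i, hvr j]
      exact orth_comm h0 x
    have heq := hψext hcomm
    have h1 : (sw i * sw j) 0 = j.succ := by
      rw [Equiv.Perm.mul_apply]
      rw [hswdef]
      simp only []
      rw [Equiv.swap_apply_left]
      exact Equiv.swap_apply_of_ne_of_ne (Fin.succ_ne_zero j)
        (fun h => hij (Fin.succ_inj.mp h.symm))
    have h2 : (sw j * sw i) 0 = i.succ := by
      rw [Equiv.Perm.mul_apply]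
      rw [hswdef]
      simp only []
      rw [Equiv.swap_apply_left]
      exact Equiv.swap_apply_of_ne_of_ne (Fin.succ_ne_zero i)
        (fun h => hij (Fin.succ_inj.mp h))
    rw [heq, h2] at h1
    exact hij (Fin.succ_inj.mp h1)
  -- Step B : triple products are 1
  have hB : ∀ i j : Fin (n+1), i ≠ 0 → j ≠ 0 → i ≠ j →
      oForm n (v 0) (v i) * oForm n (v 0) (v j) * oForm n (v i) (v j) = 1 := by
    intro i j hi hj hij
    set a := oForm n (v 0) (v i) with hadef
    set b := oForm n (v 0) (v j) with hbdef
    set c := oForm n (v i) (v j) with hcdef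
    have ha : a ≠ 0 := hA 0 i (fun h => hi h.symm)
    have hb : b ≠ 0 := hA 0 j (fun h => hj h.symm)
    have hc : c ≠ 0 := hA i j hij
    set ρ : Equiv.Perm (Fin (n+2)) := Equiv.swap i.succ j.succ with hρdef
    obtain ⟨w, hw2, hwr⟩ := hswap ρ ⟨i.succ, j.succ,
      fun h => hij (Fin.succ_inj.mp h), rfl⟩
    -- ρ and sw 0 are disjoint hence commute
    have hdisj : ρ.Disjoint (sw 0) := by
      intro p
      by_cases h1 : p = i.succ
      · right
        subst h1
        exact Equiv.swap_apply_of_ne_of_ne (Fin.succ_ne_zero i)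
          (fun h => hi (Fin.succ_inj.mp h))
      · by_cases h2 : p = j.succ
        · right
          subst h2
          exact Equiv.swap_apply_of_ne_of_ne (Fin.succ_ne_zero j)
            (fun h => hj (Fin.succ_inj.mp h))
        · left
          exact Equiv.swap_apply_of_ne_of_ne h1 h2
    have hcommψ : ∀ x, ψ ρ (ψ (sw 0) x) = ψ (sw 0) (ψ ρ x) := by
      intro x
      rw [← hmul, ← hmul, hdisj.commute.eq]
    have hcommr : ∀ x, ((x - oForm n x (v 0) • v 0)
        - oForm n (x - oForm n x (v 0) • v 0) w • w)
        = ((x - oForm n x w • w) - oForm n (x - oForm n x w • w) (v 0) • v 0) := by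
      intro x
      have h := hcommψ x
      rw [hvr 0 x, hwr x, hwr, hvr 0] at h
      exact h
    have horth := comm_reflect hw2 hcommr
    have hw0 : oForm n w (v 0) = 0 := by
      rcases horth with h | h
      · exact h
      · exfalso
        have : ∀ x, ψ ρ x = ψ (sw 0) x := by
          intro x
          rw [hwr, hvr 0]
          exact h x
        have heq := hψext this
        have h1 : ρ 0 = 0 := Equiv.swap_apply_of_ne_of_ne
          (Fin.succ_ne_zero i).symm (Fin.succ_ne_zero j).symm
        have h2 : sw 0 0 = Fin.succ 0 := Equiv.swap_apply_left _ _
        rw [heq, h2] at h1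
        exact Fin.succ_ne_zero 0 h1
    have hv0w : oForm n (v 0) w = 0 := by rw [oForm_comm]; exact hw0
    -- ρ = sw i * sw j * sw i
    have hρeq : ρ = sw i * sw j * sw i := by
      apply Equiv.ext
      intro p
      simp only [Equiv.Perm.mul_apply]
      rcases eq_or_ne p 0 with rfl | hp0
      · rw [show (sw i) 0 = i.succ from Equiv.swap_apply_left _ _]
        rw [show (sw j) i.succ = i.succ from Equiv.swap_apply_of_ne_of_ne
          (Fin.succ_ne_zero i) (fun h => hij (Fin.succ_inj.mp h))]
        rw [show (sw i) i.succ = 0 from Equiv.swap_apply_right _ _]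
        exact Equiv.swap_apply_of_ne_of_ne (Fin.succ_ne_zero i).symm
          (Fin.succ_ne_zero j).symm
      · rcases eq_or_ne p i.succ with rfl | hpi
        · rw [show (sw i) i.succ = 0 from Equiv.swap_apply_right _ _]
          rw [show (sw j) 0 = j.succ from Equiv.swap_apply_left _ _]
          rw [show (sw i) j.succ = j.succ from Equiv.swap_apply_of_ne_of_ne
            (Fin.succ_ne_zero j) (fun h => hij (Fin.succ_inj.mp h.symm))]
          exact Equiv.swap_apply_left _ _
        · rcases eq_or_ne p j.succ with rfl | hpj
          · rw [show (sw i) j.succ = j.succ from Equiv.swap_apply_of_ne_of_ne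
              (Fin.succ_ne_zero j) (fun h => hij (Fin.succ_inj.mp h.symm))]
            rw [show (sw j) j.succ = 0 from Equiv.swap_apply_right _ _]
            rw [show (sw i) 0 = i.succ from Equiv.swap_apply_left _ _]
            exact Equiv.swap_apply_right _ _
          · rw [show (sw i) p = p from Equiv.swap_apply_of_ne_of_ne hp0 hpi]
            rw [show (sw j) p = p from Equiv.swap_apply_of_ne_of_ne hp0 hpj]
            rw [show (sw i) p = p from Equiv.swap_apply_of_ne_of_ne hp0 hpi]
            exact Equiv.swap_apply_of_ne_of_ne hpi hpj
    have e1 : ψ ρ (v 0) = v 0 := by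
      rw [hwr, hv0w, zero_smul, sub_zero]
    have e2 : ψ ρ (v 0) = ((v 0 - oForm n (v 0) (v i) • v i)
        - oForm n (v 0 - oForm n (v 0) (v i) • v i) (v j) • v j)
        - oForm n ((v 0 - oForm n (v 0) (v i) • v i)
        - oForm n (v 0 - oForm n (v 0) (v i) • v i) (v j) • v j) (v i) • v i := by
      rw [hρeq, hmul, hmul, hvr i (v 0), hvr j, hvr i]
    have E : ((v 0 - oForm n (v 0) (v i) • v i)
        - oForm n (v 0 - oForm n (v 0) (v i) • v i) (v j) • v j)
        - oForm n ((v 0 - oForm n (v 0) (v i) • v i)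
        - oForm n (v 0 - oForm n (v 0) (v i) • v i) (v j) • v j) (v i) • v i = v 0 :=
      e2.symm.trans e1
    by_contra habc
    have habc2 : a * b * c = 2 := by
      have hne : a * b * c ≠ 0 := mul_ne_zero (mul_ne_zero ha hb) hc
      have key : ∀ x : ZMod 3, x ≠ 0 → x ≠ 1 → x = 2 := by decide
      exact key _ hne habc
    have hvij : ∀ p, v i p = (-(a * b)) * v j p := by
      intro p
      have h2 := congrFun E p
      simp only [oForm_eq_dot, sub_dotProduct, smul_dotProduct, Pi.sub_apply, Pi.smul_apply,
        smul_eq_mul] at h2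
      have d1 : v 0 ⬝ᵥ v i = a := rfl
      have d2 : v 0 ⬝ᵥ v j = b := rfl
      have d3 : v i ⬝ᵥ v j = c := rfl
      have d4 : v j ⬝ᵥ v i = c := (dotProduct_comm (v j) (v i)).trans d3
      have d5 : v i ⬝ᵥ v i = 2 := hv2 i
      have d6 : v j ⬝ᵥ v j = 2 := hv2 j
      rw [d1, d2, d3, d4, d5] at h2
      have h3 : a * (v i p) + (b - a * c) * (v j p)
          + (a - a * 2 - (b - a * c) * c) * (v i p) = 0 := by linear_combination -h2
      clear_value a b c
      clear E e1 e2 hwr hw2 hcommr hcommψ hv0w hw0 horth hdisj hρeq habc hvr hv2 hA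
        hadef hbdef hcdef d1 d2 d3 d4 d5 d6 h2
      revert h3 habc2 ha hb hc
      generalize v i p = Y
      generalize v j p = Z
      revert a b c Y Z
      decide
    have hvcol : v i = (-(a * b)) • v j := funext fun p => by
      rw [Pi.smul_apply, smul_eq_mul]; exact hvij p
    have hab : (-(a * b) : ZMod 3) ≠ 0 := neg_ne_zero.2 (mul_ne_zero ha hb)
    have : ∀ x, ψ (sw i) x = ψ (sw j) x := by
      intro x
      rw [hvr i, hvr j]
      exact refl_collinear hab hvcol x
    have heq := hψext this
    have h1 : sw i 0 = i.succ := Equiv.swap_apply_left _ _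
    have h2 : sw j 0 = j.succ := Equiv.swap_apply_left _ _
    rw [heq, h2] at h1
    exact hij (Fin.succ_inj.mp h1).symm
  -- normalized vectors with Gram matrix I + J
  set u : Fin (n+1) → (Fin n → ZMod 3) :=
    fun j => if j = 0 then v 0 else (oForm n (v 0) (v j)) • v j with hudef
  have hu0 : u 0 = v 0 := by rw [hudef]; simp
  have hujj : ∀ j : Fin (n+1), j ≠ 0 → u j = (oForm n (v 0) (v j)) • v j := by
    intro j hj
    rw [hudef]
    simp [hj]
  have hGram : ∀ i j, oForm n (u i) (u j) = if i = j then 2 else 1 := by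
    intro i j
    rcases eq_or_ne i 0 with rfl | hi
    · rcases eq_or_ne j 0 with rfl | hj
      · rw [if_pos rfl, hu0]
        exact hv2 0
      · rw [if_neg (fun h => hj h.symm), hu0, hujj j hj]
        rw [oForm_eq_dot, dotProduct_smul, smul_eq_mul, ← oForm_eq_dot]
        exact sq_one (hA 0 j (fun h => hj h.symm))
    · rcases eq_or_ne j 0 with rfl | hj
      · rw [if_neg hi, hu0, hujj i hi]
        rw [oForm_eq_dot, smul_dotProduct, smul_eq_mul, dotProduct_comm, ← oForm_eq_dot]
        exact sq_one (hA 0 i (fun h => hi h.symm))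
      · rcases eq_or_ne i j with rfl | hij
        · rw [if_pos rfl, hujj i hi]
          rw [oForm_eq_dot, smul_dotProduct, dotProduct_smul, smul_eq_mul, smul_eq_mul,
            ← mul_assoc, ← oForm_eq_dot]
          rw [hv2 i, sq_one (hA 0 i (fun h => hi h.symm))]
          ring
        · rw [if_neg hij, hujj i hi, hujj j hj]
          rw [oForm_eq_dot, smul_dotProduct, dotProduct_smul, smul_eq_mul, smul_eq_mul,
            ← mul_assoc, ← oForm_eq_dot]
          exact hB i j hi hj hij
  have hLI : LinearIndependent (ZMod 3) u := by
    rw [Fintype.linearIndependent_iff]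
    intro g hg
    have hG : ∀ i, (∑ j, g j) + g i = 0 := by
      intro i
      have h1 : (∑ j, g j • u j) ⬝ᵥ u i = 0 := by rw [hg, zero_dotProduct]
      rw [sum_smul_dot] at h1
      have h2 : ∀ j, g j * (u j ⬝ᵥ u i) = g j + (if j = i then g j else 0) := by
        intro j
        rw [← oForm_eq_dot, hGram j i]
        split <;> ring
      rw [Finset.sum_congr rfl fun j _ => h2 j, Finset.sum_add_distrib,
        Finset.sum_ite_eq' Finset.univ i g, if_pos (Finset.mem_univ i)] at h1
      exact h1
    have hGi : ∀ i, g i = -(∑ j, g j) := by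
      intro i
      exact eq_neg_of_add_eq_zero_left (by rw [add_comm]; exact hG i)
    have hsum : (∑ j, g j) = ((n+1 : ℕ) : ZMod 3) * (-(∑ j, g j)) := by
      conv_lhs => rw [Finset.sum_congr rfl fun j _ => hGi j]
      rw [Finset.sum_const, Finset.card_univ, Fintype.card_fin, nsmul_eq_mul]
    have h2' : ((n : ZMod 3) + 2) * (∑ j, g j) = 0 := by
      push_cast at hsum
      linear_combination hsum
    have hne : ((n : ZMod 3) + 2) ≠ 0 := by
      have hc1 := cast_ne_one hmod
      revert hc1
      generalize (n : ZMod 3) = μ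
      revert μ
      decide
    have hG0 : (∑ j, g j) = 0 := by
      rcases mul_eq_zero.1 h2' with h | h
      · exact absurd h hne
      · exact h
    intro i
    rw [hGi i, hG0, neg_zero]
  have hcard := hLI.fintype_card_le_finrank
  rw [Fintype.card_fin, Module.finrank_pi, Fintype.card_fin] at hcard
  omega


open Matrix Equiv




def dvec {m : ℕ} (a b : Fin m) : Fin m → ZMod 3 :=
  fun p => (if p = a then 1 else 0) - (if p = b then 1 else 0)

lemma dvec_sum {m : ℕ} (a b : Fin m) : ∑ p, dvec a b p = 0 := by
  simp [dvec, Finset.sum_sub_distrib, Finset.sum_ite_eq']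

lemma dot_delta {m : ℕ} (w : Fin m → ZMod 3) (a b : Fin m) :
    w ⬝ᵥ dvec a b = w a - w b := by
  simp [dvec, dotProduct, mul_sub, mul_ite, mul_one, mul_zero, Finset.sum_sub_distrib,
    Finset.sum_ite_eq']

def lam (n : ℕ) : ZMod 3 := (n : ZMod 3) + 1

def Amat (n : ℕ) : Matrix (Fin n) (Fin (n+1)) (ZMod 3) :=
  Matrix.of fun r j => if j = 0 then -(lam n) else if j = r.succ then 2 else 1

lemma Amat_mulVec {n : ℕ} (x : Fin (n+1) → ZMod 3) (r : Fin n) :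
    (Amat n).mulVec x r = x r.succ + ((∑ j : Fin n, x j.succ) - lam n * x 0) := by
  rw [show (Amat n).mulVec x r = ∑ j, Amat n r j * x j from rfl, Fin.sum_univ_succ]
  have h0 : Amat n r 0 = -(lam n) := by simp [Amat]
  have hs : ∀ j : Fin n, Amat n r j.succ = if j = r then 2 else 1 := by
    intro j; simp [Amat, Fin.succ_ne_zero, Fin.succ_inj]
  rw [h0, Finset.sum_congr rfl fun j _ => by rw [hs j]]
  have hexp : ∀ j : Fin n, (if j = r then (2:ZMod 3) else 1) * x j.succ
      = x j.succ + (if j = r then x j.succ else 0) := by intro j; split <;> ring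
  rw [Finset.sum_congr rfl fun j _ => hexp j, Finset.sum_add_distrib,
    Finset.sum_ite_eq' Finset.univ r (fun j => x j.succ), if_pos (Finset.mem_univ r)]
  ring

lemma AmatT_zero {n : ℕ} (w : Fin n → ZMod 3) :
    (Amat n)ᵀ.mulVec w 0 = -(lam n) * ∑ r, w r := by
  rw [show (Amat n)ᵀ.mulVec w 0 = ∑ r, Amat n r 0 * w r from rfl]
  rw [Finset.sum_congr rfl fun r _ => by rw [show Amat n r 0 = -(lam n) by simp [Amat]]]
  rw [← Finset.mul_sum]

lemma AmatT_succ {n : ℕ} (w : Fin n → ZMod 3) (p : Fin n) :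
    (Amat n)ᵀ.mulVec w p.succ = w p + ∑ r, w r := by
  rw [show (Amat n)ᵀ.mulVec w p.succ = ∑ r, Amat n r p.succ * w r from rfl]
  have hs : ∀ r : Fin n, Amat n r p.succ = if p = r then 2 else 1 := by
    intro r; simp [Amat, Fin.succ_ne_zero, Fin.succ_inj, eq_comm]
  rw [Finset.sum_congr rfl fun r _ => by rw [hs r]]
  have hexp : ∀ r : Fin n, (if p = r then (2:ZMod 3) else 1) * w r
      = w r + (if p = r then w r else 0) := by intro r; split <;> ring
  rw [Finset.sum_congr rfl fun r _ => hexp r, Finset.sum_add_distrib,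
    Finset.sum_ite_eq Finset.univ p w, if_pos (Finset.mem_univ p)]
  ring

lemma sum_succ_eq {n : ℕ} (x : Fin (n+1) → ZMod 3) (hx : ∑ i, x i = 0) :
    (∑ j : Fin n, x j.succ) = - x 0 := by
  rw [Fin.sum_univ_succ] at hx; linear_combination hx

lemma cast_n {n : ℕ} : ((n : ℕ) : ZMod 3) = lam n - 1 := by unfold lam; ring

lemma key1 {n : ℕ} (hl : lam n * lam n = lam n) (x y : Fin (n+1) → ZMod 3)
    (hx : ∑ i, x i = 0) (hy : ∑ i, y i = 0) :
    (Amat n).mulVec x ⬝ᵥ (Amat n).mulVec y = x ⬝ᵥ y := by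
  have hx' := sum_succ_eq x hx
  have hy' := sum_succ_eq y hy
  have lhs : (Amat n).mulVec x ⬝ᵥ (Amat n).mulVec y
      = ∑ r : Fin n, (x r.succ + (- x 0 - lam n * x 0)) * (y r.succ + (- y 0 - lam n * y 0)) := by
    rw [show (Amat n).mulVec x ⬝ᵥ (Amat n).mulVec y
      = ∑ r : Fin n, (Amat n).mulVec x r * (Amat n).mulVec y r from rfl]
    refine Finset.sum_congr rfl fun r _ => ?_
    rw [Amat_mulVec, Amat_mulVec, hx', hy']
  rw [lhs]
  have hexp : ∀ r : Fin n, (x r.succ + (- x 0 - lam n * x 0)) * (y r.succ + (- y 0 - lam n * y 0))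
      = x r.succ * y r.succ + ((- y 0 - lam n * y 0) * x r.succ
        + ((- x 0 - lam n * x 0) * y r.succ + (- x 0 - lam n * x 0) * (- y 0 - lam n * y 0))) :=
    fun r => by ring
  rw [Finset.sum_congr rfl fun r _ => hexp r, Finset.sum_add_distrib, Finset.sum_add_distrib,
    Finset.sum_add_distrib, ← Finset.mul_sum, ← Finset.mul_sum, hx', hy',
    Finset.sum_const, Finset.card_univ, Fintype.card_fin, nsmul_eq_mul, cast_n]
  rw [show x ⬝ᵥ y = x 0 * y 0 + ∑ r : Fin n, x r.succ * y r.succ from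
    (Fin.sum_univ_succ (fun i => x i * y i))]
  set S := ∑ r : Fin n, x r.succ * y r.succ with hS
  set X := x 0 with hX
  set Y := y 0 with hY
  set l := lam n with hldef
  clear_value S X Y l
  clear hS hX hY hldef hx' hy' lhs hexp hx hy x y
  revert hl
  revert S X Y l
  decide

lemma key2 {n : ℕ} (hl : lam n * lam n = lam n) (x : Fin (n+1) → ZMod 3)
    (hx : ∑ i, x i = 0) :
    (Amat n)ᵀ.mulVec ((Amat n).mulVec x)
      = x + ((lam n - 1) * x 0) • (fun _ => (1:ZMod 3)) := by
  have hx' := sum_succ_eq x hx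
  have hsum : ∑ r : Fin n, (Amat n).mulVec x r
      = - x 0 + (lam n - 1) * (- x 0 - lam n * x 0) := by
    rw [Finset.sum_congr rfl fun r _ => by rw [Amat_mulVec, hx']]
    rw [Finset.sum_add_distrib, hx', Finset.sum_const, Finset.card_univ, Fintype.card_fin,
      nsmul_eq_mul, cast_n]
  funext j
  refine Fin.cases ?_ ?_ j
  · rw [AmatT_zero, hsum]
    simp only [Pi.add_apply, Pi.smul_apply, smul_eq_mul, mul_one]
    set X := x 0 with hX
    set l := lam n with hldef
    clear_value X l
    clear hX hldef hx' hsum hx x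
    revert hl
    revert X l
    decide
  · intro p
    rw [AmatT_succ, Amat_mulVec, hx', hsum]
    simp only [Pi.add_apply, Pi.smul_apply, smul_eq_mul, mul_one]
    set X := x 0 with hX
    set T := x p.succ with hT
    set l := lam n with hldef
    clear_value X T l
    clear hX hT hldef hx' hsum hx x
    revert hl
    revert X T l
    decide

def NA (n : ℕ) : (Fin (n+1) → ZMod 3) →ₗ[ZMod 3] (Fin n → ZMod 3) :=
  Matrix.mulVecLin (Amat n)

def NT (n : ℕ) : (Fin n → ZMod 3) →ₗ[ZMod 3] (Fin (n+1) → ZMod 3) :=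
  Matrix.mulVecLin (Amat n)ᵀ

def Pl (n : ℕ) (σ : Equiv.Perm (Fin (n+1))) :
    (Fin (n+1) → ZMod 3) →ₗ[ZMod 3] (Fin (n+1) → ZMod 3) :=
  LinearMap.funLeft (ZMod 3) (ZMod 3) ⇑σ⁻¹

def Lmap (n : ℕ) (σ : Equiv.Perm (Fin (n+1))) :
    (Fin n → ZMod 3) →ₗ[ZMod 3] (Fin n → ZMod 3) :=
  LinearMap.id + (NA n) ∘ₗ (Pl n σ - LinearMap.id) ∘ₗ (NT n)

lemma Lmap_apply {n : ℕ} (σ : Equiv.Perm (Fin (n+1))) (x : Fin n → ZMod 3) :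
    Lmap n σ x = x + (Amat n).mulVec
      ((fun i => ((Amat n)ᵀ.mulVec x) (σ⁻¹ i)) - (Amat n)ᵀ.mulVec x) := by
  simp only [Lmap, LinearMap.add_apply, LinearMap.comp_apply, LinearMap.sub_apply,
    LinearMap.id_apply, Matrix.mulVecLin_apply, NA, NT, Pl]
  rfl

lemma Lmul {n : ℕ} (hl : lam n * lam n = lam n) (σ τ : Equiv.Perm (Fin (n+1))) :
    (Lmap n σ).comp (Lmap n τ) = Lmap n (σ * τ) := by
  apply LinearMap.ext; intro x
  obtain ⟨y, hy⟩ : ∃ y, (Amat n)ᵀ.mulVec x = y := ⟨_, rfl⟩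
  rw [LinearMap.comp_apply, Lmap_apply, Lmap_apply, Lmap_apply, hy]
  obtain ⟨z, hz⟩ : ∃ z, (fun i => y (τ⁻¹ i)) - y = z := ⟨_, rfl⟩
  rw [hz]
  have hzs : ∑ i, z i = 0 := by
    rw [← hz]; simp only [Pi.sub_apply]
    rw [Finset.sum_sub_distrib, Equiv.sum_comp τ⁻¹ y, sub_self]
  obtain ⟨c, hc⟩ : ∃ c : ZMod 3, (lam n - 1) * z 0 = c := ⟨_, rfl⟩
  have hNT : (Amat n)ᵀ.mulVec (x + (Amat n).mulVec z)
      = y + (z + c • (fun _ => (1:ZMod 3))) := by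
    rw [Matrix.mulVec_add, hy, key2 hl z hzs, hc]
  rw [hNT]
  obtain ⟨w', hw'⟩ : ∃ w', y + (z + c • (fun _ => (1:ZMod 3))) = w' := ⟨_, rfl⟩
  rw [hw']
  have hsplit : ((fun i => w' (σ⁻¹ i)) - w')
      = ((fun i => y (σ⁻¹ i)) - y) + ((fun i => z (σ⁻¹ i)) - z) := by
    funext i
    simp only [Pi.add_apply, Pi.sub_apply]
    rw [← hw']
    simp only [Pi.add_apply, Pi.smul_apply, smul_eq_mul, mul_one, Pi.sub_apply]
    ring
  rw [hsplit, Matrix.mulVec_add]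
  have hcollect : z + (((fun i => y (σ⁻¹ i)) - y) + ((fun i => z (σ⁻¹ i)) - z))
      = (fun i => y ((σ * τ)⁻¹ i)) - y := by
    funext i
    simp only [Pi.add_apply, Pi.sub_apply]
    rw [← hz]
    simp only [Pi.sub_apply]
    rw [_root_.mul_inv_rev, Equiv.Perm.mul_apply]
    ring
  have hfin := congrArg (fun v => (Amat n).mulVec v) hcollect
  simp only [Matrix.mulVec_add] at hfin
  rw [add_assoc, hfin]

lemma Lone {n : ℕ} : Lmap n 1 = LinearMap.id := by
  apply LinearMap.ext; intro x
  rw [Lmap_apply]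
  simp

lemma vswap_norm {n : ℕ} (hl : lam n * lam n = lam n) (a b : Fin (n+1)) (hab : a ≠ b) :
    oForm n ((Amat n).mulVec (dvec a b)) ((Amat n).mulVec (dvec a b)) = 2 := by
  rw [oForm_eq_dot, key1 hl _ _ (dvec_sum a b) (dvec_sum a b), dot_delta]
  simp [dvec, hab, Ne.symm hab]
  decide

lemma Lmap_swap {n : ℕ} (hl : lam n * lam n = lam n) (a b : Fin (n+1)) (hab : a ≠ b)
    (w : Fin n → ZMod 3) :
    Lmap n (Equiv.swap a b) w
      = w - oForm n w ((Amat n).mulVec (dvec a b)) • ((Amat n).mulVec (dvec a b)) := by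
  rw [Lmap_apply]
  set y := (Amat n)ᵀ.mulVec w with hy
  have hPt : ((fun i => y ((Equiv.swap a b)⁻¹ i)) - y) = (-(y a - y b)) • dvec a b := by
    funext p
    rw [Equiv.swap_inv]
    simp only [Pi.sub_apply, Pi.smul_apply, smul_eq_mul, dvec]
    rcases eq_or_ne p a with rfl | hpa
    · rw [Equiv.swap_apply_left]
      rw [if_pos rfl, if_neg hab]
      ring
    · rcases eq_or_ne p b with rfl | hpb
      · rw [Equiv.swap_apply_right]
        rw [if_neg hpa, if_pos rfl]
        ring
      · rw [Equiv.swap_apply_of_ne_of_ne hpa hpb]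
        rw [if_neg hpa, if_neg hpb]
        ring
  rw [hPt, Matrix.mulVec_smul]
  have hc : y a - y b = oForm n w ((Amat n).mulVec (dvec a b)) := by
    rw [oForm_eq_dot, Matrix.dotProduct_mulVec, ← Matrix.mulVec_transpose, ← hy, dot_delta]
  rw [hc]
  rw [neg_smul, ← sub_eq_add_neg]

lemma Lmap_inj {n : ℕ} (hl : lam n * lam n = lam n) (hn : 3 ≤ n)
    (σ : Equiv.Perm (Fin (n+1))) (hσ : ∀ x, Lmap n σ x = x) : σ = 1 := by
  apply Equiv.ext
  intro i
  rw [Equiv.Perm.one_apply]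
  by_contra hne
  have hji : σ i ≠ i := hne
  set j := σ i with hj
  -- kernel step
  have h1 := hσ ((Amat n).mulVec (dvec i j))
  rw [Lmap_apply] at h1
  have h2 := add_eq_left.mp h1
  rw [key2 hl (dvec i j) (dvec_sum i j)] at h2
  obtain ⟨c, hc⟩ : ∃ c : ZMod 3, (lam n - 1) * dvec i j 0 = c := ⟨_, rfl⟩
  rw [hc] at h2
  obtain ⟨w', hw'⟩ : ∃ w', dvec i j + c • (fun _ => (1:ZMod 3)) = w' := ⟨_, rfl⟩
  rw [hw'] at h2
  have hsimpl : ((fun p => w' (σ⁻¹ p)) - w')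
      = ((fun p => dvec i j (σ⁻¹ p)) - dvec i j) := by
    funext p
    simp only [Pi.sub_apply]
    rw [← hw']
    simp only [Pi.add_apply, Pi.smul_apply, smul_eq_mul, mul_one, Pi.sub_apply]
    ring
  rw [hsimpl] at h2
  obtain ⟨z, hz⟩ : ∃ z, (fun p => dvec i j (σ⁻¹ p)) - dvec i j = z := ⟨_, rfl⟩
  rw [hz] at h2
  have hzs : ∑ p, z p = 0 := by
    rw [← hz]; simp only [Pi.sub_apply]
    rw [Finset.sum_sub_distrib, Equiv.sum_comp σ⁻¹ (dvec i j), sub_self]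
  -- all coordinates of z are equal
  have hconst : ∀ p q, z p = z q := by
    intro p q
    have hk := key1 hl z (dvec p q) hzs (dvec_sum p q)
    rw [h2, zero_dotProduct] at hk
    have hd := dot_delta z p q
    rw [← hk] at hd
    exact sub_eq_zero.mp hd.symm
  -- compute coordinates of z
  have hvij : i ≠ j := fun h => hji h.symm
  have hdi : dvec i j i = 1 := by simp [dvec, hvij]
  have hdj : dvec i j j = -1 := by simp [dvec, hji]
  have hinvj : σ⁻¹ j = i := by rw [hj]; exact σ.symm_apply_apply i
  have hzj : z j = 2 := by
    rw [← hz]; simp only [Pi.sub_apply]; rw [hinvj, hdi, hdj]; decide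
  rcases eq_or_ne (σ j) i with hc | hc
  · have hinvi : σ⁻¹ i = j := by rw [← hc]; exact σ.symm_apply_apply j
    have hzi : z i = 1 := by
      rw [← hz]; simp only [Pi.sub_apply]; rw [hinvi, hdj, hdi]; decide
    have := hconst j i
    rw [hzj, hzi] at this
    exact absurd this (by decide)
  · have hex : ∃ k : Fin (n+1), k ∉ ({i, j, σ j} : Finset (Fin (n+1))) := by
      by_contra hk
      push_neg at hk
      have hsub : (Finset.univ : Finset (Fin (n+1))) ⊆ {i, j, σ j} := fun k _ => hk k
      have hcard := Finset.card_le_card hsub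
      rw [Finset.card_univ, Fintype.card_fin] at hcard
      have h3 : ({i, j, σ j} : Finset (Fin (n+1))).card ≤ 3 := by
        apply le_trans (Finset.card_insert_le _ _)
        have h4 := Finset.card_insert_le j ({σ j} : Finset (Fin (n+1)))
        simp only [Finset.card_singleton] at h4
        omega
      omega
    obtain ⟨k, hk⟩ := hex
    simp only [Finset.mem_insert, Finset.mem_singleton, not_or] at hk
    obtain ⟨hki, hkj, hkσj⟩ := hk
    have hinvk1 : σ⁻¹ k ≠ i := by
      intro h
      rw [Equiv.Perm.inv_eq_iff_eq] at h
      exact hkj (h.trans hj.symm)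
    have hinvk2 : σ⁻¹ k ≠ j := by
      intro h
      rw [Equiv.Perm.inv_eq_iff_eq] at h
      exact hkσj h
    have hzk : z k = 0 := by
      rw [← hz]; simp only [Pi.sub_apply]
      rw [show dvec i j (σ⁻¹ k) = 0 by simp [dvec, show σ.symm k ≠ i from hinvk1, show σ.symm k ≠ j from hinvk2],
        show dvec i j k = 0 by simp [dvec, hki, hkj]]
      decide
    have := hconst j k
    rw [hzj, hzk] at this
    exact absurd this (by decide)

theorem part_a (n : ℕ) (hn : 3 ≤ n) (hmod : n % 3 ≠ 1) :
    ∃ ψ : Equiv.Perm (Fin (n + 1)) →* ((Fin n → ZMod 3) ≃ₗ[ZMod 3] (Fin n → ZMod 3)),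
      Function.Injective ψ ∧
      ∀ τ : Equiv.Perm (Fin (n + 1)), τ.IsSwap →
        ∃ v : Fin n → ZMod 3, oForm n v v = 2 ∧
          ∀ w, (ψ τ) w = w - oForm n w v • v := by
  have hl : lam n * lam n = lam n := by
    have h1 := cast_ne_one hmod
    unfold lam
    revert h1
    generalize (n : ZMod 3) = μ
    revert μ
    decide
  have hLinv : ∀ σ : Equiv.Perm (Fin (n+1)),
      (Lmap n σ).comp (Lmap n σ⁻¹) = LinearMap.id := fun σ => by
    rw [Lmul hl, mul_inv_cancel, Lone]
  have hLinv' : ∀ σ : Equiv.Perm (Fin (n+1)),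
      (Lmap n σ⁻¹).comp (Lmap n σ) = LinearMap.id := fun σ => by
    rw [Lmul hl, inv_mul_cancel, Lone]
  set F : Equiv.Perm (Fin (n+1)) → ((Fin n → ZMod 3) ≃ₗ[ZMod 3] (Fin n → ZMod 3)) :=
    fun σ => LinearEquiv.ofLinear (Lmap n σ) (Lmap n σ⁻¹) (hLinv σ) (hLinv' σ) with hF
  have hFapp : ∀ σ x, F σ x = Lmap n σ x := fun σ x => rfl
  have hFmul : ∀ σ τ, F (σ * τ) = F σ * F τ := by
    intro σ τ
    apply DFunLike.ext
    intro x
    have h1 : (F σ * F τ) x = F σ (F τ x) := rfl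
    rw [h1, hFapp, hFapp, hFapp, ← Lmul hl]
    rfl
  refine ⟨MonoidHom.mk' F hFmul, ?_, ?_⟩
  · rw [injective_iff_map_eq_one]
    intro σ hσ1
    apply Lmap_inj hl hn σ
    intro x
    have h3 : F σ = 1 := hσ1
    have h2 : F σ x = x := by rw [h3]; rfl
    rw [hFapp] at h2
    exact h2
  · rintro τ ⟨a, b, hab, rfl⟩
    refine ⟨(Amat n).mulVec (dvec a b), vswap_norm hl a b hab, fun w => ?_⟩
    have h3 : (MonoidHom.mk' F hFmul) (Equiv.swap a b) w = Lmap n (Equiv.swap a b) w := rfl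
    rw [h3]
    exact Lmap_swap hl a b hab w

end PhiAux


/-- φ(O_n^{+,+}(3)) = n + 1 when n ≢ 1 (mod 3): S_{n+1} embeds with transpositions going to reflections t_v with B(v,v) = 2, while S_{n+2} does not. -/
theorem phi_O_plus_plus_3_not_mod_one (n : ℕ) (hn : 3 ≤ n) (hmod : n % 3 ≠ 1) :
    (∃ ψ : Equiv.Perm (Fin (n + 1)) →* ((Fin n → ZMod 3) ≃ₗ[ZMod 3] (Fin n → ZMod 3)),
      Function.Injective ψ ∧
      ∀ τ : Equiv.Perm (Fin (n + 1)), τ.IsSwap →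
        ∃ v : Fin n → ZMod 3, oForm n v v = 2 ∧
          ∀ w, (ψ τ) w = w - oForm n w v • v) ∧
    ¬ (∃ ψ : Equiv.Perm (Fin (n + 2)) →* ((Fin n → ZMod 3) ≃ₗ[ZMod 3] (Fin n → ZMod 3)),
      Function.Injective ψ ∧
      ∀ τ : Equiv.Perm (Fin (n + 2)), τ.IsSwap →
        ∃ v : Fin n → ZMod 3, oForm n v v = 2 ∧
          ∀ w, (ψ τ) w = w - oForm n w v • v) :=
  ⟨PhiAux.part_a n hn hmod, PhiAux.part_b n hn hmod⟩
end

section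
/- Let n ≥ 6 be even with n ≡ 6 (mod 8), and let V = (Fin n → ZMod 2) with the plus-type quadratic form Q(x) = Σ_{i=1}^{n/2} x_{2i−1} x_{2i} and its polar bilinear form B(x,y) = Q(x+y) + Q(x) + Q(y). Then: (a) there exists an injective group homomorphism ψ from the symmetric group S_{n+2} to the group of linear automorphisms of V such that for every transposition τ ∈ S_{n+2}, ψ(τ) is an orthogonal transvection t_v for some v ∈ V with Q(v) = 1; and (b) there is no injective group homomorphism from S_{n+3} to the linear automorphisms of V sending every transposition to such a transvection. (Equivalently, φ(O_n^{+}(2)) = n+2 when n ≡ 6 (mod 8).) -/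
/-- The plus-type quadratic form on `(ZMod 2)^n` (`n` even):
`Q x = ∑ i, x (2i) * x (2i+1)` (0-indexed). -/
def Qform (n : ℕ) (x : Fin n → ZMod 2) : ZMod 2 :=
  ∑ i : Fin (n / 2),
    x ⟨2 * i.1, by have := i.2; omega⟩ * x ⟨2 * i.1 + 1, by have := i.2; omega⟩

/-- The polar bilinear form `B x y = Q (x + y) + Q x + Q y` of a quadratic form `Q`. -/
def polarForm {n : ℕ} (Q : (Fin n → ZMod 2) → ZMod 2) (x y : Fin n → ZMod 2) : ZMod 2 :=
  Q (x + y) + Q x + Q y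

namespace PhiO

/-- The polar form as an explicit sum. -/
def Bf (n : ℕ) (x y : Fin n → ZMod 2) : ZMod 2 :=
  ∑ i : Fin (n / 2),
    (x ⟨2 * i.1, by have := i.2; omega⟩ * y ⟨2 * i.1 + 1, by have := i.2; omega⟩ +
     x ⟨2 * i.1 + 1, by have := i.2; omega⟩ * y ⟨2 * i.1, by have := i.2; omega⟩)

lemma polarForm_eq (n : ℕ) (x y : Fin n → ZMod 2) :
    polarForm (Qform n) x y = Bf n x y := by
  unfold polarForm Qform Bf
  rw [← Finset.sum_add_distrib, ← Finset.sum_add_distrib]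
  refine Finset.sum_congr rfl fun i _ => ?_
  simp only [Pi.add_apply]
  have : ∀ a b c d : ZMod 2, (a + c) * (b + d) + a * b + c * d = a * d + b * c := by decide
  exact this _ _ _ _

lemma Qform_add (n : ℕ) (x y : Fin n → ZMod 2) :
    Qform n (x + y) = Qform n x + Qform n y + Bf n x y := by
  have h := polarForm_eq n x y
  unfold polarForm at h
  have : ∀ a b c d : ZMod 2, a + b + c = d → a = b + c + d := by decide
  exact this _ _ _ _ h

lemma Qform_zero (n : ℕ) : Qform n 0 = 0 := by
  unfold Qform; simp

lemma Bf_comm (n : ℕ) (x y : Fin n → ZMod 2) : Bf n x y = Bf n y x := by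
  unfold Bf
  refine Finset.sum_congr rfl fun i _ => ?_
  ring

lemma Bf_self (n : ℕ) (x : Fin n → ZMod 2) : Bf n x x = 0 := by
  unfold Bf
  refine Finset.sum_eq_zero fun i _ => ?_
  have : ∀ a b : ZMod 2, a * b + b * a = 0 := by decide
  exact this _ _

/-- `Bf` as a bilinear map. -/
def BL (n : ℕ) : (Fin n → ZMod 2) →ₗ[ZMod 2] (Fin n → ZMod 2) →ₗ[ZMod 2] ZMod 2 :=
  LinearMap.mk₂ (ZMod 2) (Bf n)
    (fun x x' y => by
      unfold Bf; rw [← Finset.sum_add_distrib]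
      refine Finset.sum_congr rfl fun i _ => ?_
      simp only [Pi.add_apply]; ring)
    (fun c x y => by
      unfold Bf; rw [Finset.smul_sum]
      refine Finset.sum_congr rfl fun i _ => ?_
      simp only [Pi.smul_apply, smul_eq_mul]; ring)
    (fun x y y' => by
      unfold Bf; rw [← Finset.sum_add_distrib]
      refine Finset.sum_congr rfl fun i _ => ?_
      simp only [Pi.add_apply]; ring)
    (fun c x y => by
      unfold Bf; rw [Finset.smul_sum]
      refine Finset.sum_congr rfl fun i _ => ?_
      simp only [Pi.smul_apply, smul_eq_mul]; ring)

@[simp] lemma BL_apply (n : ℕ) (x y : Fin n → ZMod 2) : BL n x y = Bf n x y := rfl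

lemma addV_self {n : ℕ} (x : Fin n → ZMod 2) : x + x = 0 := by
  funext j; exact CharTwo.add_self_eq_zero _

lemma Bf_single_even (n : ℕ) (l : ℕ) (hl : l < n / 2) (x : Fin n → ZMod 2) :
    Bf n (Pi.single (⟨2 * l, by omega⟩ : Fin n) 1) x = x ⟨2 * l + 1, by omega⟩ := by
  unfold Bf
  rw [Finset.sum_eq_single_of_mem (⟨l, hl⟩ : Fin (n / 2)) (Finset.mem_univ _)]
  · rw [Pi.single_apply, Pi.single_apply, if_pos (by simp), if_neg (by simp [Fin.ext_iff])]
    ring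
  · intro i _ hi
    have hil : i.1 ≠ l := fun h => hi (Fin.ext h)
    rw [Pi.single_apply, Pi.single_apply,
      if_neg (by simp [Fin.ext_iff]; omega), if_neg (by simp [Fin.ext_iff]; omega)]
    ring

lemma Bf_single_odd (n : ℕ) (l : ℕ) (hl : l < n / 2) (x : Fin n → ZMod 2) :
    Bf n (Pi.single (⟨2 * l + 1, by omega⟩ : Fin n) 1) x = x ⟨2 * l, by omega⟩ := by
  unfold Bf
  rw [Finset.sum_eq_single_of_mem (⟨l, hl⟩ : Fin (n / 2)) (Finset.mem_univ _)]
  · rw [Pi.single_apply, Pi.single_apply, if_neg (by simp [Fin.ext_iff]), if_pos (by simp)]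
    ring
  · intro i _ hi
    have hil : i.1 ≠ l := fun h => hi (Fin.ext h)
    rw [Pi.single_apply, Pi.single_apply,
      if_neg (by simp [Fin.ext_iff]; omega), if_neg (by simp [Fin.ext_iff]; omega)]
    ring

/-- Nondegeneracy of `Bf`. -/
lemma Bf_exists_one (n : ℕ) (hn : n % 2 = 0) {x : Fin n → ZMod 2} (hx : x ≠ 0) :
    ∃ w, Bf n w x = 1 := by
  have : ∃ j, x j ≠ 0 := by
    by_contra h
    push_neg at h
    exact hx (funext fun j => h j)
  obtain ⟨j, hj⟩ := this
  have hj1 : x j = 1 := by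
    revert hj; generalize x j = a; revert a; decide
  have hl : j.1 / 2 < n / 2 := by have := j.2; omega
  
  rcases Nat.mod_two_eq_zero_or_one j.1 with h | h
  · refine ⟨Pi.single (⟨2 * (j.1 / 2) + 1, by have := j.2; omega⟩ : Fin n) 1, ?_⟩
    rw [Bf_single_odd n (j.1/2) hl x]
    rw [show (⟨2 * (j.1/2), by have := j.2; omega⟩ : Fin n) = j from Fin.ext (by simp; omega)]
    exact hj1
  · refine ⟨Pi.single (⟨2 * (j.1 / 2), by have := j.2; omega⟩ : Fin n) 1, ?_⟩
    rw [Bf_single_even n (j.1/2) hl x]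
    rw [show (⟨2 * (j.1/2) + 1, by have := j.2; omega⟩ : Fin n) = j from Fin.ext (by simp; omega)]
    exact hj1



/-! ### The frame vectors -/

/-- The `n` frame vectors: `Q c_i = 1`, `Bf c_i c_j = 1` for `i ≠ j`. -/
def cvec (n : ℕ) (i : Fin n) : Fin n → ZMod 2 := fun j =>
  if j.1 / 2 = i.1 / 2 then (if j.1 % 2 = i.1 % 2 then 0 else 1)
  else if (j.1 / 2 + n / 2 - i.1 / 2) % (n / 2) ≤ (n / 2 - 1) / 2 then 1 else 0

lemma Dval (m k l : ℕ) (hk : k < m) (hl : l < m) :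
    (l + m - k) % m = if k ≤ l then l - k else l + m - k := by
  by_cases h : k ≤ l
  · rw [if_pos h, show l + m - k = m + (l - k) by omega, Nat.add_mod_left,
      Nat.mod_eq_of_lt (by omega)]
  · rw [if_neg h, Nat.mod_eq_of_lt (by omega)]

lemma card_D (m k h : ℕ) (hm : m = 2 * h + 1) (hk : k < m) :
    ((Finset.range m).filter
      (fun l => ¬ l = k ∧ (l + m - k) % m ≤ h)).card = h := by
  have hset : (Finset.range m).filter (fun l => ¬ l = k ∧ (l + m - k) % m ≤ h) =
      (Finset.Ioc k (min (k + h) (m - 1))) ∪ (Finset.range (k + h + 1 - m)) := by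
    apply Finset.ext
    intro l
    simp only [Finset.mem_filter, Finset.mem_range, Finset.mem_union, Finset.mem_Ioc,
      lt_min_iff, le_min_iff]
    constructor
    · rintro ⟨hlm, hne, hD⟩
      rw [Dval m k l hk hlm] at hD
      by_cases hkl : k ≤ l
      · rw [if_pos hkl] at hD; left; omega
      · rw [if_neg hkl] at hD; right; omega
    · intro hcase
      have hlm : l < m := by rcases hcase with h1 | h1 <;> omega
      refine ⟨hlm, ?_, ?_⟩
      · rcases hcase with h1 | h1 <;> omega
      · rw [Dval m k l hk hlm]
        by_cases hkl : k ≤ l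
        · rw [if_pos hkl]; rcases hcase with h1 | h1 <;> omega
        · rw [if_neg hkl]; rcases hcase with h1 | h1 <;> omega
  rw [hset, Finset.card_union_of_disjoint, Nat.card_Ioc, Finset.card_range]
  · omega
  · rw [Finset.disjoint_left]
    intro l hl1 hl2
    simp only [Finset.mem_Ioc] at hl1
    simp only [Finset.mem_range] at hl2
    omega

lemma natCast_zmod2 (a : ℕ) : (a : ZMod 2) = if a % 2 = 1 then 1 else 0 := by
  rw [← ZMod.natCast_mod a 2]
  rcases Nat.mod_two_eq_zero_or_one a with h | h <;> simp [h]

section frame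
variable {n : ℕ} (hmod : n % 8 = 6)

include hmod

lemma Q_cvec (i : Fin n) : Qform n (cvec n i) = 1 := by
  have hi := i.2
  unfold Qform
  have step : ∀ l : Fin (n / 2),
      cvec n i ⟨2 * l.1, by have := l.2; omega⟩ * cvec n i ⟨2 * l.1 + 1, by have := l.2; omega⟩
      = if ¬ l.1 = i.1 / 2 ∧ (l.1 + n / 2 - i.1 / 2) % (n / 2) ≤ (n / 2 - 1) / 2
        then 1 else 0 := by
    intro l
    unfold cvec
    have e1 : (2 * l.1) / 2 = l.1 := by omega
    have e2 : (2 * l.1) % 2 = 0 := by omega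
    have e3 : (2 * l.1 + 1) / 2 = l.1 := by omega
    have e4 : (2 * l.1 + 1) % 2 = 1 := by omega
    simp only [e1, e2, e3, e4]
    split_ifs <;> first | rfl | decide | (exfalso; omega)
  rw [Finset.sum_congr rfl (fun l _ => step l)]
  rw [Fin.sum_univ_eq_sum_range
    (fun l => if ¬ l = i.1 / 2 ∧ (l + n / 2 - i.1 / 2) % (n / 2) ≤ (n / 2 - 1) / 2
      then (1 : ZMod 2) else 0) (n / 2)]
  rw [Finset.sum_boole, card_D (n / 2) (i.1 / 2) ((n / 2 - 1) / 2) (by omega) (by omega),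
    natCast_zmod2, if_pos (by omega)]

lemma B_cvec {i j : Fin n} (hij : i ≠ j) : Bf n (cvec n i) (cvec n j) = 1 := by
  have hi := i.2
  have hj := j.2
  unfold Bf
  by_cases hkk : i.1 / 2 = j.1 / 2
  · -- same block, different parity
    have hpar : i.1 % 2 ≠ j.1 % 2 := by
      intro hp
      exact hij (Fin.ext (by omega))
    have step : ∀ l : Fin (n / 2),
        (cvec n i ⟨2 * l.1, by have := l.2; omega⟩ * cvec n j ⟨2 * l.1 + 1, by have := l.2; omega⟩ +
         cvec n i ⟨2 * l.1 + 1, by have := l.2; omega⟩ * cvec n j ⟨2 * l.1, by have := l.2; omega⟩)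
        = if l.1 = i.1 / 2 then 1 else 0 := by
      intro l
      unfold cvec
      have e1 : (2 * l.1) / 2 = l.1 := by omega
      have e2 : (2 * l.1) % 2 = 0 := by omega
      have e3 : (2 * l.1 + 1) / 2 = l.1 := by omega
      have e4 : (2 * l.1 + 1) % 2 = 1 := by omega
      simp only [e1, e2, e3, e4]
      split_ifs <;> first | rfl | decide | (exfalso; omega)
    rw [Finset.sum_congr rfl (fun l _ => step l)]
    rw [Fin.sum_univ_eq_sum_range (fun l => if l = i.1 / 2 then (1 : ZMod 2) else 0) (n / 2)]
    rw [Finset.sum_ite_eq' (Finset.range (n / 2)) (i.1 / 2) (fun _ => (1 : ZMod 2)),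
      if_pos (Finset.mem_range.mpr (by omega))]
  · -- different blocks
    have step : ∀ l : Fin (n / 2),
        (cvec n i ⟨2 * l.1, by have := l.2; omega⟩ * cvec n j ⟨2 * l.1 + 1, by have := l.2; omega⟩ +
         cvec n i ⟨2 * l.1 + 1, by have := l.2; omega⟩ * cvec n j ⟨2 * l.1, by have := l.2; omega⟩)
        = (if l.1 = i.1 / 2 then
             (if (l.1 + n / 2 - j.1 / 2) % (n / 2) ≤ (n / 2 - 1) / 2 then 1 else 0) else 0) +
          (if l.1 = j.1 / 2 then
             (if (l.1 + n / 2 - i.1 / 2) % (n / 2) ≤ (n / 2 - 1) / 2 then 1 else 0) else 0) := by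
      intro l
      unfold cvec
      have e1 : (2 * l.1) / 2 = l.1 := by omega
      have e2 : (2 * l.1) % 2 = 0 := by omega
      have e3 : (2 * l.1 + 1) / 2 = l.1 := by omega
      have e4 : (2 * l.1 + 1) % 2 = 1 := by omega
      simp only [e1, e2, e3, e4]
      split_ifs <;> first | rfl | decide | (exfalso; omega)
    rw [Finset.sum_congr rfl (fun l _ => step l)]
    rw [Fin.sum_univ_eq_sum_range (fun l =>
      (if l = i.1 / 2 then
         (if (l + n / 2 - j.1 / 2) % (n / 2) ≤ (n / 2 - 1) / 2 then (1 : ZMod 2) else 0) else 0) +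
      (if l = j.1 / 2 then
         (if (l + n / 2 - i.1 / 2) % (n / 2) ≤ (n / 2 - 1) / 2 then (1 : ZMod 2) else 0) else 0)) (n / 2)]
    rw [Finset.sum_add_distrib,
      Finset.sum_ite_eq' (Finset.range (n / 2)) (i.1 / 2)
        (fun l => (if (l + n / 2 - j.1 / 2) % (n / 2) ≤ (n / 2 - 1) / 2 then (1 : ZMod 2) else 0)),
      Finset.sum_ite_eq' (Finset.range (n / 2)) (j.1 / 2)
        (fun l => (if (l + n / 2 - i.1 / 2) % (n / 2) ≤ (n / 2 - 1) / 2 then (1 : ZMod 2) else 0)),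
      if_pos (Finset.mem_range.mpr (by omega : i.1 / 2 < n / 2)),
      if_pos (Finset.mem_range.mpr (by omega : j.1 / 2 < n / 2)),
      Dval (n / 2) (j.1 / 2) (i.1 / 2) (by omega) (by omega),
      Dval (n / 2) (i.1 / 2) (j.1 / 2) (by omega) (by omega)]
    split_ifs <;> first | decide | (exfalso; omega)

/-- The sum of all frame vectors is the all-ones vector. -/
lemma sum_cvec : (∑ i : Fin n, cvec n i) = (fun _ => 1) := by
  funext j
  have hj := j.2
  have happ : (∑ i : Fin n, cvec n i) j = ∑ i : Fin n, cvec n i j := by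
    simp [Finset.sum_apply]
  rw [happ]
  have hrange : ∑ i : Fin n, cvec n i j
      = ∑ i ∈ Finset.range n, (fun i => if h : i < n then cvec n ⟨i, h⟩ j else 0) i := by
    rw [← Fin.sum_univ_eq_sum_range (fun i => if h : i < n then cvec n ⟨i, h⟩ j else 0) n]
    refine Finset.sum_congr rfl fun i _ => ?_
    rw [dif_pos i.2]
  rw [hrange]
  have pair : ∀ m : ℕ, 2 * m ≤ n →
      ∑ i ∈ Finset.range (2 * m), (fun i => if h : i < n then cvec n ⟨i, h⟩ j else 0) i
      = ∑ k ∈ Finset.range m, (if k = j.1 / 2 then (1 : ZMod 2) else 0) := by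
    intro m
    induction m with
    | zero => simp
    | succ m ih =>
      intro hm
      rw [show 2 * (m + 1) = (2 * m + 1) + 1 by ring, Finset.sum_range_succ,
        Finset.sum_range_succ, Finset.sum_range_succ, ih (by omega), add_assoc]
      congr 1
      rw [dif_pos (by omega : 2 * m + 1 < n), dif_pos (by omega : 2 * m < n)]
      unfold cvec
      have e1 : (2 * m) / 2 = m := by omega
      have e2 : (2 * m) % 2 = 0 := by omega
      have e3 : (2 * m + 1) / 2 = m := by omega
      have e4 : (2 * m + 1) % 2 = 1 := by omega
      simp only [e1, e2, e3, e4]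
      split_ifs <;> first | rfl | decide | (exfalso; omega)
  rw [show Finset.range n = Finset.range (2 * (n / 2)) from by congr 1; omega,
    pair (n / 2) (by omega)]
  rw [Finset.sum_ite_eq' (Finset.range (n / 2)) (j.1 / 2) (fun _ => (1 : ZMod 2)),
    if_pos (Finset.mem_range.mpr (by omega))]

/-- Q of the all-ones vector. -/
lemma Q_ones : Qform n (fun _ => 1) = 1 := by
  unfold Qform
  rw [Finset.sum_congr rfl (fun l _ => by norm_num : ∀ l ∈ Finset.univ,
    (1 : ZMod 2) * 1 = 1)]
  rw [Finset.sum_const, Finset.card_univ, Fintype.card_fin]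
  rw [show ((n / 2) • (1 : ZMod 2)) = ((n / 2 : ℕ) : ZMod 2) by simp]
  rw [natCast_zmod2, if_pos (by omega)]

end frame

lemma Bf_zero_left {n : ℕ} (x : Fin n → ZMod 2) : Bf n 0 x = 0 := by
  have : Bf n 0 x = BL n 0 x := rfl
  rw [this, map_zero]; rfl

lemma Bf_zero_right {n : ℕ} (x : Fin n → ZMod 2) : Bf n x 0 = 0 := by
  rw [Bf_comm]; exact Bf_zero_left x

lemma Bf_add_left {n : ℕ} (x y z : Fin n → ZMod 2) : Bf n (x + y) z = Bf n x z + Bf n y z := by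
  have : Bf n (x + y) z = BL n (x + y) z := rfl
  rw [this, map_add]; rfl

lemma Bf_add_right {n : ℕ} (x y z : Fin n → ZMod 2) : Bf n x (y + z) = Bf n x y + Bf n x z := by
  rw [Bf_comm, Bf_add_left, Bf_comm n z x, Bf_comm n y x]

lemma Bf_smul_left {n : ℕ} (c : ZMod 2) (x z : Fin n → ZMod 2) : Bf n (c • x) z = c * Bf n x z := by
  have : Bf n (c • x) z = BL n (c • x) z := rfl
  rw [this, map_smul]; rfl

/-- The `n+2` points of the frame: `cvec` for `i < n`, the all-ones vector for `i = n`,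
and `0` for `i = n+1`. -/
def avec (n : ℕ) (i : Fin (n + 2)) : Fin n → ZMod 2 :=
  if h : i.1 < n then cvec n ⟨i.1, h⟩ else if i.1 = n then (fun _ => 1) else 0

def last2 (n : ℕ) : Fin (n + 2) := ⟨n + 1, by omega⟩

def emb (n : ℕ) (i : Fin n) : Fin (n + 2) := ⟨i.1, by omega⟩

lemma avec_emb {n : ℕ} (i : Fin n) : avec n (emb n i) = cvec n i := by
  unfold avec emb
  rw [dif_pos i.2]

lemma avec_last (n : ℕ) : avec n (last2 n) = 0 := by
  unfold avec last2
  rw [dif_neg (show ¬ (n + 1 < n) by omega), if_neg (show ¬ (n + 1 = n) by omega)]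

lemma avec_of_eq_last {n : ℕ} {i : Fin (n + 2)} (h : i.1 = n + 1) : avec n i = 0 := by
  unfold avec
  rw [dif_neg (by omega), if_neg (by omega)]

lemma avec_of_lt {n : ℕ} {i : Fin (n + 2)} (h : i.1 < n) : avec n i = cvec n ⟨i.1, h⟩ := by
  unfold avec
  rw [dif_pos h]

lemma avec_of_eq_n {n : ℕ} {i : Fin (n + 2)} (h : i.1 = n) : avec n i = (fun _ => 1) := by
  unfold avec
  rw [dif_neg (by omega), if_pos h]

lemma B_cvec_ones {n : ℕ} (hmod : n % 8 = 6) (i : Fin n) :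
    Bf n (cvec n i) (fun _ => 1) = 1 := by
  have hs : (fun (_ : Fin n) => (1 : ZMod 2)) = ∑ j : Fin n, cvec n j := (sum_cvec hmod).symm
  rw [hs]
  have : Bf n (cvec n i) (∑ j : Fin n, cvec n j) = ∑ j : Fin n, Bf n (cvec n i) (cvec n j) := by
    have h1 : Bf n (cvec n i) (∑ j : Fin n, cvec n j) = BL n (cvec n i) (∑ j : Fin n, cvec n j) := rfl
    rw [h1, map_sum]
    rfl
  rw [this]
  have hterm : ∀ j : Fin n, Bf n (cvec n i) (cvec n j) = 1 + (if j = i then 1 else 0) := by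
    intro j
    by_cases h : j = i
    · rw [if_pos h, h, Bf_self]; decide
    · rw [if_neg h, B_cvec hmod (fun hh => h hh.symm)]; decide
  rw [Finset.sum_congr rfl (fun j _ => hterm j), Finset.sum_add_distrib,
    Finset.sum_ite_eq' Finset.univ i (fun _ => (1 : ZMod 2)), if_pos (Finset.mem_univ i),
    Finset.sum_const, Finset.card_univ, Fintype.card_fin]
  rw [show ((n • (1 : ZMod 2)) : ZMod 2) = ((n : ℕ) : ZMod 2) by simp]
  rw [natCast_zmod2, if_neg (by omega)]
  decide

lemma Q_avec {n : ℕ} (hmod : n % 8 = 6) (i : Fin (n + 2)) :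
    Qform n (avec n i) = if i.1 = n + 1 then 0 else 1 := by
  unfold avec
  by_cases h : i.1 < n
  · rw [dif_pos h, if_neg (by omega)]; exact Q_cvec hmod _
  · by_cases h2 : i.1 = n
    · rw [dif_neg h, if_pos h2, if_neg (by omega)]; exact Q_ones hmod
    · have : i.1 = n + 1 := by have := i.2; omega
      rw [dif_neg h, if_neg h2, if_pos this]; exact Qform_zero n

lemma B_avec {n : ℕ} (hmod : n % 8 = 6) {i j : Fin (n + 2)} (hij : i ≠ j) :
    Bf n (avec n i) (avec n j) = if i.1 = n + 1 ∨ j.1 = n + 1 then 0 else 1 := by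
  have hv : i.1 ≠ j.1 := fun h => hij (Fin.ext h)
  have hi2 := i.2
  have hj2 := j.2
  by_cases hc : i.1 = n + 1 ∨ j.1 = n + 1
  · rw [if_pos hc]
    rcases hc with hc | hc
    · rw [avec_of_eq_last hc, Bf_zero_left]
    · rw [avec_of_eq_last hc, Bf_zero_right]
  · rw [if_neg hc]
    push_neg at hc
    obtain ⟨hcn, hcj⟩ := hc
    by_cases hi : i.1 < n
    · by_cases hj : j.1 < n
      · rw [avec_of_lt hi, avec_of_lt hj]
        exact B_cvec hmod (by simp only [ne_eq, Fin.mk.injEq]; omega)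
      · rw [avec_of_lt hi, avec_of_eq_n (show j.1 = n by omega)]
        exact B_cvec_ones hmod _
    · by_cases hj : j.1 < n
      · rw [avec_of_eq_n (show i.1 = n by omega), avec_of_lt hj, Bf_comm]
        exact B_cvec_ones hmod _
      · exfalso; omega

lemma Q_avec_pair {n : ℕ} (hmod : n % 8 = 6) {i j : Fin (n + 2)} (hij : i ≠ j) :
    Qform n (avec n i + avec n j) = 1 := by
  have hv : i.1 ≠ j.1 := fun h => hij (Fin.ext h)
  have hi2 := i.2
  have hj2 := j.2
  rw [Qform_add, Q_avec hmod i, Q_avec hmod j, B_avec hmod hij]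
  split_ifs <;> first | decide | (exfalso; omega)

lemma li_cvec {n : ℕ} (hmod : n % 8 = 6) : LinearIndependent (ZMod 2) (cvec n) := by
  rw [Fintype.linearIndependent_iff]
  intro g hg
  have key : ∀ j : Fin n, g j = ∑ i : Fin n, g i := by
    intro j
    have h0 : Bf n (∑ i : Fin n, g i • cvec n i) (cvec n j) = 0 := by
      rw [hg]; exact Bf_zero_left _
    have hexp : Bf n (∑ i : Fin n, g i • cvec n i) (cvec n j)
        = ∑ i : Fin n, g i * Bf n (cvec n i) (cvec n j) := by
      have h1 : Bf n (∑ i : Fin n, g i • cvec n i) (cvec n j)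
          = BL n (∑ i : Fin n, g i • cvec n i) (cvec n j) := rfl
      rw [h1, map_sum, LinearMap.sum_apply]
      refine Finset.sum_congr rfl fun i _ => ?_
      rw [map_smul, LinearMap.smul_apply, smul_eq_mul, BL_apply]
    have hterm : ∀ i : Fin n, g i * Bf n (cvec n i) (cvec n j)
        = g i + (if i = j then g i else 0) := by
      intro i
      by_cases h : i = j
      · rw [if_pos h, h, Bf_self]
        have : ∀ a : ZMod 2, a * 0 = a + a := by decide
        exact this _
      · rw [if_neg h, B_cvec hmod h, mul_one, add_zero]
    rw [hexp, Finset.sum_congr rfl (fun i _ => hterm i), Finset.sum_add_distrib,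
      Finset.sum_ite_eq' Finset.univ j g, if_pos (Finset.mem_univ j)] at h0
    have : ∀ a b : ZMod 2, a + b = 0 → b = a := by decide
    exact this _ _ h0
  have hS : ∑ i : Fin n, g i = 0 := by
    have h1 : ∑ i : Fin n, g i = ∑ i : Fin n, ∑ k : Fin n, g k :=
      Finset.sum_congr rfl fun i _ => key i
    rw [Finset.sum_const, Finset.card_univ, Fintype.card_fin] at h1
    have h2 : ((n • (∑ k : Fin n, g k)) : ZMod 2) = ((n : ℕ) : ZMod 2) * ∑ k : Fin n, g k := by
      rw [nsmul_eq_mul]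
    rw [h1, h2, natCast_zmod2, if_neg (by omega), zero_mul]
  intro i
  rw [key i, hS]

noncomputable def basC {n : ℕ} (hmod : n % 8 = 6) : Module.Basis (Fin n) (ZMod 2) (Fin n → ZMod 2) :=
  letI : Nonempty (Fin n) := ⟨⟨0, by omega⟩⟩
  basisOfLinearIndependentOfCardEqFinrank (li_cvec hmod)
    (by simp [Module.finrank_fin_fun])

lemma basC_eq {n : ℕ} (hmod : n % 8 = 6) : ⇑(basC hmod) = cvec n := by
  unfold basC
  haveI : Nonempty (Fin n) := ⟨⟨0, by omega⟩⟩
  exact coe_basisOfLinearIndependentOfCardEqFinrank _ _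

lemma basC_avec {n : ℕ} (hmod : n % 8 = 6) (i : Fin n) :
    (basC hmod) i = avec n (emb n i) := by
  rw [avec_emb, basC_eq]

/-- The linear action of a permutation of the `n+2` frame points. -/
noncomputable def Tlin {n : ℕ} (hmod : n % 8 = 6) (σ : Equiv.Perm (Fin (n + 2))) :
    (Fin n → ZMod 2) →ₗ[ZMod 2] (Fin n → ZMod 2) :=
  (basC hmod).constr (ZMod 2) (fun i => avec n (σ (emb n i)) + avec n (σ (last2 n)))

lemma sum_avec {n : ℕ} (hmod : n % 8 = 6) : ∑ i : Fin (n + 2), avec n i = 0 := by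
  rw [Fin.sum_univ_castSucc (f := fun i : Fin (n + 2) => avec n i),
    Fin.sum_univ_castSucc (f := fun i : Fin (n + 1) => avec n i.castSucc)]
  have h1 : ∀ i : Fin n, avec n ((i.castSucc).castSucc) = cvec n i := by
    intro i
    have : ((i.castSucc).castSucc) = emb n i := by apply Fin.ext; simp [emb]
    rw [this, avec_emb]
  have h2 : avec n ((Fin.last n).castSucc) = (fun _ => 1) :=
    avec_of_eq_n (by simp)
  have h3 : avec n (Fin.last (n + 1)) = 0 :=
    avec_of_eq_last (by simp)
  rw [Finset.sum_congr rfl (fun i _ => h1 i), h2, h3, add_zero]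
  have hs : Finset.univ.sum (cvec n) = (fun (_ : Fin n) => (1 : ZMod 2)) := sum_cvec hmod
  rw [hs, addV_self]

lemma sum_avec_perm {n : ℕ} (hmod : n % 8 = 6) (σ : Equiv.Perm (Fin (n + 2))) :
    ∑ i : Fin (n + 2), avec n (σ i) = 0 := by
  rw [Equiv.sum_comp σ (fun i => avec n i)]
  exact sum_avec hmod

lemma sum_avec_perm_split {n : ℕ} (hmod : n % 8 = 6) (σ : Equiv.Perm (Fin (n + 2))) :
    ∑ i : Fin n, avec n (σ (emb n i))
      = avec n (σ ⟨n, by omega⟩) + avec n (σ (last2 n)) := by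
  have h0 := sum_avec_perm hmod σ
  rw [Fin.sum_univ_castSucc (f := fun i : Fin (n + 2) => avec n (σ i)),
    Fin.sum_univ_castSucc (f := fun i : Fin (n + 1) => avec n (σ i.castSucc))] at h0
  have h1 : ∀ i : Fin n, ((i.castSucc).castSucc) = emb n i := by
    intro i; apply Fin.ext; simp [emb]
  have h2 : ((Fin.last n).castSucc) = (⟨n, by omega⟩ : Fin (n + 2)) := by
    apply Fin.ext; simp
  have h3 : (Fin.last (n + 1)) = last2 n := by
    apply Fin.ext; simp [last2]
  rw [Finset.sum_congr rfl (fun i _ => by rw [h1 i]), h2, h3] at h0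
  have hA : ∀ x y z : Fin n → ZMod 2, x + y + z = 0 → x = y + z := by
    intro x y z hxyz
    calc x = x + ((y + z) + (y + z)) := by rw [addV_self, add_zero]
    _ = (x + y + z) + (y + z) := by ring
    _ = 0 + (y + z) := by rw [hxyz]
    _ = y + z := zero_add _
  exact hA _ _ _ h0

lemma T_avec {n : ℕ} (hmod : n % 8 = 6) (σ : Equiv.Perm (Fin (n + 2))) (i : Fin (n + 2)) :
    Tlin hmod σ (avec n i) = avec n (σ i) + avec n (σ (last2 n)) := by
  by_cases h : i.1 < n
  · have h1 : avec n i = (basC hmod) ⟨i.1, h⟩ := by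
      rw [basC_avec]
      congr 1
    have h2 : emb n (⟨i.1, h⟩ : Fin n) = i := Fin.ext rfl
    rw [h1]
    unfold Tlin
    rw [Module.Basis.constr_basis, h2]
  · by_cases h2 : i.1 = n
    · have hi : i = (⟨n, by omega⟩ : Fin (n + 2)) := Fin.ext h2
      have h3 : avec n i = ∑ k : Fin n, (basC hmod) k := by
        unfold avec
        rw [dif_neg h, if_pos h2]
        have hs : Finset.univ.sum (cvec n) = (fun (_ : Fin n) => (1 : ZMod 2)) := sum_cvec hmod
        rw [← hs]
        exact (Finset.sum_congr rfl fun k _ => by rw [basC_eq]).symm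
      rw [h3, map_sum]
      have hcb : ∀ k : Fin n, Tlin hmod σ ((basC hmod) k)
          = avec n (σ (emb n k)) + avec n (σ (last2 n)) := by
        intro k
        unfold Tlin
        rw [Module.Basis.constr_basis]
      rw [Finset.sum_congr rfl (fun k _ => hcb k),
        Finset.sum_add_distrib, sum_avec_perm_split hmod σ, Finset.sum_const,
        Finset.card_univ, Fintype.card_fin]
      rw [show (n • avec n (σ (last2 n))) = ((n : ℕ) : ZMod 2) • avec n (σ (last2 n)) by
        rw [Nat.cast_smul_eq_nsmul]]
      rw [natCast_zmod2, if_neg (by omega), zero_smul, add_zero, hi]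
    · have h3 : i = last2 n := by
        apply Fin.ext
        have := i.2
        simp only [last2]
        omega
      rw [h3, avec_last, map_zero, addV_self]

noncomputable def Thom {n : ℕ} (hmod : n % 8 = 6) :
    Equiv.Perm (Fin (n + 2)) →* Module.End (ZMod 2) (Fin n → ZMod 2) where
  toFun := Tlin hmod
  map_one' := by
    apply (basC hmod).ext
    intro i
    rw [basC_avec hmod, T_avec hmod 1 (emb n i)]
    simp only [Equiv.Perm.coe_one, id_eq]
    rw [avec_last, add_zero]
    rfl
  map_mul' σ τ := by
    apply (basC hmod).ext
    intro i
    rw [basC_avec hmod, T_avec hmod (σ * τ) (emb n i)]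
    have hm : ∀ x, (Tlin hmod σ * Tlin hmod τ) x = Tlin hmod σ (Tlin hmod τ x) := fun x => rfl
    rw [hm, T_avec hmod τ (emb n i), map_add, T_avec hmod σ, T_avec hmod σ]
    have hperm : ∀ x, (σ * τ) x = σ (τ x) := fun x => rfl
    rw [hperm, hperm]
    generalize avec n (σ (τ (emb n i))) = A
    generalize avec n (σ (τ (last2 n))) = B
    generalize avec n (σ (last2 n)) = C
    rw [show A + C + (B + C) = A + B + (C + C) from by ring, addV_self, add_zero]


noncomputable def psi {n : ℕ} (hmod : n % 8 = 6) :
    Equiv.Perm (Fin (n + 2)) →* ((Fin n → ZMod 2) ≃ₗ[ZMod 2] (Fin n → ZMod 2)) :=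
  (LinearMap.GeneralLinearGroup.generalLinearEquiv (ZMod 2)
    (Fin n → ZMod 2)).toMonoidHom.comp (Thom hmod).toHomUnits

lemma psi_apply {n : ℕ} (hmod : n % 8 = 6) (σ : Equiv.Perm (Fin (n + 2)))
    (w : Fin n → ZMod 2) : psi hmod σ w = Tlin hmod σ w := rfl

lemma B_avec_cvec {n : ℕ} (hmod : n % 8 = 6) (t : Fin (n + 2)) (j : Fin n) :
    Bf n (avec n t) (cvec n j) = if t.1 = n + 1 ∨ t.1 = j.1 then 0 else 1 := by
  have hj2 := j.2
  rw [← avec_emb j]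
  by_cases h : t = emb n j
  · rw [h, Bf_self,
      if_pos (show (emb n j).1 = n + 1 ∨ (emb n j).1 = j.1 from Or.inr rfl)]
  · have hne : t.1 ≠ j.1 := fun hh => h (Fin.ext hh)
    rw [B_avec hmod h]
    have hje : (emb n j).1 = j.1 := rfl
    exact if_congr (by rw [hje]; omega) rfl rfl

lemma exists_avoid {n : ℕ} (hmod : n % 8 = 6) (a b c : ℕ) :
    ∃ j : Fin n, j.1 ≠ a ∧ j.1 ≠ b ∧ j.1 ≠ c := by
  have h6 : 6 ≤ n := by omega
  have hex : ∃ jv ∈ Finset.range 4, jv ∉ ({a, b, c} : Finset ℕ) := by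
    by_contra hcon
    push_neg at hcon
    have hsub : Finset.range 4 ⊆ ({a, b, c} : Finset ℕ) := hcon
    have hle := Finset.card_le_card hsub
    have h3 : ({a, b, c} : Finset ℕ).card ≤ 3 := by
      calc ({a, b, c} : Finset ℕ).card ≤ ({b, c} : Finset ℕ).card + 1 :=
            Finset.card_insert_le _ _
      _ ≤ (({c} : Finset ℕ).card + 1) + 1 := by
            exact Nat.add_le_add_right (Finset.card_insert_le _ _) 1
      _ = 3 := by rw [Finset.card_singleton]
    rw [Finset.card_range] at hle
    omega
  obtain ⟨jv, hjr, hjm⟩ := hex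
  simp only [Finset.mem_insert, Finset.mem_singleton, not_or] at hjm
  exact ⟨⟨jv, by have := Finset.mem_range.mp hjr; omega⟩, hjm.1, hjm.2.1, hjm.2.2⟩

lemma avec_inj {n : ℕ} (hmod : n % 8 = 6) : Function.Injective (avec n) := by
  intro t t' h
  by_contra hne
  have hv : t.1 ≠ t'.1 := fun hh => hne (Fin.ext hh)
  have key : ∀ j : Fin n,
      (if t.1 = n + 1 ∨ t.1 = j.1 then (0 : ZMod 2) else 1)
        = (if t'.1 = n + 1 ∨ t'.1 = j.1 then 0 else 1) := by
    intro j
    rw [← B_avec_cvec hmod t j, ← B_avec_cvec hmod t' j, h]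
  have ht2 := t.2
  have ht2' := t'.2
  by_cases hta : t.1 = n + 1
  · obtain ⟨j, hj1, hj2, hj3⟩ := exists_avoid hmod t'.1 t'.1 t'.1
    have := key j
    rw [if_pos (Or.inl hta), if_neg (by omega)] at this
    exact absurd this (by decide)
  · by_cases htb : t'.1 = n + 1
    · obtain ⟨j, hj1, hj2, hj3⟩ := exists_avoid hmod t.1 t.1 t.1
      have := key j
      rw [if_neg (by omega), if_pos (Or.inl htb)] at this
      exact absurd this (by decide)
    · by_cases htc : t.1 < n
      · have := key ⟨t.1, htc⟩
        rw [if_pos (by right; rfl), if_neg (by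
          have : ((⟨t.1, htc⟩ : Fin n)).1 = t.1 := rfl
          omega)] at this
        exact absurd this (by decide)
      · have htc' : t'.1 < n := by omega
        have := key ⟨t'.1, htc'⟩
        rw [if_neg (by
          have : ((⟨t'.1, htc'⟩ : Fin n)).1 = t'.1 := rfl
          omega), if_pos (by right; rfl)] at this
        exact absurd this (by decide)

lemma psi_inj {n : ℕ} (hmod : n % 8 = 6) : Function.Injective (psi hmod) := by
  rw [injective_iff_map_eq_one (psi hmod)]
  intro σ hσ
  have hT : ∀ w, Tlin hmod σ w = w := by
    intro w
    have h1 : psi hmod σ w = Tlin hmod σ w := rfl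
    rw [hσ] at h1
    exact h1.symm
  have key : ∀ i, avec n (σ i) + avec n (σ (last2 n)) = avec n i := fun i => by
    rw [← T_avec hmod σ i, hT]
  by_cases hlast : σ (last2 n) = last2 n
  · have h0 : ∀ i, avec n (σ i) = avec n i := by
      intro i
      have := key i
      rwa [hlast, avec_last, add_zero] at this
    apply Equiv.ext
    intro i
    show σ i = i
    exact avec_inj hmod (h0 i)
  · exfalso
    have hkv : (σ (last2 n)).1 ≠ n + 1 := by
      intro hh
      exact hlast (Fin.ext (hh.trans (rfl : (n + 1 : ℕ) = (last2 n).1)))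
    have hi0 := key (σ.symm (last2 n))
    rw [Equiv.apply_symm_apply, avec_last, zero_add] at hi0
    have hkk : σ (last2 n) = σ.symm (last2 n) := avec_inj hmod hi0
    -- choose i with i ≠ σ (last2 n), i.1 < n
    obtain ⟨i, hi_ne_k, hi_lt⟩ :
        ∃ i : Fin (n + 2), i ≠ σ (last2 n) ∧ i.1 < n := by
      by_cases hk0 : (σ (last2 n)).1 = 0
      · refine ⟨⟨1, by omega⟩, ?_, show (1 : ℕ) < n by omega⟩
        intro hh
        have h1 : (σ (last2 n)).1 = 1 := by rw [← hh]
        omega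
      · refine ⟨⟨0, by omega⟩, ?_, show (0 : ℕ) < n by omega⟩
        intro hh
        have h1 : (σ (last2 n)).1 = 0 := by rw [← hh]
        omega
    have hσi : σ i ≠ last2 n := by
      intro hh
      have h2 : i = σ.symm (last2 n) := by rw [← hh, Equiv.symm_apply_apply]
      exact hi_ne_k (h2.trans hkk.symm)
    have hσiv : (σ i).1 ≠ n + 1 := fun hh =>
      hσi (Fin.ext (hh.trans (rfl : (n + 1 : ℕ) = (last2 n).1)))
    have heq : avec n (σ i) = avec n i + avec n (σ (last2 n)) := by
      have hki := key i
      calc avec n (σ i)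
          = avec n (σ i) + (avec n (σ (last2 n)) + avec n (σ (last2 n))) := by
            rw [addV_self, add_zero]
      _ = (avec n (σ i) + avec n (σ (last2 n))) + avec n (σ (last2 n)) := by ring
      _ = avec n i + avec n (σ (last2 n)) := by rw [hki]
    obtain ⟨j, hj1, hj2, hj3⟩ := exists_avoid hmod i.1 (σ (last2 n)).1 (σ i).1
    have hp := congrArg (fun x => Bf n x (cvec n j)) heq
    rw [Bf_add_left, B_avec_cvec hmod, B_avec_cvec hmod, B_avec_cvec hmod] at hp
    rw [if_neg (by omega), if_neg (by omega), if_neg (by omega)] at hp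
    exact absurd hp (by decide)


lemma Bval {n : ℕ} (hmod : n % 8 = 6) {a b : Fin (n + 2)} (ha : a.1 < n) :
    Bf n (avec n a) (avec n b) = if a = b ∨ b.1 = n + 1 then 0 else 1 := by
  by_cases hab : a = b
  · rw [hab, Bf_self, if_pos (Or.inl rfl)]
  · rw [B_avec hmod hab]
    have hv : a.1 ≠ b.1 := fun hh => hab (Fin.ext hh)
    have hiff : (a.1 = n + 1 ∨ b.1 = n + 1) ↔ (a = b ∨ b.1 = n + 1) := by
      constructor
      · rintro (h | h)
        · exact absurd h (by omega)
        · exact Or.inr h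
      · rintro (h | h)
        · exact absurd h hab
        · exact Or.inr h
    exact if_congr hiff rfl rfl

lemma last2_ne_of_lt {n : ℕ} {a : Fin (n + 2)} (ha : a.1 < n) : last2 n ≠ a := by
  intro hh
  have h2 : (last2 n).1 = a.1 := by rw [hh]
  have h4 : (last2 n).1 = n + 1 := rfl
  omega

lemma ne_last2_of_val {n : ℕ} {a : Fin (n + 2)} (ha : a.1 ≠ n + 1) : a ≠ last2 n := by
  intro hh
  exact ha (by rw [hh]; rfl)

lemma T_swap {n : ℕ} (hmod : n % 8 = 6) {k l : Fin (n + 2)} (hkl : k ≠ l)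
    (w : Fin n → ZMod 2) :
    Tlin hmod (Equiv.swap k l) w
      = w + Bf n w (avec n k + avec n l) • (avec n k + avec n l) := by
  have hmap : Tlin hmod (Equiv.swap k l)
      = LinearMap.id + ((BL n).flip (avec n k + avec n l)).smulRight (avec n k + avec n l) := by
    apply (basC hmod).ext
    intro i
    rw [basC_avec hmod, T_avec hmod _ (emb n i)]
    simp only [LinearMap.add_apply, LinearMap.id_apply, LinearMap.smulRight_apply,
      LinearMap.flip_apply, BL_apply]
    have ha : (emb n i).1 < n := i.2
    rw [Bf_add_right]
    by_cases hik : emb n i = k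
    · have hswa : Equiv.swap k l (emb n i) = l := by rw [hik, Equiv.swap_apply_left]
      have hak : k.1 < n := by rw [← hik]; exact ha
      rw [hswa, hik, Bval hmod hak, Bval hmod hak,
        if_pos (show k = k ∨ k.1 = n + 1 from Or.inl rfl)]
      by_cases hl2 : l = last2 n
      · have hsw2 : Equiv.swap k l (last2 n) = k := by
          rw [← hl2, Equiv.swap_apply_right]
        rw [hsw2, if_pos (show k = l ∨ l.1 = n + 1 from Or.inr (by rw [hl2]; rfl)),
          hl2, avec_last, zero_add, add_zero, zero_smul, add_zero]
      · have hsw2 : Equiv.swap k l (last2 n) = last2 n :=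
          Equiv.swap_apply_of_ne_of_ne (last2_ne_of_lt hak) (fun hh => hl2 hh.symm)
        rw [hsw2, avec_last, add_zero,
          if_neg (show ¬ (k = l ∨ l.1 = n + 1) from by
            push_neg
            exact ⟨hkl, fun hh => hl2 (Fin.ext (hh.trans rfl))⟩),
          zero_add, one_smul,
          show avec n k + (avec n k + avec n l) = (avec n k + avec n k) + avec n l from by ring,
          addV_self, zero_add]
    · by_cases hil : emb n i = l
      · have hswa : Equiv.swap k l (emb n i) = k := by rw [hil, Equiv.swap_apply_right]
        have hal : l.1 < n := by rw [← hil]; exact ha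
        rw [hswa, hil, Bval hmod hal, Bval hmod hal,
          if_pos (show l = l ∨ l.1 = n + 1 from Or.inl rfl)]
        by_cases hk2 : k = last2 n
        · have hsw2 : Equiv.swap k l (last2 n) = l := by
            rw [← hk2, Equiv.swap_apply_left]
          rw [hsw2, if_pos (show l = k ∨ k.1 = n + 1 from Or.inr (by rw [hk2]; rfl)),
            hk2, avec_last, zero_add, zero_add, zero_smul, add_zero]
        · have hsw2 : Equiv.swap k l (last2 n) = last2 n :=
            Equiv.swap_apply_of_ne_of_ne (fun hh => hk2 hh.symm) (last2_ne_of_lt hal)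
          rw [hsw2, avec_last, add_zero,
            if_neg (show ¬ (l = k ∨ k.1 = n + 1) from by
              push_neg
              exact ⟨fun hh => hkl hh.symm, fun hh => hk2 (Fin.ext (hh.trans rfl))⟩),
            add_zero, one_smul,
            show avec n l + (avec n k + avec n l) = avec n k + (avec n l + avec n l) from by
              ring,
            addV_self, add_zero]
      · have hswa : Equiv.swap k l (emb n i) = emb n i :=
          Equiv.swap_apply_of_ne_of_ne hik hil
        rw [hswa, Bval hmod ha, Bval hmod ha]
        by_cases hk2 : k = last2 n
        · have hl2 : l ≠ last2 n := fun hh => hkl (hk2.trans hh.symm)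
          have hsw2 : Equiv.swap k l (last2 n) = l := by
            rw [← hk2, Equiv.swap_apply_left]
          rw [hsw2,
            if_pos (show emb n i = k ∨ k.1 = n + 1 from Or.inr (by rw [hk2]; rfl)),
            if_neg (show ¬ (emb n i = l ∨ l.1 = n + 1) from by
              push_neg
              exact ⟨hil, fun hh => hl2 (Fin.ext (hh.trans rfl))⟩),
            zero_add, one_smul, hk2, avec_last, zero_add]
        · by_cases hl2 : l = last2 n
          · have hsw2 : Equiv.swap k l (last2 n) = k := by
              rw [← hl2, Equiv.swap_apply_right]
            rw [hsw2,
              if_neg (show ¬ (emb n i = k ∨ k.1 = n + 1) from by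
                push_neg
                exact ⟨hik, fun hh => hk2 (Fin.ext (hh.trans rfl))⟩),
              if_pos (show emb n i = l ∨ l.1 = n + 1 from Or.inr (by rw [hl2]; rfl)),
              add_zero, one_smul, hl2, avec_last, add_zero]
          · have hsw2 : Equiv.swap k l (last2 n) = last2 n :=
              Equiv.swap_apply_of_ne_of_ne (fun hh => hk2 hh.symm) (fun hh => hl2 hh.symm)
            rw [hsw2, avec_last, add_zero,
              if_neg (show ¬ (emb n i = k ∨ k.1 = n + 1) from by
                push_neg
                exact ⟨hik, fun hh => hk2 (Fin.ext (hh.trans rfl))⟩),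
              if_neg (show ¬ (emb n i = l ∨ l.1 = n + 1) from by
                push_neg
                exact ⟨hil, fun hh => hl2 (Fin.ext (hh.trans rfl))⟩),
              show (1 : ZMod 2) + 1 = 0 from by decide, zero_smul, add_zero]
  rw [hmap]
  rfl

lemma exists_part {n : ℕ} (hmod : n % 8 = 6) :
    ∃ ψ : Equiv.Perm (Fin (n + 2)) →* ((Fin n → ZMod 2) ≃ₗ[ZMod 2] (Fin n → ZMod 2)),
      Function.Injective ψ ∧
      ∀ τ : Equiv.Perm (Fin (n + 2)), τ.IsSwap →
        ∃ v : Fin n → ZMod 2, Qform n v = 1 ∧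
          ∀ w, (ψ τ) w = w + polarForm (Qform n) w v • v := by
  refine ⟨psi hmod, psi_inj hmod, ?_⟩
  rintro τ ⟨k, l, hkl, rfl⟩
  refine ⟨avec n k + avec n l, Q_avec_pair hmod hkl, fun w => ?_⟩
  rw [psi_apply, T_swap hmod hkl w, polarForm_eq]


lemma Bf_sum_smul_left {n : ℕ} {ι : Type*} [Fintype ι] (g : ι → ZMod 2)
    (f : ι → (Fin n → ZMod 2)) (y : Fin n → ZMod 2) :
    Bf n (∑ i, g i • f i) y = ∑ i, g i * Bf n (f i) y := by
  have h1 : Bf n (∑ i, g i • f i) y = BL n (∑ i, g i • f i) y := rfl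
  rw [h1, map_sum, LinearMap.sum_apply]
  exact Finset.sum_congr rfl fun i _ => by
    rw [map_smul, LinearMap.smul_apply, smul_eq_mul, BL_apply]

def ptA (n : ℕ) (i : Fin (n + 2)) : Fin (n + 3) := ⟨i.1, by have := i.2; omega⟩

def ptB (n : ℕ) (i : Fin (n + 2)) : Fin (n + 3) := ⟨i.1 + 1, by have := i.2; omega⟩

def tau (n : ℕ) (i : Fin (n + 2)) : Equiv.Perm (Fin (n + 3)) :=
  Equiv.swap (ptA n i) (ptB n i)

lemma ptA_ne_ptB {n : ℕ} (i : Fin (n + 2)) : ptA n i ≠ ptB n i := by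
  intro hh
  have h2 : i.1 = i.1 + 1 := congrArg Fin.val hh
  omega

lemma tau_isSwap {n : ℕ} (i : Fin (n + 2)) : (tau n i).IsSwap :=
  ⟨ptA n i, ptB n i, ptA_ne_ptB i, rfl⟩

lemma tau_nonadj_comm {n : ℕ} {i j : Fin (n + 2)}
    (hd : i.1 + 2 ≤ j.1 ∨ j.1 + 2 ≤ i.1) : tau n i * tau n j = tau n j * tau n i := by
  have hdis : (tau n i).Disjoint (tau n j) := by
    intro x
    by_cases hx : x = ptA n i ∨ x = ptB n i
    · right
      apply Equiv.swap_apply_of_ne_of_ne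
      · intro hh
        have h1 : x.1 = j.1 := congrArg Fin.val hh
        rcases hx with hh2 | hh2
        · have h2 : x.1 = i.1 := congrArg Fin.val hh2; omega
        · have h2 : x.1 = i.1 + 1 := congrArg Fin.val hh2; omega
      · intro hh
        have h1 : x.1 = j.1 + 1 := congrArg Fin.val hh
        rcases hx with hh2 | hh2
        · have h2 : x.1 = i.1 := congrArg Fin.val hh2; omega
        · have h2 : x.1 = i.1 + 1 := congrArg Fin.val hh2; omega
    · left
      push_neg at hx
      exact Equiv.swap_apply_of_ne_of_ne hx.1 hx.2
  exact hdis.commute.eq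

lemma tau_nonadj_ne {n : ℕ} {i j : Fin (n + 2)}
    (hd : i.1 + 2 ≤ j.1 ∨ j.1 + 2 ≤ i.1) : tau n i ≠ tau n j := by
  intro hh
  have h1 : tau n i (ptA n i) = ptB n i := Equiv.swap_apply_left _ _
  have h2 : tau n j (ptA n i) = ptA n i := by
    apply Equiv.swap_apply_of_ne_of_ne
    · intro hc
      have := congrArg Fin.val hc
      have h3 : i.1 = j.1 := this
      omega
    · intro hc
      have h3 : i.1 = j.1 + 1 := congrArg Fin.val hc
      omega
  rw [hh, h2] at h1
  have h4 := congrArg Fin.val h1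
  have h5 : i.1 = i.1 + 1 := h4
  omega

lemma tau_adj_ne {n : ℕ} {i j : Fin (n + 2)} (hadj : j.1 = i.1 + 1) :
    tau n i * tau n j ≠ tau n j * tau n i := by
  intro hcom
  have hBjAj : tau n j (ptB n j) = ptA n j := Equiv.swap_apply_right _ _
  have hAjBi : ptA n j = ptB n i := Fin.ext (show j.1 = i.1 + 1 from hadj)
  have h1 : (tau n i * tau n j) (ptB n j) = ptA n i := by
    rw [Equiv.Perm.mul_apply, hBjAj, hAjBi]
    exact Equiv.swap_apply_right _ _
  have h2 : (tau n j * tau n i) (ptB n j) = ptA n j := by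
    rw [Equiv.Perm.mul_apply]
    have h3 : tau n i (ptB n j) = ptB n j := by
      apply Equiv.swap_apply_of_ne_of_ne
      · intro hc
        have h4 : j.1 + 1 = i.1 := congrArg Fin.val hc
        omega
      · intro hc
        have h4 : j.1 + 1 = i.1 + 1 := congrArg Fin.val hc
        omega
    rw [h3, hBjAj]
  rw [hcom, h2] at h1
  have h5 := congrArg Fin.val h1
  have h6 : j.1 = i.1 := h5
  omega

lemma no_embed {n : ℕ} (hmod : n % 8 = 6) :
    ¬ (∃ ψ : Equiv.Perm (Fin (n + 3)) →* ((Fin n → ZMod 2) ≃ₗ[ZMod 2] (Fin n → ZMod 2)),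
      Function.Injective ψ ∧
      ∀ τ : Equiv.Perm (Fin (n + 3)), τ.IsSwap →
        ∃ v : Fin n → ZMod 2, Qform n v = 1 ∧
          ∀ w, (ψ τ) w = w + polarForm (Qform n) w v • v) := by
  rintro ⟨ψ, hinj, htr⟩
  choose w hQ hfor using fun i : Fin (n + 2) => htr (tau n i) (tau_isSwap i)
  have hap : ∀ i x, ψ (tau n i) x = x + Bf n x (w i) • w i := fun i x => by
    rw [hfor i x, polarForm_eq]
  have hw0 : ∀ i, w i ≠ 0 := by
    intro i hh
    have := hQ i
    rw [hh, Qform_zero] at this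
    exact absurd this (by decide)
  have hcomp : ∀ i j x, ψ (tau n i * tau n j) x
      = x + Bf n x (w j) • w j
        + (Bf n x (w i) + Bf n x (w j) * Bf n (w j) (w i)) • w i := by
    intro i j x
    have h1 : ψ (tau n i * tau n j) x = ψ (tau n i) (ψ (tau n j) x) := by
      rw [map_mul]; rfl
    rw [h1, hap j x, hap i, Bf_add_left, Bf_smul_left]
  have hBadj : ∀ i j : Fin (n + 2), j.1 = i.1 + 1 → Bf n (w i) (w j) = 1 := by
    intro i j hadj
    by_contra hB
    have hB0 : Bf n (w i) (w j) = 0 := by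
      revert hB; generalize Bf n (w i) (w j) = a; revert a; decide
    have hB0' : Bf n (w j) (w i) = 0 := by rw [Bf_comm]; exact hB0
    have heq : ψ (tau n i * tau n j) = ψ (tau n j * tau n i) := by
      apply DFunLike.ext
      intro x
      rw [hcomp i j x, hcomp j i x, hB0, hB0', mul_zero, mul_zero, add_zero, add_zero]
      ring
    exact tau_adj_ne hadj (hinj heq)
  have hBnonadj : ∀ i j : Fin (n + 2), (i.1 + 2 ≤ j.1 ∨ j.1 + 2 ≤ i.1) →
      Bf n (w i) (w j) = 0 := by
    intro i j hd
    by_contra hB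
    have hB1 : Bf n (w i) (w j) = 1 := by
      revert hB; generalize Bf n (w i) (w j) = a; revert a; decide
    have hB1' : Bf n (w j) (w i) = 1 := by rw [Bf_comm]; exact hB1
    have hcom := tau_nonadj_comm hd
    obtain ⟨x, hx⟩ := Bf_exists_one n (by omega) (hw0 j)
    have h2 : ψ (tau n i * tau n j) x = ψ (tau n j * tau n i) x := by rw [hcom]
    rw [hcomp i j x, hcomp j i x, hB1, hB1', hx, mul_one, mul_one, one_smul] at h2
    -- h2 : x + w j + (B x wi + 1) • w i = x + B x wi • w i + (1 + B x wi) • w j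
    have hcases : Bf n x (w i) = 0 ∨ Bf n x (w i) = 1 := by
      generalize Bf n x (w i) = a; revert a; decide
    have hww : w i = w j := by
      rcases hcases with hc | hc
      · exfalso
        rw [hc] at h2
        simp only [zero_add, add_zero, zero_smul, one_smul] at h2
        -- h2 : x + w j + w i = x + w j
        have h3 : x + w j + w i = x + w j + 0 := by rw [add_zero]; exact h2
        exact hw0 i (add_left_cancel h3)
      · rw [hc] at h2
        rw [show (1 : ZMod 2) + 1 = 0 from by decide] at h2
        simp only [zero_smul, add_zero, one_smul] at h2
        -- h2 : x + w j = x + w i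
        exact (add_left_cancel h2).symm
    have hpsieq : ψ (tau n i) = ψ (tau n j) := by
      apply DFunLike.ext
      intro x'
      rw [hap i x', hap j x', hww]
    exact tau_nonadj_ne hd (hinj hpsieq)
  have hBw : ∀ i j : Fin (n + 2), Bf n (w i) (w j)
      = if i.1 + 1 = j.1 ∨ j.1 + 1 = i.1 then 1 else 0 := by
    intro i j
    by_cases h1 : i.1 + 1 = j.1
    · rw [if_pos (Or.inl h1)]
      exact hBadj i j h1.symm
    · by_cases h2 : j.1 + 1 = i.1
      · rw [if_pos (Or.inr h2), Bf_comm]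
        exact hBadj j i h2.symm
      · rw [if_neg (by omega)]
        by_cases h3 : i = j
        · rw [h3, Bf_self]
        · have hv : i.1 ≠ j.1 := fun hh => h3 (Fin.ext hh)
          exact hBnonadj i j (by omega)
  have hli : LinearIndependent (ZMod 2) w := by
    rw [Fintype.linearIndependent_iff]
    intro g hg
    classical
    let G : ℕ → ZMod 2 := fun t => if h : t < n + 2 then g ⟨t, h⟩ else 0
    have hGout : ∀ t, ¬ t < n + 2 → G t = 0 := fun t ht => dif_neg ht
    have hGin : ∀ (t) (h : t < n + 2), G t = g ⟨t, h⟩ := fun t h => dif_pos h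
    have hrec : ∀ jv : ℕ, jv < n + 2 →
        (if 1 ≤ jv then G (jv - 1) else 0) + G (jv + 1) = 0 := by
      intro jv hjv
      have h0 : Bf n (∑ i, g i • w i) (w ⟨jv, hjv⟩) = 0 := by
        rw [hg, Bf_zero_left]
      rw [Bf_sum_smul_left] at h0
      have hterm : ∀ i : Fin (n + 2), g i * Bf n (w i) (w ⟨jv, hjv⟩)
          = (if i.1 + 1 = jv then g i else 0) + (if jv + 1 = i.1 then g i else 0) := by
        intro i
        rw [hBw i ⟨jv, hjv⟩]
        simp only [show ((⟨jv, hjv⟩ : Fin (n + 2)).1) = jv from rfl]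
        split_ifs <;> first | (exfalso; omega) | ring1
      rw [Finset.sum_congr rfl (fun i _ => hterm i), Finset.sum_add_distrib] at h0
      have hs1 : ∑ i : Fin (n + 2), (if i.1 + 1 = jv then g i else 0)
          = (if 1 ≤ jv then G (jv - 1) else 0) := by
        by_cases hj1 : 1 ≤ jv
        · rw [if_pos hj1]
          rw [Finset.sum_eq_single_of_mem (⟨jv - 1, by omega⟩ : Fin (n + 2))
            (Finset.mem_univ _)]
          · rw [if_pos (show (jv - 1) + 1 = jv by omega)]
            exact (hGin (jv - 1) (by omega)).symm
          · intro b _ hb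
            apply if_neg
            intro hc
            exact hb (Fin.ext (show b.1 = jv - 1 by omega))
        · rw [if_neg hj1]
          apply Finset.sum_eq_zero
          intro i _
          apply if_neg
          omega
      have hs2 : ∑ i : Fin (n + 2), (if jv + 1 = i.1 then g i else 0) = G (jv + 1) := by
        by_cases hj2 : jv + 1 < n + 2
        · rw [Finset.sum_eq_single_of_mem (⟨jv + 1, hj2⟩ : Fin (n + 2))
            (Finset.mem_univ _)]
          · rw [if_pos (rfl : jv + 1 = jv + 1)]
            exact (hGin (jv + 1) hj2).symm
          · intro b _ hb
            apply if_neg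
            intro hc
            exact hb (Fin.ext hc.symm)
        · rw [hGout (jv + 1) hj2]
          apply Finset.sum_eq_zero
          intro i _
          apply if_neg
          intro hc
          have := i.2
          omega
      rw [hs1, hs2] at h0
      exact h0
    have hodd : ∀ t, 2 * t + 1 < n + 2 → G (2 * t + 1) = 0 := by
      intro t
      induction t with
      | zero =>
        intro h
        have h1 := hrec 0 (by omega)
        rw [if_neg (by omega), zero_add] at h1
        rw [show 2 * 0 + 1 = 0 + 1 by omega]
        exact h1
      | succ t ih =>
        intro h
        have h1 := hrec (2 * t + 2) (by omega)
        rw [if_pos (by omega), show 2 * t + 2 - 1 = 2 * t + 1 by omega,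
          ih (by omega), zero_add] at h1
        rw [show 2 * (t + 1) + 1 = 2 * t + 2 + 1 by omega]
        exact h1
    have heven : ∀ t, G (n - 2 * t) = 0 := by
      intro t
      induction t with
      | zero =>
        have h1 := hrec (n + 1) (by omega)
        rw [if_pos (by omega), show n + 1 - 1 = n by omega,
          hGout (n + 1 + 1) (by omega), add_zero] at h1
        rw [show n - 2 * 0 = n by omega]
        exact h1
      | succ t ih =>
        by_cases hc : 2 * (t + 1) ≤ n
        · have h1 := hrec (n - 2 * t - 1) (by omega)
          rw [if_pos (by omega), show n - 2 * t - 1 - 1 = n - 2 * (t + 1) by omega,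
            show n - 2 * t - 1 + 1 = n - 2 * t by omega, ih, add_zero] at h1
          exact h1
        · rw [show n - 2 * (t + 1) = n - 2 * t by omega]
          exact ih
    intro i
    have hgi : g i = G i.1 := (hGin i.1 i.2).symm
    rw [hgi]
    rcases Nat.even_or_odd i.1 with he | ho
    · obtain ⟨c, hc⟩ := he
      have hle := i.2
      rw [show i.1 = n - 2 * ((n - i.1) / 2) by omega]
      exact heven _
    · obtain ⟨c, hc⟩ := ho
      rw [show i.1 = 2 * c + 1 from hc]
      exact hodd c (by have := i.2; omega)
  have hcard := hli.fintype_card_le_finrank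
  rw [Module.finrank_fin_fun, Fintype.card_fin] at hcard
  omega

end PhiO

/-- φ(O_n^{+}(2)) = n + 2 when n ≡ 6 (mod 8): S_{n+2} embeds with transpositions going to orthogonal transvections t_v with Q(v) = 1, while S_{n+3} does not. -/
theorem phi_O_plus_2_mod8_six (n : ℕ) (hn : 6 ≤ n) (hmod : n % 8 = 6) :
    (∃ ψ : Equiv.Perm (Fin (n + 2)) →* ((Fin n → ZMod 2) ≃ₗ[ZMod 2] (Fin n → ZMod 2)),
      Function.Injective ψ ∧
      ∀ τ : Equiv.Perm (Fin (n + 2)), τ.IsSwap →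
        ∃ v : Fin n → ZMod 2, Qform n v = 1 ∧
          ∀ w, (ψ τ) w = w + polarForm (Qform n) w v • v) ∧
    ¬ (∃ ψ : Equiv.Perm (Fin (n + 3)) →* ((Fin n → ZMod 2) ≃ₗ[ZMod 2] (Fin n → ZMod 2)),
      Function.Injective ψ ∧
      ∀ τ : Equiv.Perm (Fin (n + 3)), τ.IsSwap →
        ∃ v : Fin n → ZMod 2, Qform n v = 1 ∧
          ∀ w, (ψ τ) w = w + polarForm (Qform n) w v • v) :=
  ⟨PhiO.exists_part hmod, PhiO.no_embed hmod⟩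
end

section
/- Let n ≥ 2 with n ≡ 2 (mod 4), and let V = (Fin n → ZMod 2). Define two quadratic forms Q₀ and Q₁ on V by Q_ε(x) = Σ_{i<j} x_i x_j + ε · Σ_i x_i for ε ∈ {0,1} (so both Q₀ and Q₁ have the same polar bilinear form B(x,y) = Σ_{i≠j} x_i y_j, and Q_ε(e_i) = ε on each standard basis vector e_i). Then Q₀ and Q₁ are not equivalent: there is no linear automorphism f of V such that Q₁(f(x)) = Q₀(x) for all x ∈ V. -/
/-- The quadratic form `Q_ε x = ∑_{i<j} x i * x j + ε * ∑ i, x i` on `(ZMod 2)^n`. -/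
def Qeps (n : ℕ) (ε : ZMod 2) (x : Fin n → ZMod 2) : ZMod 2 :=
  (∑ i : Fin n, ∑ j : Fin n, if i < j then x i * x j else 0) + ε * ∑ i : Fin n, x i

open Finset

/-- The sign character `ZMod 2 → ℤ`. -/
def chi (z : ZMod 2) : ℤ := if z = 0 then 1 else -1

lemma chi_add (a b : ZMod 2) : chi (a + b) = chi a * chi b := by
  revert a b; decide

lemma sum_zmod2 (f : ZMod 2 → ℤ) : ∑ t : ZMod 2, f t = f 0 + f 1 := by
  have h : (Finset.univ : Finset (ZMod 2)) = {0, 1} := by decide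
  rw [h, Finset.sum_insert (by decide), Finset.sum_singleton]

lemma Qeps_cons (n : ℕ) (ε t : ZMod 2) (x : Fin n → ZMod 2) :
    Qeps (n+1) ε (Fin.cons t x) = Qeps n ε x + t * (∑ i, x i) + ε * t := by
  simp only [Qeps, Fin.sum_univ_succ, Fin.cons_zero, Fin.cons_succ,
    Fin.succ_lt_succ_iff, lt_irrefl, if_false, Fin.succ_pos, if_true,
    Fin.not_lt_zero, Finset.sum_add_distrib, ← Finset.mul_sum, Finset.sum_const_zero]
  ring

lemma Qeps_add_one (n : ℕ) (ε : ZMod 2) (x : Fin n → ZMod 2) :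
    Qeps n (ε+1) x = Qeps n ε x + ∑ i, x i := by
  simp only [Qeps]; ring

/-- The character sum `S ε n = ∑_x (-1)^(Q_ε x)`. -/
noncomputable def S (ε : ZMod 2) (n : ℕ) : ℤ :=
  ∑ x : Fin n → ZMod 2, chi (Qeps n ε x)

lemma S_succ (ε : ZMod 2) (n : ℕ) : S ε (n+1) = S ε n + chi ε * S (ε+1) n := by
  rw [S, ← Equiv.sum_comp (Fin.consEquiv (fun _ : Fin (n+1) => ZMod 2))
      (fun y => chi (Qeps (n+1) ε y))]
  have h1 : ∀ p : ZMod 2 × (Fin n → ZMod 2),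
      chi (Qeps (n+1) ε ((Fin.consEquiv (fun _ : Fin (n+1) => ZMod 2)) p))
        = chi (Qeps n ε p.2 + p.1 * (∑ i, p.2 i) + ε * p.1) := fun p => by
    show chi (Qeps (n+1) ε (Fin.cons p.1 p.2)) = _
    rw [Qeps_cons]
  rw [Finset.sum_congr rfl (fun p _ => h1 p), Fintype.sum_prod_type,
    sum_zmod2 (fun t => ∑ x : Fin n → ZMod 2, chi (Qeps n ε x + t * (∑ i, x i) + ε * t))]
  simp only [zero_mul, mul_zero, add_zero, one_mul, mul_one]
  congr 1
  rw [S, Finset.mul_sum]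
  refine Finset.sum_congr rfl fun x _ => ?_
  rw [Qeps_add_one, chi_add, mul_comm]

lemma S0_succ (n : ℕ) : S 0 (n+1) = S 0 n + S 1 n := by
  rw [S_succ, show ((0:ZMod 2)+1)=1 by decide, show chi 0 = 1 from rfl, one_mul]

lemma S1_succ (n : ℕ) : S 1 (n+1) = S 1 n - S 0 n := by
  rw [S_succ, show ((1:ZMod 2)+1)=0 by decide, show chi 1 = -1 from rfl]; ring

lemma S_prod (k : ℕ) : S 0 (2*k) * S 1 (2*k) = (-4)^k := by
  induction k with
  | zero => simp [S, Qeps, chi]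
  | succ k ih =>
      have h2 : 2*(k+1) = (2*k) + 1 + 1 := by ring
      rw [h2, S0_succ (2*k+1), S1_succ (2*k+1), S0_succ (2*k), S1_succ (2*k), pow_succ]
      linear_combination (-4 : ℤ) * ih

/-- For `n ≡ 2 (mod 4)`, the two quadratic forms `Q₀` and `Q₁` on
`(ZMod 2)^n` given by `Q_ε x = ∑_{i<j} x i * x j + ε * ∑ i, x i` (which share the same
polar bilinear form) are not equivalent: no linear automorphism `f` satisfies
`Q₁ (f x) = Q₀ x` for all `x`. -/
theorem quadratic_forms_not_equivalent (n : ℕ) (hn : 2 ≤ n) (hmod : n % 4 = 2) :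
    ¬ ∃ f : (Fin n → ZMod 2) ≃ₗ[ZMod 2] (Fin n → ZMod 2),
        ∀ x : Fin n → ZMod 2, Qeps n 1 (f x) = Qeps n 0 x := by
  rintro ⟨f, hf⟩
  -- The character sum is an invariant of equivalence, so `S 1 n = S 0 n`.
  have hS : S 1 n = S 0 n := by
    rw [S, ← Equiv.sum_comp f.toEquiv (fun y => chi (Qeps n 1 y))]
    refine Finset.sum_congr rfl fun x _ => ?_
    rw [show f.toEquiv x = f x from rfl, hf]
  -- But `S 0 n * S 1 n = (-4)^(n/2) < 0` since `n/2` is odd.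
  obtain ⟨m, hm⟩ : ∃ m, n = 4*m + 2 := ⟨n / 4, by omega⟩
  have hk : n = 2 * (2*m+1) := by omega
  have hp := S_prod (2*m+1)
  rw [← hk, hS] at hp
  have hneg : ((-4:ℤ))^(2*m+1) < 0 := Odd.pow_neg ⟨m, by ring⟩ (by norm_num)
  nlinarith [mul_self_nonneg (S 0 n)]
end

section
/- Let n ≥ 6 be even and let F₄ = GaloisField 2 2 be the field with four elements, with conjugation a ↦ a². Let W = (Fin n → F₄) with the Hermitian form B(x,y) = Σ_i x_i y_i², let u = (1,…,1) ∈ W, let W' = {x ∈ W : B(x,u) = 0} (a subspace of W which contains u, since n is even), and let V = W' / span{u}, a vector space of dimension n − 2 over F₄. Then: (a) B induces a well-defined nondegenerate Hermitian form β on V satisfying β([x],[y]) = B(x,y) for all x, y ∈ W'; (b) the coordinate-permutation action of the symmetric group S_n on W preserves W' and span{u} and hence induces a group homomorphism ψ : S_n → GL(V); (c) ψ is injective, every ψ(σ) preserves β, for each i ≠ j the class [e_i + e_j] ∈ V is a nonzero singular vector (β([e_i+e_j],[e_i+e_j]) = 0), and for each transposition (i j) ∈ S_n the automorphism ψ((i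 j)) equals the unitary transvection of V in [e_i + e_j], i.e., ψ((i j))([w]) = [w + B(w, e_i + e_j) • (e_i + e_j)] for all w ∈ W'. (Hence S_n embeds into U_{n−2}(2) with all transpositions mapping to unitary transvections.) -/
/-- The Hermitian form `B x y = ∑ i, x i * (y i)²` on `W = F₄ⁿ`. -/
noncomputable def B19 (n : ℕ) (x y : Fin n → F4) : F4 :=
  ∑ i : Fin n, x i * (y i) ^ 2

/-- The coordinate-sum linear functional on `F₄ⁿ`. -/
noncomputable def coordSum4 (n : ℕ) : (Fin n → F4) →ₗ[F4] F4 :=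
  ∑ i : Fin n, LinearMap.proj i

/-- The hyperplane `W' = {x : ∑ i, x i = 0}` of `F₄ⁿ`. -/
noncomputable def Wprime4 (n : ℕ) : Submodule F4 (Fin n → F4) :=
  LinearMap.ker (coordSum4 n)

/-- For even `n`, the all-ones vector `u = (1, …, 1)` lies in `W'`. -/
lemma uMem4 (n : ℕ) (hn : Even n) : (fun _ => 1 : Fin n → F4) ∈ Wprime4 n := by
  simp only [Wprime4, coordSum4, LinearMap.mem_ker, LinearMap.sum_apply, LinearMap.proj_apply,
    Finset.sum_const, Finset.card_univ, Fintype.card_fin, nsmul_eq_mul, mul_one]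
  exact (CharP.cast_eq_zero_iff F4 2 n).mpr hn.two_dvd

/-- The vector `e i + e j` lies in `W'`. -/
lemma eMem4 (n : ℕ) (i j : Fin n) :
    (Pi.single i 1 + Pi.single j 1 : Fin n → F4) ∈ Wprime4 n := by
  simp only [Wprime4, coordSum4, LinearMap.mem_ker, LinearMap.sum_apply, LinearMap.proj_apply,
    Pi.add_apply, Finset.sum_add_distrib]
  rw [Finset.sum_pi_single', Finset.sum_pi_single']
  simp only [Finset.mem_univ, if_true]
  exact CharTwo.add_self_eq_zero 1

/-- The all-ones vector as an element of `W'` (for even `n`). -/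
noncomputable def uElt4 (n : ℕ) (hn : Even n) : Wprime4 n := ⟨fun _ => 1, uMem4 n hn⟩

/-- The quotient space `V = W' / span{u}` (for even `n`). -/
abbrev V19 (n : ℕ) (hn : Even n) :=
  Wprime4 n ⧸ Submodule.span F4 {uElt4 n hn}

namespace S19

lemma sq_add (a b : F4) : (a + b) ^ 2 = a ^ 2 + b ^ 2 :=
  CharTwo.add_sq a b

lemma pow4 (a : F4) : a ^ 4 = a := by
  haveI : Fintype F4 := Fintype.ofFinite F4
  have h := FiniteField.pow_card a
  have hc : Fintype.card F4 = 4 := by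
    rw [← Nat.card_eq_fintype_card, GaloisField.card 2 2 (by norm_num)]; norm_num
  rwa [hc] at h

lemma mem_Wprime4' {n : ℕ} {x : Fin n → F4} : x ∈ Wprime4 n ↔ ∑ i, x i = 0 := by
  simp [Wprime4, coordSum4]

lemma B19_add_left (n : ℕ) (x x' y : Fin n → F4) :
    B19 n (x + x') y = B19 n x y + B19 n x' y := by
  simp [B19, add_mul, Finset.sum_add_distrib]

lemma B19_add_right (n : ℕ) (x y y' : Fin n → F4) :
    B19 n x (y + y') = B19 n x y + B19 n x y' := by
  simp only [B19, Pi.add_apply, sq_add, mul_add, Finset.sum_add_distrib]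

lemma B19_smul_left (n : ℕ) (c : F4) (x y : Fin n → F4) :
    B19 n (c • x) y = c * B19 n x y := by
  simp [B19, Finset.mul_sum, mul_assoc]

lemma B19_smul_right (n : ℕ) (c : F4) (x y : Fin n → F4) :
    B19 n x (c • y) = c ^ 2 * B19 n x y := by
  simp only [B19, Pi.smul_apply, smul_eq_mul, mul_pow, Finset.mul_sum]
  exact Finset.sum_congr rfl fun i _ => by ring

lemma B19_u_right {n : ℕ} {x : Fin n → F4} (hx : x ∈ Wprime4 n) :
    B19 n x (fun _ => 1) = 0 := by
  simp only [B19, one_pow, mul_one]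
  exact mem_Wprime4'.mp hx

lemma B19_u_left {n : ℕ} {y : Fin n → F4} (hy : y ∈ Wprime4 n) :
    B19 n (fun _ => 1) y = 0 := by
  simp only [B19, one_mul]
  rw [← CharTwo.sum_sq, mem_Wprime4'.mp hy]
  simp

lemma B19_symm (n : ℕ) (x y : Fin n → F4) : B19 n y x = (B19 n x y) ^ 2 := by
  rw [B19, B19, CharTwo.sum_sq]
  congr 1; funext i
  rw [mul_pow, ← pow_mul]
  norm_num
  rw [pow4, mul_comm]

lemma B19_single_right (n : ℕ) (x : Fin n → F4) (j : Fin n) :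
    B19 n x (Pi.single j 1) = x j := by
  rw [B19]
  rw [Finset.sum_eq_single j]
  · simp
  · intro t _ ht; simp [Pi.single_apply, ht]
  · simp

lemma B19_e_right (n : ℕ) (x : Fin n → F4) (i j : Fin n) :
    B19 n x (Pi.single i 1 + Pi.single j 1) = x i + x j := by
  rw [B19_add_right, B19_single_right, B19_single_right]

end S19

namespace S19

variable (n : ℕ) (hev : Even n)

lemma B19_congr {x x' y y' : Wprime4 n}
    (hx : x - x' ∈ Submodule.span F4 {uElt4 n hev})
    (hy : y - y' ∈ Submodule.span F4 {uElt4 n hev}) :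
    B19 n x.1 y.1 = B19 n x'.1 y'.1 := by
  obtain ⟨c, hc⟩ := Submodule.mem_span_singleton.mp hx
  obtain ⟨d, hd⟩ := Submodule.mem_span_singleton.mp hy
  have hx1 : x.1 = x'.1 + c • (fun _ => 1 : Fin n → F4) := by
    have h := congrArg Subtype.val hc
    simp only [Submodule.coe_smul, Submodule.coe_sub] at h
    exact sub_eq_iff_eq_add'.mp h.symm
  have hy1 : y.1 = y'.1 + d • (fun _ => 1 : Fin n → F4) := by
    have h := congrArg Subtype.val hd
    simp only [Submodule.coe_smul, Submodule.coe_sub] at h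
    exact sub_eq_iff_eq_add'.mp h.symm
  rw [hx1, hy1, B19_add_left, B19_add_right, B19_add_right, B19_smul_left, B19_smul_left,
    B19_smul_right, B19_smul_right]
  rw [B19_u_right x'.2, B19_u_left y'.2, B19_u_right (uMem4 n hev)]
  ring

noncomputable def beta (v w : V19 n hev) : F4 :=
  B19 n (Quotient.out v).1 (Quotient.out w).1

lemma beta_mk (x y : Wprime4 n) :
    beta n hev (Submodule.Quotient.mk x) (Submodule.Quotient.mk y) = B19 n x.1 y.1 := by
  apply B19_congr n hev
  · rw [← Submodule.Quotient.eq]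
    exact Quotient.out_eq _
  · rw [← Submodule.Quotient.eq]
    exact Quotient.out_eq _

/-- permutation action on `W`. -/
noncomputable def permW (σ : Equiv.Perm (Fin n)) : (Fin n → F4) ≃ₗ[F4] (Fin n → F4) :=
  LinearEquiv.funCongrLeft F4 F4 σ.symm

lemma permW_apply (σ : Equiv.Perm (Fin n)) (x : Fin n → F4) (i : Fin n) :
    permW n σ x i = x (σ⁻¹ i) := rfl

lemma permW_map_Wprime (σ : Equiv.Perm (Fin n)) :
    (Wprime4 n).map (permW n σ : (Fin n → F4) →ₗ[F4] (Fin n → F4)) = Wprime4 n := by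
  ext x
  simp only [Submodule.mem_map]
  constructor
  · rintro ⟨y, hy, rfl⟩
    rw [mem_Wprime4']
    rw [mem_Wprime4'] at hy
    rw [← hy]
    simp only [LinearEquiv.coe_coe, permW_apply]
    exact Equiv.sum_comp (σ⁻¹ : Equiv.Perm (Fin n)) y
  · intro hx
    refine ⟨permW n σ⁻¹ x, ?_, ?_⟩
    · rw [mem_Wprime4']
      rw [mem_Wprime4'] at hx
      rw [← hx]
      simp only [permW_apply]
      exact Equiv.sum_comp ((σ⁻¹)⁻¹ : Equiv.Perm (Fin n)) x
    · funext i
      simp [permW_apply]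

noncomputable def permW' (σ : Equiv.Perm (Fin n)) : Wprime4 n ≃ₗ[F4] Wprime4 n :=
  LinearEquiv.ofSubmodules (permW n σ) _ _ (permW_map_Wprime n σ)

lemma permW'_apply (σ : Equiv.Perm (Fin n)) (x : Wprime4 n) (i : Fin n) :
    (permW' n σ x).1 i = x.1 (σ⁻¹ i) := by
  rfl

lemma permW'_span (σ : Equiv.Perm (Fin n)) :
    (Submodule.span F4 {uElt4 n hev}).map (permW' n σ : Wprime4 n →ₗ[F4] Wprime4 n)
      = Submodule.span F4 {uElt4 n hev} := by
  rw [Submodule.map_span, Set.image_singleton]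
  have h : permW' n σ (uElt4 n hev) = uElt4 n hev := by
    apply Subtype.ext
    funext i
    rw [permW'_apply]
    rfl
  simp only [LinearEquiv.coe_coe]
  rw [h]

noncomputable def psi (σ : Equiv.Perm (Fin n)) : V19 n hev ≃ₗ[F4] V19 n hev :=
  Submodule.Quotient.equiv _ _ (permW' n σ) (permW'_span n hev σ)

lemma psi_mk (σ : Equiv.Perm (Fin n)) (x : Wprime4 n) :
    psi n hev σ (Submodule.Quotient.mk x) = Submodule.Quotient.mk (permW' n σ x) := rfl

lemma psi_mk' (σ : Equiv.Perm (Fin n)) (x x' : Wprime4 n)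
    (h : ∀ i, x'.1 i = x.1 (σ⁻¹ i)) :
    psi n hev σ (Submodule.Quotient.mk x) = Submodule.Quotient.mk x' := by
  rw [psi_mk]
  congr 1
  apply Subtype.ext
  funext i
  rw [permW'_apply, h i]

noncomputable def psiHom : Equiv.Perm (Fin n) →* (V19 n hev ≃ₗ[F4] V19 n hev) where
  toFun := psi n hev
  map_one' := by
    apply LinearEquiv.toLinearMap_injective
    apply Submodule.linearMap_qext
    ext x
    exact psi_mk' n hev 1 x x (fun i => rfl)
  map_mul' σ τ := by
    apply LinearEquiv.toLinearMap_injective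
    apply Submodule.linearMap_qext
    ext x
    show psi n hev (σ * τ) (Submodule.Quotient.mk x)
      = (psi n hev σ * psi n hev τ) (Submodule.Quotient.mk x)
    have h2 : (psi n hev σ * psi n hev τ) (Submodule.Quotient.mk x)
        = psi n hev σ (psi n hev τ (Submodule.Quotient.mk x)) := rfl
    have h3 : permW' n (σ * τ) x = permW' n σ (permW' n τ x) := by
      apply Subtype.ext
      funext i
      rw [permW'_apply, permW'_apply, permW'_apply]
      simp [mul_inv_rev]
    rw [h2, psi_mk, psi_mk, psi_mk, h3]

end S19


open S19

/-- For even `n ≥ 6`, with `W = F₄ⁿ`, `B x y = ∑ i, x i * (y i)²`,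
`u = (1,…,1)`, `W' = {x : B x u = 0} = {x : ∑ i, x i = 0}` and `V = W' / span{u}` of
dimension `n - 2`: the form `B` induces a well-defined nondegenerate Hermitian form `β` on
`V`; the coordinate-permutation action of `S_n` induces an injective homomorphism
`ψ : S_n → GL(V)` preserving `β`; each class `[e i + e j]` (for `i ≠ j`) is a nonzero
singular vector; and each transposition `(i j)` maps to the unitary transvection of `V` in
`[e i + e j]`. Hence `S_n` embeds into `U_{n-2}(2)` with all transpositions going to
unitary transvections. -/
theorem symmetric_group_into_unitary_quotient (n : ℕ) (hn : 6 ≤ n) (hev : Even n) :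
    -- `W'` is exactly `{x : B x u = 0}` (and it contains `u`)
    (∀ x : Fin n → F4, x ∈ Wprime4 n ↔ B19 n x (fun _ => 1) = 0) ∧
    -- `V` has dimension `n - 2` over `F₄`
    Module.finrank F4 (V19 n hev) = n - 2 ∧
    -- (a) `B` induces a well-defined nondegenerate Hermitian form `β` on `V`
    (∃ β : V19 n hev → V19 n hev → F4,
      (∀ x y : Wprime4 n,
        β (Submodule.Quotient.mk x) (Submodule.Quotient.mk y) = B19 n x.1 y.1) ∧
      (∀ x x' y : V19 n hev, β (x + x') y = β x y + β x' y) ∧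
      (∀ x y y' : V19 n hev, β x (y + y') = β x y + β x y') ∧
      (∀ (c : F4) (x y : V19 n hev), β (c • x) y = c * β x y) ∧
      (∀ (c : F4) (x y : V19 n hev), β x (c • y) = c ^ 2 * β x y) ∧
      (∀ x y : V19 n hev, β y x = (β x y) ^ 2) ∧
      (∀ v : V19 n hev, (∀ w : V19 n hev, β v w = 0) → v = 0) ∧
      -- (b) the coordinate-permutation action of `S_n` on `W` induces `ψ : S_n → GL(V)`
      (∃ ψ : Equiv.Perm (Fin n) →* (V19 n hev ≃ₗ[F4] V19 n hev),
        (∀ (σ : Equiv.Perm (Fin n)) (x x' : Wprime4 n),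
          (∀ i, x'.1 i = x.1 (σ⁻¹ i)) →
            (ψ σ) (Submodule.Quotient.mk x) = Submodule.Quotient.mk x') ∧
        -- (c) `ψ` is injective and preserves `β`
        Function.Injective ψ ∧
        (∀ (σ : Equiv.Perm (Fin n)) (v w : V19 n hev), β ((ψ σ) v) ((ψ σ) w) = β v w) ∧
        -- each `[e i + e j]` is a nonzero singular vector, and each transposition `(i j)`
        -- acts as the unitary transvection in `[e i + e j]`
        (∀ i j : Fin n, i ≠ j →
          (Submodule.Quotient.mk (⟨Pi.single i 1 + Pi.single j 1, eMem4 n i j⟩ : Wprime4 n)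
              ≠ (0 : V19 n hev)) ∧
          β (Submodule.Quotient.mk (⟨Pi.single i 1 + Pi.single j 1, eMem4 n i j⟩ : Wprime4 n))
            (Submodule.Quotient.mk (⟨Pi.single i 1 + Pi.single j 1, eMem4 n i j⟩ : Wprime4 n))
            = 0 ∧
          (∀ x x' : Wprime4 n,
            x'.1 = x.1 + B19 n x.1 (Pi.single i 1 + Pi.single j 1) •
                (Pi.single i 1 + Pi.single j 1) →
              (ψ (Equiv.swap i j)) (Submodule.Quotient.mk x) = Submodule.Quotient.mk x')))) := by
  have h0 : (0:ℕ) < n := by omega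
  have hchar2 : ∀ a : F4, a + a = 0 := fun a => CharTwo.add_self_eq_zero a
  have habsorb : ∀ a b : F4, a + (a + b) = b := fun a b => by
    rw [← add_assoc, hchar2, zero_add]
  refine ⟨?_, ?_, ?_⟩
  · -- W' = {x : B x u = 0}
    intro x
    rw [S19.mem_Wprime4']
    simp [B19]
  · -- finrank
    have hu0 : uElt4 n hev ≠ 0 := by
      intro h
      have h2 := congrArg (fun z : Wprime4 n => z.1 ⟨0, h0⟩) h
      simp only [uElt4] at h2
      exact one_ne_zero h2
    have hsurj : Function.Surjective (coordSum4 n) := by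
      intro c
      refine ⟨Pi.single ⟨0, h0⟩ c, ?_⟩
      simp [coordSum4, Finset.sum_pi_single']
    have hrk := LinearMap.finrank_range_add_finrank_ker (coordSum4 n)
    rw [LinearMap.range_eq_top.2 hsurj, finrank_top, Module.finrank_self,
      Module.finrank_fin_fun] at hrk
    have hq := Submodule.finrank_quotient_add_finrank (Submodule.span F4 {uElt4 n hev})
    rw [finrank_span_singleton hu0] at hq
    have : Module.finrank F4 (Wprime4 n) = n - 1 := by
      rw [show Wprime4 n = LinearMap.ker (coordSum4 n) from rfl]
      omega
    rw [this] at hq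
    have hq' : Module.finrank F4 (V19 n hev) + 1 = n - 1 := hq
    omega
  refine ⟨beta n hev, beta_mk n hev, ?_, ?_, ?_, ?_, ?_, ?_, ?_⟩
  · intro x x' y
    obtain ⟨a, rfl⟩ := Submodule.Quotient.mk_surjective _ x
    obtain ⟨a', rfl⟩ := Submodule.Quotient.mk_surjective _ x'
    obtain ⟨b, rfl⟩ := Submodule.Quotient.mk_surjective _ y
    rw [← Submodule.Quotient.mk_add, beta_mk, beta_mk, beta_mk, Submodule.coe_add, B19_add_left]
  · intro x y y'
    obtain ⟨a, rfl⟩ := Submodule.Quotient.mk_surjective _ x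
    obtain ⟨b, rfl⟩ := Submodule.Quotient.mk_surjective _ y
    obtain ⟨b', rfl⟩ := Submodule.Quotient.mk_surjective _ y'
    rw [← Submodule.Quotient.mk_add, beta_mk, beta_mk, beta_mk, Submodule.coe_add, B19_add_right]
  · intro c x y
    obtain ⟨a, rfl⟩ := Submodule.Quotient.mk_surjective _ x
    obtain ⟨b, rfl⟩ := Submodule.Quotient.mk_surjective _ y
    rw [← Submodule.Quotient.mk_smul, beta_mk, beta_mk, Submodule.coe_smul, B19_smul_left]
  · intro c x y
    obtain ⟨a, rfl⟩ := Submodule.Quotient.mk_surjective _ x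
    obtain ⟨b, rfl⟩ := Submodule.Quotient.mk_surjective _ y
    rw [← Submodule.Quotient.mk_smul, beta_mk, beta_mk, Submodule.coe_smul, B19_smul_right]
  · intro x y
    obtain ⟨a, rfl⟩ := Submodule.Quotient.mk_surjective _ x
    obtain ⟨b, rfl⟩ := Submodule.Quotient.mk_surjective _ y
    rw [beta_mk, beta_mk, B19_symm]
  · -- nondegenerate
    intro v hv
    obtain ⟨x, rfl⟩ := Submodule.Quotient.mk_surjective _ v
    rw [Submodule.Quotient.mk_eq_zero, Submodule.mem_span_singleton]
    have key : ∀ i j : Fin n, x.1 i = x.1 j := by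
      intro i j
      rcases eq_or_ne i j with rfl | hij
      · rfl
      · have h := hv (Submodule.Quotient.mk ⟨_, eMem4 n i j⟩)
        rw [beta_mk, B19_e_right] at h
        calc x.1 i = x.1 i + (x.1 j + x.1 j) := by rw [hchar2, add_zero]
        _ = (x.1 i + x.1 j) + x.1 j := by ring
        _ = x.1 j := by rw [h, zero_add]
    refine ⟨x.1 ⟨0, h0⟩, ?_⟩
    apply Subtype.ext
    funext i
    show x.1 ⟨0, h0⟩ * 1 = x.1 i
    rw [mul_one]
    exact key _ _
  refine ⟨psiHom n hev, fun σ x x' h => psi_mk' n hev σ x x' h, ?_, ?_, ?_⟩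
  · -- injective
    rw [injective_iff_map_eq_one]
    intro σ hσ
    apply Equiv.ext
    intro a
    by_contra ha
    rw [Equiv.Perm.one_apply] at ha
    obtain ⟨c, hca, hcne⟩ : ∃ c : Fin n, c ≠ a ∧ σ c ≠ a := by
      by_cases h : σ (σ a) = a
      · have hne : ((Finset.univ : Finset (Fin n)) \ {a, σ a}).Nonempty := by
          rw [← Finset.card_pos, Finset.card_sdiff_of_subset (Finset.subset_univ _)]
          have h2 : ({a, σ a} : Finset (Fin n)).card ≤ 2 :=
            le_trans (Finset.card_insert_le _ _) (by simp)
          simp only [Finset.card_univ, Fintype.card_fin]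
          omega
        obtain ⟨c, hc⟩ := hne
        simp only [Finset.mem_sdiff, Finset.mem_insert, Finset.mem_singleton, not_or] at hc
        exact ⟨c, hc.2.1, fun hcc => hc.2.2 (σ.injective (hcc.trans h.symm))⟩
      · exact ⟨σ a, ha, h⟩
    obtain ⟨d, hd⟩ : ((Finset.univ : Finset (Fin n)) \ {a, c, σ a, σ c}).Nonempty := by
      rw [← Finset.card_pos, Finset.card_sdiff_of_subset (Finset.subset_univ _)]
      have h2 : ({a, c, σ a, σ c} : Finset (Fin n)).card ≤ 4 := by
        refine le_trans (Finset.card_insert_le _ _) (Nat.succ_le_succ ?_)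
        refine le_trans (Finset.card_insert_le _ _) (Nat.succ_le_succ ?_)
        exact le_trans (Finset.card_insert_le _ _) (Nat.succ_le_succ (by simp))
      simp only [Finset.card_univ, Fintype.card_fin]
      omega
    simp only [Finset.mem_sdiff, Finset.mem_insert, Finset.mem_singleton, not_or] at hd
    obtain ⟨-, hda, hdc, hdsa, hdsc⟩ := hd
    set x : Wprime4 n := ⟨Pi.single a 1 + Pi.single c 1, eMem4 n a c⟩ with hxdef
    have h1 : psi n hev σ (Submodule.Quotient.mk x) = Submodule.Quotient.mk x := by
      have := congrArg (fun f : V19 n hev ≃ₗ[F4] V19 n hev =>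
        f (Submodule.Quotient.mk x)) hσ
      exact this
    rw [psi_mk] at h1
    have h2 := (Submodule.Quotient.eq _).mp h1
    obtain ⟨k, hk⟩ := Submodule.mem_span_singleton.mp h2
    have e1 : σ⁻¹ a ≠ a := fun h => ha (((Equiv.Perm.inv_eq_iff_eq).mp h).symm)
    have e2 : σ⁻¹ a ≠ c := fun h => hcne (((Equiv.Perm.inv_eq_iff_eq).mp h).symm)
    have e3 : σ⁻¹ d ≠ a := fun h => hdsa ((Equiv.Perm.inv_eq_iff_eq).mp h)
    have e4 : σ⁻¹ d ≠ c := fun h => hdsc ((Equiv.Perm.inv_eq_iff_eq).mp h)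
    have hka := congrArg (fun z : Wprime4 n => z.1 a) hk
    have hkd := congrArg (fun z : Wprime4 n => z.1 d) hk
    simp only [Submodule.coe_smul, Submodule.coe_sub, Pi.smul_apply, Pi.sub_apply,
      smul_eq_mul, permW'_apply, hxdef, Pi.add_apply, Pi.single_apply,
      if_neg e1, if_neg e2, if_neg e3, if_neg e4, if_neg hda, if_neg hdc,
      if_pos rfl, if_neg (Ne.symm hca)] at hka hkd
    -- hka : k * 1 = (0+0) - (1+0) ; hkd : k * 1 = (0+0) - (0+0)
    rw [show (uElt4 n hev).1 a = 1 from rfl] at hka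
    rw [show (uElt4 n hev).1 d = 1 from rfl] at hkd
    rw [mul_one] at hka hkd
    rw [hkd] at hka
    simp at hka
  · -- beta preserved
    intro σ v w
    obtain ⟨x, rfl⟩ := Submodule.Quotient.mk_surjective _ v
    obtain ⟨y, rfl⟩ := Submodule.Quotient.mk_surjective _ w
    show beta n hev (psi n hev σ (Submodule.Quotient.mk x))
      (psi n hev σ (Submodule.Quotient.mk y)) = _
    rw [psi_mk, psi_mk, beta_mk, beta_mk]
    rw [B19, B19]
    simp only [permW'_apply]
    exact Equiv.sum_comp (σ⁻¹ : Equiv.Perm (Fin n)) (fun t => x.1 t * y.1 t ^ 2)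
  · intro i j hij
    refine ⟨?_, ?_, ?_⟩
    · -- nonzero
      intro h
      rw [Submodule.Quotient.mk_eq_zero, Submodule.mem_span_singleton] at h
      obtain ⟨k, hk⟩ := h
      obtain ⟨d, hd⟩ : ((Finset.univ : Finset (Fin n)) \ {i, j}).Nonempty := by
        rw [← Finset.card_pos, Finset.card_sdiff_of_subset (Finset.subset_univ _)]
        have h2 : ({i, j} : Finset (Fin n)).card ≤ 2 :=
          le_trans (Finset.card_insert_le _ _) (by simp)
        simp only [Finset.card_univ, Fintype.card_fin]
        omega
      simp only [Finset.mem_sdiff, Finset.mem_insert, Finset.mem_singleton, not_or] at hd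
      have hki := congrArg (fun z : Wprime4 n => z.1 i) hk
      have hkd := congrArg (fun z : Wprime4 n => z.1 d) hk
      simp only [Submodule.coe_smul, Pi.smul_apply, smul_eq_mul, Pi.add_apply,
        Pi.single_apply, if_pos rfl, if_neg (Ne.symm hij), if_neg hd.2.1,
        if_neg hd.2.2] at hki hkd
      rw [show (uElt4 n hev).1 i = 1 from rfl] at hki
      rw [show (uElt4 n hev).1 d = 1 from rfl] at hkd
      rw [mul_one] at hki hkd
      rw [hkd] at hki
      rw [if_neg hij] at hki
      simp at hki
    · -- singular
      rw [beta_mk, B19_e_right]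
      simp only [Pi.add_apply, Pi.single_apply, if_pos rfl, if_neg hij, if_neg (Ne.symm hij)]
      rw [add_zero, zero_add]
      exact hchar2 1
    · -- transvection
      intro x x' hx'
      apply psi_mk' n hev (Equiv.swap i j) x x'
      intro t
      rw [hx', Equiv.swap_inv]
      rw [B19_e_right]
      simp only [Pi.add_apply, Pi.smul_apply, smul_eq_mul, Pi.single_apply]
      rcases eq_or_ne t i with rfl | hti
      · rw [if_pos rfl, if_neg hij, Equiv.swap_apply_left, add_zero, mul_one]
        exact habsorb _ _
      · rcases eq_or_ne t j with rfl | htj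
        · rw [if_neg hti, if_pos rfl, Equiv.swap_apply_right, zero_add, mul_one]
          calc x.1 t + (x.1 i + x.1 t) = x.1 i + (x.1 t + x.1 t) := by ring
          _ = x.1 i := by rw [hchar2, add_zero]
        · rw [if_neg hti, if_neg htj, Equiv.swap_apply_of_ne_of_ne hti htj, add_zero,
            mul_zero, add_zero]
end
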